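/- arXiv:1910.02454 — 6 statements merged into one kernel-verified Lean document; each statement's English description precedes it below -/
import Mathlib

section
/- Let G be a digraph and let P be an optimal colouring of G with the minimum number of singleton colour classes (an extreme colouring). If {u} is a singleton class of P and v is a vertex in a colour class of P of size at least 3, then both arcs (u,v) and (v,u) are present in G. -/
open Finset

/-- A finite vertex subset is acyclic in the digraph with arc relation `E`
if it induces no directed cycle. -/
def DiAcyclic {V : Type*} (E : V → V → Prop) (S : Finset V) : Prop :=
  ∀ v ∈ S, ¬ Relation.TransGen (fun a b => a ∈ S ∧ b ∈ S ∧ E a b) v v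

/-- A colouring of a digraph: a partition of the vertex set into acyclic sets. -/
def IsDiColoring {V : Type*} [Fintype V] [DecidableEq V] (E : V → V → Prop)
    (P : Finpartition (Finset.univ : Finset V)) : Prop :=
  ∀ S ∈ P.parts, DiAcyclic E S

/-- The dichromatic number. -/
noncomputable def dichi (V : Type*) [Fintype V] [DecidableEq V] (E : V → V → Prop) : ℕ :=
  sInf {n | ∃ P : Finpartition (Finset.univ : Finset V), IsDiColoring E P ∧ P.parts.card = n}

/-- Induced subdigraph relation on a vertex subset. -/
def inducedRel {V : Type*} (E : V → V → Prop) (U : Finset V) : ↥U → ↥U → Prop :=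
  fun a b => E a.1 b.1

/-- `k`-vertex-critical digraph. -/
def VertexCritical {V : Type*} [Fintype V] [DecidableEq V] (E : V → V → Prop) (k : ℕ) : Prop :=
  dichi V E = k ∧ ∀ U : Finset V, U ⊂ Finset.univ → dichi ↥U (inducedRel E U) < k

/-- Complement digraph. -/
def diCompl {V : Type*} (E : V → V → Prop) : V → V → Prop :=
  fun a b => a ≠ b ∧ ¬ E a b

/-- Underlying undirected graph of a digraph. -/
def underlying {V : Type*} (E : V → V → Prop) : SimpleGraph V where
  Adj a b := a ≠ b ∧ (E a b ∨ E b a)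
  symm := ⟨fun a b ⟨h1, h2⟩ => ⟨h1.symm, h2.symm⟩⟩
  loopless := ⟨fun a ⟨h, _⟩ => h rfl⟩

/-- Number of singleton colour classes. -/
def numSingle {V : Type*} [Fintype V] [DecidableEq V]
    (P : Finpartition (Finset.univ : Finset V)) : ℕ :=
  (P.parts.filter fun S => S.card = 1).card

/-- Extreme colouring: optimal with fewest singleton classes. -/
def Extreme {V : Type*} [Fintype V] [DecidableEq V] (E : V → V → Prop)
    (P : Finpartition (Finset.univ : Finset V)) : Prop :=
  IsDiColoring E P ∧ P.parts.card = dichi V E ∧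
    ∀ Q : Finpartition (Finset.univ : Finset V),
      IsDiColoring E Q → Q.parts.card = dichi V E → numSingle P ≤ numSingle Q

/-- Maximum matching of a simple graph. -/
def IsMaxMatching {V : Type*} (H : SimpleGraph V) (M : H.Subgraph) : Prop :=
  M.IsMatching ∧ ∀ M' : H.Subgraph, M'.IsMatching → M'.edgeSet.ncard ≤ M.edgeSet.ncard

/-- Matching number. -/
noncomputable def matchNum {V : Type*} (H : SimpleGraph V) : ℕ :=
  sSup {n | ∃ M : H.Subgraph, M.IsMatching ∧ M.edgeSet.ncard = n}

/-- The set `D(H)` of vertices missed by at least one maximum matching. -/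
def GED {V : Type*} (H : SimpleGraph V) : Set V :=
  {v | ∃ M : H.Subgraph, IsMaxMatching H M ∧ v ∉ M.verts}

/-- The set `A(H)`. -/
def GEA {V : Type*} (H : SimpleGraph V) : Set V :=
  {v | v ∉ GED H ∧ ∃ u ∈ GED H, H.Adj v u}

/-- The set `C(H)`. -/
def GEC {V : Type*} (H : SimpleGraph V) : Set V :=
  {v | v ∉ GED H ∧ v ∉ GEA H}


lemma diAcyclic_subset {V : Type*} [DecidableEq V] (E : V → V → Prop) {S T : Finset V}
    (h : DiAcyclic E S) (hsub : T ⊆ S) : DiAcyclic E T := by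
  intro w hw hc
  exact h w (hsub hw) (Relation.TransGen.mono (p := fun a b => a ∈ S ∧ b ∈ S ∧ E a b) (fun a b ⟨h1, h2, h3⟩ => ⟨hsub h1, hsub h2, h3⟩) w w hc)

lemma pair_diAcyclic {V : Type*} [DecidableEq V] (E : V → V → Prop)
    (hirr : Irreflexive E) (u v : V) (hne : ¬ (E u v ∧ E v u)) :
    DiAcyclic E {u, v} := by
  intro w hw hc
  set R : V → V → Prop := fun a b => a ∈ ({u, v} : Finset V) ∧ b ∈ ({u, v} : Finset V) ∧ E a b
    with hRdef
  have key : ∀ a b, Relation.TransGen R a b → R a b ∨ (E u v ∧ E v u) := by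
    intro a b h
    induction h with
    | single h => exact Or.inl h
    | tail h1 h2 ih =>
      rcases ih with h3 | h3
      · obtain ⟨ha, hm, ham⟩ := h3
        obtain ⟨hm', hb, hmb⟩ := h2
        right
        simp only [Finset.mem_insert, Finset.mem_singleton] at ha hm hb
        rcases ha with rfl | rfl <;> rcases hm with rfl | rfl <;> rcases hb with rfl | rfl <;>
          first
            | exact absurd ham (hirr _)
            | exact absurd hmb (hirr _)
            | exact ⟨ham, hmb⟩
            | exact ⟨hmb, ham⟩
      · exact Or.inr h3
  rcases key w w hc with ⟨_, _, h⟩ | h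
  · exact hirr w h
  · exact hne h

theorem stmt5 {V : Type*} [Fintype V] [DecidableEq V] (E : V → V → Prop)
    (hirr : Irreflexive E) (P : Finpartition (Finset.univ : Finset V))
    (hP : Extreme E P) (u v : V) (S : Finset V)
    (hu : {u} ∈ P.parts) (hS : S ∈ P.parts) (hv : v ∈ S) (h3 : 3 ≤ S.card) :
    E u v ∧ E v u := by
  classical
  obtain ⟨hcol, hcard, hmin⟩ := hP
  by_contra hne
  have hSu : ({u} : Finset V) ≠ S := by
    intro h; rw [← h] at h3; simp at h3
  have huS : u ∉ S := fun h =>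
    hSu (P.eq_of_mem_parts hu hS (Finset.mem_singleton_self u) h)
  have hvu : v ≠ u := fun h => huS (h ▸ hv)
  set T : Finset V := S.erase v with hTdef
  set U2 : Finset V := {u, v} with hU2def
  have hTcard : T.card = S.card - 1 := Finset.card_erase_of_mem hv
  have hT2 : 2 ≤ T.card := by omega
  have hTne : T.Nonempty := Finset.card_pos.mp (by omega)
  have hTsub : T ⊆ S := Finset.erase_subset _ _
  have hU2card : U2.card = 2 := by
    rw [hU2def]
    rw [Finset.card_insert_of_notMem (by simp [Ne.symm hvu]), Finset.card_singleton]
  set R : Finset (Finset V) := (P.parts.erase {u}).erase S with hRdef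
  have hRsub : R ⊆ P.parts := Finset.Subset.trans (Finset.erase_subset _ _) (Finset.erase_subset _ _)
  have hSR : S ∉ R := Finset.notMem_erase _ _
  have huR : ({u} : Finset V) ∉ R := fun h =>
    Finset.notMem_erase _ _ (Finset.mem_of_mem_erase h)
  have hU2P : U2 ∉ P.parts := by
    intro h
    have heq := P.eq_of_mem_parts h hu (by simp [hU2def]) (Finset.mem_singleton_self u)
    have : v ∈ ({u} : Finset V) := heq ▸ (by simp [hU2def])
    simp only [Finset.mem_singleton] at this
    exact hvu this
  have hTP : T ∉ P.parts := by
    intro h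
    obtain ⟨w, hw⟩ := hTne
    have heq := P.eq_of_mem_parts h hS hw (hTsub hw)
    rw [heq] at hTcard
    omega
  have hTU2 : T ≠ U2 := by
    intro h
    have : u ∈ T := h ▸ (by simp [hU2def])
    exact huS (hTsub this)
  have hPparts : insert ({u} : Finset V) (insert S R) = P.parts := by
    rw [hRdef, Finset.insert_erase (Finset.mem_erase.mpr ⟨hSu.symm, hS⟩), Finset.insert_erase hu]
  set parts' : Finset (Finset V) := insert U2 (insert T R) with hparts'
  have hU2nm : U2 ∉ insert T R := by
    simp only [Finset.mem_insert]
    rintro (h | h)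
    · exact hTU2 h.symm
    · exact hU2P (hRsub h)
  have hTnm : T ∉ R := fun h => hTP (hRsub h)
  -- disjointness facts
  have hdisjP := P.disjoint
  have hmemR : ∀ B ∈ R, B ∈ P.parts ∧ B ≠ {u} ∧ B ≠ S := by
    intro B hB
    have h1 := Finset.mem_erase.mp hB
    have h2 := Finset.mem_erase.mp h1.2
    exact ⟨h2.2, h2.1, h1.1⟩
  have hdisjU2R : ∀ B ∈ R, Disjoint U2 B := by
    intro B hB
    obtain ⟨hBP, hB1, hB2⟩ := hmemR B hB
    rw [Finset.disjoint_left]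
    intro x hx hxB
    simp only [hU2def, Finset.mem_insert, Finset.mem_singleton] at hx
    rcases hx with rfl | rfl
    · exact hB1 (P.eq_of_mem_parts hBP hu hxB (Finset.mem_singleton_self x))
    · exact hB2 (P.eq_of_mem_parts hBP hS hxB hv)
  have hdisjTR : ∀ B ∈ R, Disjoint T B := by
    intro B hB
    obtain ⟨hBP, _, hB2⟩ := hmemR B hB
    exact Finset.disjoint_of_subset_left hTsub (hdisjP hS hBP (fun h => hB2 h.symm)).symm.symm
  have hdisjU2T : Disjoint U2 T := by
    rw [Finset.disjoint_left]
    intro x hx hxT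
    simp only [hU2def, Finset.mem_insert, Finset.mem_singleton] at hx
    rcases hx with rfl | rfl
    · exact huS (hTsub hxT)
    · exact (Finset.notMem_erase _ _) hxT
  have hsupindep : parts'.SupIndep id := by
    rw [Finset.supIndep_iff_pairwiseDisjoint]
    intro a ha b hb hab
    simp only [hparts', Finset.coe_insert, Set.mem_insert_iff, Finset.mem_coe] at ha hb
    rcases ha with rfl | rfl | ha <;> rcases hb with rfl | rfl | hb
    · exact absurd rfl hab
    · exact hdisjU2T
    · exact hdisjU2R b hb
    · exact hdisjU2T.symm
    · exact absurd rfl hab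
    · exact hdisjTR b hb
    · exact (hdisjU2R a ha).symm
    · exact (hdisjTR a ha).symm
    · exact hdisjP (hRsub ha) (hRsub hb) hab
  have hkey : U2 ∪ T = {u} ∪ S := by
    ext x
    simp only [hU2def, hTdef, Finset.mem_union, Finset.mem_insert, Finset.mem_singleton,
      Finset.mem_erase]
    constructor
    · rintro ((rfl | rfl) | ⟨_, h⟩) <;> tauto
    · rintro (rfl | h)
      · tauto
      · by_cases hx : x = v <;> tauto
  have hsup : parts'.sup id = (Finset.univ : Finset V) := by
    have h1 : parts'.sup id = U2 ∪ (T ∪ R.sup id) := by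
      simp [hparts', Finset.sup_insert, Finset.sup_union]
    have h2 : ({u} : Finset V) ∪ (S ∪ R.sup id) = Finset.univ := by
      have := P.sup_parts
      rw [← hPparts] at this
      simpa [Finset.sup_insert] using this
    rw [h1, ← Finset.union_assoc, hkey, Finset.union_assoc, h2]
  have hnotbot : ⊥ ∉ parts' := by
    simp only [hparts', Finset.mem_insert, Finset.bot_eq_empty]
    push_neg
    refine ⟨?_, ?_, ?_⟩
    · intro h; rw [← h] at hU2card; simp at hU2card
    · intro h; rw [← h] at hT2; simp at hT2
    · intro h
      exact P.bot_notMem (hRsub (Finset.bot_eq_empty (α := V) ▸ h))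
  set Q : Finpartition (Finset.univ : Finset V) :=
    ⟨parts', hsupindep, hsup, hnotbot⟩ with hQdef
  have hPcard2 : 2 ≤ P.parts.card := by
    have : ({{u}, S} : Finset (Finset V)) ⊆ P.parts := by
      intro x hx
      simp only [Finset.mem_insert, Finset.mem_singleton] at hx
      rcases hx with rfl | rfl <;> assumption
    calc 2 = ({{u}, S} : Finset (Finset V)).card := by
            rw [Finset.card_insert_of_notMem (by simpa using hSu), Finset.card_singleton]
      _ ≤ P.parts.card := Finset.card_le_card this
  have hRcard : R.card = P.parts.card - 2 := by
    rw [hRdef, Finset.card_erase_of_mem (Finset.mem_erase.mpr ⟨hSu.symm, hS⟩),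
      Finset.card_erase_of_mem hu]
    omega
  have hQcard : Q.parts.card = P.parts.card := by
    show parts'.card = P.parts.card
    rw [hparts', Finset.card_insert_of_notMem hU2nm, Finset.card_insert_of_notMem hTnm, hRcard]
    omega
  have hQcol : IsDiColoring E Q := by
    intro A hA
    simp only [hQdef, hparts', Finset.mem_insert] at hA
    rcases hA with rfl | rfl | hA
    · exact pair_diAcyclic E hirr u v hne
    · exact diAcyclic_subset E (hcol S hS) hTsub
    · exact hcol A (hRsub hA)
  have hQopt : Q.parts.card = dichi V E := by rw [hQcard, hcard]
  have hle := hmin Q hQcol hQopt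
  -- compute numSingle Q
  have huF : ({u} : Finset V) ∈ P.parts.filter (fun S => S.card = 1) :=
    Finset.mem_filter.mpr ⟨hu, Finset.card_singleton u⟩
  have hnum : numSingle Q = numSingle P - 1 := by
    show (parts'.filter (fun S => S.card = 1)).card = numSingle P - 1
    rw [hparts', Finset.filter_insert, Finset.filter_insert]
    rw [if_neg (by omega : ¬ U2.card = 1), if_neg (by omega : ¬ T.card = 1)]
    have hRfilter : R.filter (fun S => S.card = 1) =
        ((P.parts.filter (fun S => S.card = 1)).erase {u}).erase S := by
      rw [hRdef, Finset.filter_erase, Finset.filter_erase]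
    rw [hRfilter]
    rw [Finset.erase_eq_of_notMem (by
      intro h
      have := (Finset.mem_filter.mp (Finset.mem_of_mem_erase h)).2
      omega)]
    rw [Finset.card_erase_of_mem huF]
    rfl
  have hpos : 1 ≤ numSingle P := Finset.card_pos.mpr ⟨{u}, huF⟩
  omega
end

section
/- Let G be a digraph and let P be an extreme colouring of G (optimal with the minimum number of singleton classes). Let U be the union of all colour classes of P of size 1 or 2, and let H be the undirected graph on U with edges uv whenever not both (u,v) and (v,u) are arcs of G. Then the restriction of P to U corresponds to a maximum matching of H, and hence χ(G[U]) = |U| − ν(H). -/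
open Finset

/-- The auxiliary undirected graph on `U`: `u ~ v` iff `{u,v}` is acyclic in the digraph,
i.e. not both arcs `(u,v)`, `(v,u)` are present. -/
def auxGraph {V : Type*} (E : V → V → Prop) (U : Finset V) : SimpleGraph ↥U where
  Adj a b := a ≠ b ∧ ¬ (E a.1 b.1 ∧ E b.1 a.1)
  symm := ⟨fun a b ⟨h1, h2⟩ => ⟨h1.symm, fun hc => h2 ⟨hc.2, hc.1⟩⟩⟩
  loopless := ⟨fun a ⟨h, _⟩ => h rfl⟩

section Helpers
set_option linter.unusedSectionVars false

variable {α : Type*} [DecidableEq α]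

lemma diacyclic_singleton {R : α → α → Prop} (hirr : Irreflexive R) (a : α) :
    DiAcyclic R {a} := by
  intro v hv hcyc
  have key : ∀ x y : α,
      Relation.TransGen (fun p q => p ∈ ({a} : Finset α) ∧ q ∈ ({a} : Finset α) ∧ R p q) x y →
      False := by
    intro x y hxy
    induction hxy with
    | single hstep =>
      obtain ⟨hx, hy, hR⟩ := hstep
      simp only [Finset.mem_singleton] at hx hy
      subst hx; subst hy
      exact hirr _ hR
    | tail _ _ ih => exact ih
  exact key v v hcyc

lemma diacyclic_pair {R : α → α → Prop} (hirr : Irreflexive R) {a b : α}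
    (hne : a ≠ b) (h : ¬ (R a b ∧ R b a)) : DiAcyclic R {a, b} := by
  intro v hv hcyc
  have key : ∀ x y : α,
      Relation.TransGen (fun p q => p ∈ ({a, b} : Finset α) ∧ q ∈ ({a, b} : Finset α) ∧ R p q) x y →
      (x = a ∧ y = b ∧ R a b) ∨ (x = b ∧ y = a ∧ R b a) := by
    intro x y hxy
    induction hxy with
    | single hstep =>
      obtain ⟨hx, hy, hR⟩ := hstep
      simp only [Finset.mem_insert, Finset.mem_singleton] at hx hy
      rcases hx with rfl | rfl <;> rcases hy with rfl | rfl
      · exact absurd hR (hirr _)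
      · exact Or.inl ⟨rfl, rfl, hR⟩
      · exact Or.inr ⟨rfl, rfl, hR⟩
      · exact absurd hR (hirr _)
    | tail _ hstep ih =>
      obtain ⟨hc, hy, hR⟩ := hstep
      simp only [Finset.mem_insert, Finset.mem_singleton] at hy
      rcases ih with ⟨rfl, rfl, hab⟩ | ⟨rfl, rfl, hba⟩
      · rcases hy with rfl | rfl
        · exact absurd ⟨hab, hR⟩ h
        · exact absurd hR (hirr _)
      · rcases hy with rfl | rfl
        · exact absurd hR (hirr _)
        · exact absurd ⟨hR, hba⟩ h
  rcases key v v hcyc with ⟨rfl, h2, _⟩ | ⟨rfl, h2, _⟩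
  · exact hne h2
  · exact hne h2.symm

lemma not_both_of_diacyclic {R : α → α → Prop} {S : Finset α} (hS : DiAcyclic R S)
    {a b : α} (ha : a ∈ S) (hb : b ∈ S) : ¬ (R a b ∧ R b a) := by
  rintro ⟨h1, h2⟩
  exact hS a ha (Relation.TransGen.tail (Relation.TransGen.single ⟨ha, hb, h1⟩) ⟨hb, ha, h2⟩)

lemma pair_finset_cases {a b c d : α} (hab : a ≠ b)
    (h : ({a, b} : Finset α) = {c, d}) : (a = c ∧ b = d) ∨ (a = d ∧ b = c) := by
  have ha : a = c ∨ a = d := by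
    have : a ∈ ({c, d} : Finset α) := by rw [← h]; simp
    simpa using this
  have hb : b = c ∨ b = d := by
    have : b ∈ ({c, d} : Finset α) := by rw [← h]; simp
    simpa using this
  rcases ha with h1 | h1 <;> rcases hb with h2 | h2
  · exact absurd (h1.trans h2.symm) hab
  · exact Or.inl ⟨h1, h2⟩
  · exact Or.inr ⟨h1, h2⟩
  · exact absurd (h1.trans h2.symm) hab

end Helpers

section Transfer
set_option linter.unusedSectionVars false

variable {V : Type*} [DecidableEq V] {E : V → V → Prop} {U : Finset V}

lemma diacyclic_map {T : Finset ↥U} (hT : DiAcyclic (inducedRel E U) T) :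
    DiAcyclic E (T.map (Function.Embedding.subtype (· ∈ U))) := by
  classical
  intro v hv hcyc
  set T' := T.map (Function.Embedding.subtype (· ∈ U)) with hT'def
  have memT' : ∀ {x : V}, x ∈ T' → ∃ hx : x ∈ U, (⟨x, hx⟩ : ↥U) ∈ T := by
    intro x hx
    rw [hT'def, Finset.mem_map] at hx
    obtain ⟨y, hy, rfl⟩ := hx
    exact ⟨y.2, hy⟩
  have key : ∀ x y : V, Relation.TransGen (fun a b => a ∈ T' ∧ b ∈ T' ∧ E a b) x y →
      ∃ (hx : x ∈ U) (hy : y ∈ U), (⟨x, hx⟩ : ↥U) ∈ T ∧ (⟨y, hy⟩ : ↥U) ∈ T ∧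
        Relation.TransGen (fun a b : ↥U => a ∈ T ∧ b ∈ T ∧ inducedRel E U a b)
          ⟨x, hx⟩ ⟨y, hy⟩ := by
    intro x y hxy
    induction hxy with
    | single hstep =>
      obtain ⟨hx', hy', hR⟩ := hstep
      obtain ⟨hx, hxT⟩ := memT' hx'
      obtain ⟨hy, hyT⟩ := memT' hy'
      exact ⟨hx, hy, hxT, hyT, Relation.TransGen.single ⟨hxT, hyT, hR⟩⟩
    | tail _ hstep ih =>
      obtain ⟨hx, hc, hxT, hcT, htg⟩ := ih
      obtain ⟨hc', hy', hR⟩ := hstep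
      obtain ⟨hy, hyT⟩ := memT' hy'
      exact ⟨hx, hy, hxT, hyT, htg.tail ⟨hcT, hyT, hR⟩⟩
  obtain ⟨hx, hy, hxT, _, htg⟩ := key v v hcyc
  exact hT _ hxT htg

lemma diacyclic_pullback {S : Finset V} (hS : DiAcyclic E S) (hSU : S ⊆ U) :
    DiAcyclic (inducedRel E U) (S.subtype (· ∈ U)) := by
  intro v hv hcyc
  have hvS : v.1 ∈ S := Finset.mem_subtype.mp hv
  have key := Relation.TransGen.lift (p := fun a b : V => a ∈ S ∧ b ∈ S ∧ E a b)
    (r := fun a b : ↥U => a ∈ S.subtype (· ∈ U) ∧ b ∈ S.subtype (· ∈ U) ∧ inducedRel E U a b)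
    (fun a : ↥U => a.1)
    (fun a b hab => ⟨Finset.mem_subtype.mp hab.1, Finset.mem_subtype.mp hab.2.1, hab.2.2⟩) v v hcyc
  exact hS v.1 hvS key

end Transfer

lemma dichi_le {V : Type*} [Fintype V] [DecidableEq V] {E : V → V → Prop}
    {Q : Finpartition (Finset.univ : Finset V)} (h : IsDiColoring E Q) :
    dichi V E ≤ Q.parts.card :=
  Nat.sInf_le ⟨Q, h, rfl⟩

theorem stmt7 {V : Type*} [Fintype V] [DecidableEq V] (E : V → V → Prop)
    (hirr : Irreflexive E) (P : Finpartition (Finset.univ : Finset V))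
    (hP : Extreme E P) (U : Finset V)
    (hU : ∀ v : V, v ∈ U ↔ ∃ S ∈ P.parts, v ∈ S ∧ S.card ≤ 2) :
    ∃ M : (auxGraph E U).Subgraph, IsMaxMatching (auxGraph E U) M ∧
      (∀ a b : ↥U, M.Adj a b ↔ a ≠ b ∧ ∃ S ∈ P.parts, a.1 ∈ S ∧ b.1 ∈ S) ∧
      dichi ↥U (inducedRel E U) = U.card - matchNum (auxGraph E U) := by
  classical
  obtain ⟨hPcol, hPcard, -⟩ := hP
  set smalls := P.parts.filter (fun S => S.card ≤ 2) with hsm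
  set twos := P.parts.filter (fun S => S.card = 2) with htw
  set ones := P.parts.filter (fun S => S.card = 1) with hon
  set bigs := P.parts.filter (fun S => ¬ S.card ≤ 2) with hbg
  have hirrI : Irreflexive (inducedRel E U) := fun a => hirr a.1
  have hmemU : ∀ v : V, v ∈ U ↔ ∃ S ∈ smalls, v ∈ S := by
    intro v
    rw [hU v]
    constructor
    · rintro ⟨S, hS, hv, hc⟩; exact ⟨S, Finset.mem_filter.mpr ⟨hS, hc⟩, hv⟩
    · rintro ⟨S, hS, hv⟩
      rw [hsm, Finset.mem_filter] at hS
      exact ⟨S, hS.1, hv, hS.2⟩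
  have hsubU : ∀ S ∈ smalls, S ⊆ U := fun S hS v hv => (hmemU v).mpr ⟨S, hS, hv⟩
  have hsmallpart : ∀ {v : V} {S : Finset V}, v ∈ U → S ∈ P.parts → v ∈ S → S ∈ smalls := by
    intro v S hvU hS hvS
    obtain ⟨S', hS', hvS'⟩ := (hmemU v).mp hvU
    rwa [P.eq_of_mem_parts hS (Finset.mem_filter.mp hS').1 hvS hvS']
  have hbigU : ∀ S ∈ bigs, ∀ v ∈ S, v ∉ U := by
    intro S hS v hv hvU
    rw [hbg, Finset.mem_filter] at hS
    exact hS.2 (Finset.mem_filter.mp (hsmallpart hvU hS.1 hv)).2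
  -- counting
  have hdisj12 : Disjoint ones twos := by
    rw [Finset.disjoint_left]
    intro S h1 h2
    rw [hon, Finset.mem_filter] at h1
    rw [htw, Finset.mem_filter] at h2
    omega
  have hsplit : smalls = ones ∪ twos := by
    ext S
    simp only [hsm, hon, htw, Finset.mem_filter, Finset.mem_union]
    constructor
    · rintro ⟨hS, hc⟩
      have hpos := Finset.card_pos.mpr (P.nonempty_of_mem_parts hS)
      have : S.card = 1 ∨ S.card = 2 := by omega
      rcases this with h | h
      · exact Or.inl ⟨hS, h⟩
      · exact Or.inr ⟨hS, h⟩
    · rintro (⟨hS, h⟩ | ⟨hS, h⟩) <;> exact ⟨hS, by omega⟩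
  have hUeq : U = smalls.biUnion id := by
    ext v
    rw [hmemU]
    simp [Finset.mem_biUnion]
  have hpd : ∀ x ∈ smalls, ∀ y ∈ smalls, x ≠ y → Disjoint (id x) (id y) := by
    intro x hx y hy hxy
    exact P.disjoint (Finset.mem_coe.mpr (Finset.mem_filter.mp hx).1)
      (Finset.mem_coe.mpr (Finset.mem_filter.mp hy).1) hxy
  have hones1 : ∑ S ∈ ones, S.card = ones.card := by
    rw [Finset.sum_congr rfl (fun S hS => (Finset.mem_filter.mp hS).2), Finset.sum_const,
      smul_eq_mul, mul_one]
  have htwos2 : ∑ S ∈ twos, S.card = 2 * twos.card := by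
    rw [Finset.sum_congr rfl (fun S hS => (Finset.mem_filter.mp hS).2), Finset.sum_const,
      smul_eq_mul, mul_comm]
  have hUcard : U.card = ones.card + 2 * twos.card := by
    rw [hUeq, Finset.card_biUnion hpd]
    simp only [id]
    rw [hsplit, Finset.sum_union hdisj12, hones1, htwos2]
  have hsmcard : smalls.card = ones.card + twos.card := by
    rw [hsplit, Finset.card_union_of_disjoint hdisj12]
  have hPcards : bigs.card + smalls.card = P.parts.card := by
    have h := Finset.card_filter_add_card_filter_not
      (s := P.parts) (p := fun S => S.card ≤ 2)
    rw [← hsm, ← hbg] at h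
    omega
  -- the matching M
  have hne_val : ∀ {a b : ↥U}, a ≠ b → a.1 ≠ b.1 := fun h hc => h (Subtype.ext hc)
  have hcard2 : ∀ {a b : ↥U}, a ≠ b → ∀ {S : Finset V}, S ∈ P.parts → a.1 ∈ S → b.1 ∈ S →
      S.card = 2 := by
    intro a b hab S hS ha hb
    have h1 : S.card ≤ 2 := (Finset.mem_filter.mp (hsmallpart a.2 hS ha)).2
    have h2 : 2 ≤ S.card := by
      have : ({a.1, b.1} : Finset V) ⊆ S := by
        intro x hx; rcases Finset.mem_insert.mp hx with rfl | hx
        · exact ha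
        · rwa [Finset.mem_singleton.mp hx]
      calc 2 = ({a.1, b.1} : Finset V).card := (Finset.card_pair (hne_val hab)).symm
        _ ≤ S.card := Finset.card_le_card this
    omega
  let M : (auxGraph E U).Subgraph :=
    { verts := {a : ↥U | ∃ S ∈ P.parts, a.1 ∈ S ∧ S.card = 2}
      Adj := fun a b => a ≠ b ∧ ∃ S ∈ P.parts, a.1 ∈ S ∧ b.1 ∈ S
      adj_sub := by
        rintro a b ⟨hab, S, hS, ha, hb⟩
        exact show a ≠ b ∧ ¬ (E a.1 b.1 ∧ E b.1 a.1) from ⟨hab, not_both_of_diacyclic (hPcol S hS) ha hb⟩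
      edge_vert := by
        rintro a b ⟨hab, S, hS, ha, hb⟩
        exact ⟨S, hS, ha, hcard2 hab hS ha hb⟩
      symm := by
        constructor
        rintro a b ⟨hab, S, hS, ha, hb⟩
        exact ⟨hab.symm, S, hS, hb, ha⟩ }
  have hMadj : ∀ a b : ↥U, M.Adj a b ↔ a ≠ b ∧ ∃ S ∈ P.parts, a.1 ∈ S ∧ b.1 ∈ S :=
    fun a b => Iff.rfl
  have hmatch : M.IsMatching := by
    rintro v ⟨S, hS, hvS, hS2⟩
    obtain ⟨x, y, hxy, rfl⟩ := Finset.card_eq_two.mp hS2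
    have hSsm : ({x, y} : Finset V) ∈ smalls := Finset.mem_filter.mpr ⟨hS, by omega⟩
    have hxU : x ∈ U := hsubU _ hSsm (by simp)
    have hyU : y ∈ U := hsubU _ hSsm (by simp)
    have huni : ∀ w : ↥U, w.1 ∈ ({x, y} : Finset V) → ∀ b : ↥U, M.Adj w b →
        b.1 ∈ ({x, y} : Finset V) ∧ b ≠ w := by
      intro w hw b hb
      obtain ⟨hwb, S', hS', hwS', hbS'⟩ := hb
      have : S' = {x, y} := P.eq_of_mem_parts hS' hS hwS' hw
      exact ⟨this ▸ hbS', hwb.symm⟩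
    rcases Finset.mem_insert.mp hvS with hvx | hvy
    · refine ⟨⟨y, hyU⟩, ⟨?_, {x, y}, hS, hvS, by simp⟩, ?_⟩
      · intro h
        exact hxy (hvx ▸ congrArg Subtype.val h)
      · intro b hb
        obtain ⟨hbm, hbv⟩ := huni v hvS b hb
        rcases Finset.mem_insert.mp hbm with hbx | hby
        · exact absurd (Subtype.ext (hbx.trans hvx.symm)) hbv
        · exact Subtype.ext (Finset.mem_singleton.mp hby)
    · rw [Finset.mem_singleton] at hvy
      refine ⟨⟨x, hxU⟩, ⟨?_, {x, y}, hS, hvS, by simp⟩, ?_⟩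
      · intro h
        exact hxy (hvy ▸ congrArg Subtype.val h).symm
      · intro b hb
        obtain ⟨hbm, hbv⟩ := huni v hvS b hb
        rcases Finset.mem_insert.mp hbm with hbx | hby
        · exact Subtype.ext hbx
        · exact absurd (Subtype.ext ((Finset.mem_singleton.mp hby).trans hvy.symm)) hbv
  have hedge : M.edgeSet.ncard = twos.card := by
    set f : Sym2 ↥U → Finset V :=
      Sym2.lift ⟨fun a b => ({a.1, b.1} : Finset V), fun a b => Finset.pair_comm _ _⟩ with hf
    have hinj : Set.InjOn f M.edgeSet := by
      intro e1 he1 e2 he2 hfe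
      induction e1 using Sym2.ind with | _ a b =>
      induction e2 using Sym2.ind with | _ c d =>
      rw [SimpleGraph.Subgraph.mem_edgeSet] at he1 he2
      simp only [hf, Sym2.lift_mk] at hfe
      rcases pair_finset_cases (hne_val he1.1) hfe with ⟨h1, h2⟩ | ⟨h1, h2⟩
      · rw [Sym2.eq_iff]
        exact Or.inl ⟨Subtype.ext h1, Subtype.ext h2⟩
      · rw [Sym2.eq_iff]
        exact Or.inr ⟨Subtype.ext h1, Subtype.ext h2⟩
    have himg : f '' M.edgeSet = ↑twos := by
      ext X
      constructor
      · rintro ⟨e, he, rfl⟩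
        induction e using Sym2.ind with | _ a b =>
        rw [SimpleGraph.Subgraph.mem_edgeSet] at he
        obtain ⟨hab, S, hS, ha, hb⟩ := he
        have h2 : S.card = 2 := hcard2 hab hS ha hb
        have hXS : ({a.1, b.1} : Finset V) ⊆ S := by
          intro x hx
          rcases Finset.mem_insert.mp hx with rfl | hx
          · exact ha
          · rwa [Finset.mem_singleton.mp hx]
        have heq : ({a.1, b.1} : Finset V) = S :=
          Finset.eq_of_subset_of_card_le hXS
            (by rw [h2, Finset.card_pair (hne_val hab)])
        simp only [hf, Sym2.lift_mk]
        rw [Finset.mem_coe, htw, Finset.mem_filter, heq]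
        exact ⟨hS, h2⟩
      · intro hX
        rw [Finset.mem_coe, htw, Finset.mem_filter] at hX
        obtain ⟨hXp, hX2⟩ := hX
        obtain ⟨x, y, hxy, rfl⟩ := Finset.card_eq_two.mp hX2
        have hSsm : ({x, y} : Finset V) ∈ smalls := Finset.mem_filter.mpr ⟨hXp, by omega⟩
        have hxU : x ∈ U := hsubU _ hSsm (by simp)
        have hyU : y ∈ U := hsubU _ hSsm (by simp)
        refine ⟨s(⟨x, hxU⟩, ⟨y, hyU⟩), SimpleGraph.Subgraph.mem_edgeSet.mpr
          ⟨fun h => hxy (congrArg Subtype.val h), {x, y}, hXp, by simp, by simp⟩, by simp [hf]⟩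
    calc M.edgeSet.ncard = (f '' M.edgeSet).ncard := (Set.ncard_image_of_injOn hinj).symm
      _ = twos.card := by rw [himg, Set.ncard_coe_finset]
  -- restriction of P to U is a colouring of the induced digraph with smalls.card parts
  have hpb_inj : ∀ S ∈ smalls, ∀ T ∈ smalls,
      S.subtype (· ∈ U) = T.subtype (· ∈ U) → S = T := by
    intro S hS T hT h
    ext v
    constructor
    · intro hv
      have hvU := hsubU S hS hv
      have : (⟨v, hvU⟩ : ↥U) ∈ S.subtype (· ∈ U) := Finset.mem_subtype.mpr hv
      rw [h] at this
      exact Finset.mem_subtype.mp this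
    · intro hv
      have hvU := hsubU T hT hv
      have : (⟨v, hvU⟩ : ↥U) ∈ T.subtype (· ∈ U) := Finset.mem_subtype.mpr hv
      rw [← h] at this
      exact Finset.mem_subtype.mp this
  have hQres : ∃ Qr : Finpartition (Finset.univ : Finset ↥U),
      IsDiColoring (inducedRel E U) Qr ∧ Qr.parts.card = smalls.card := by
    refine ⟨⟨smalls.image (fun S => S.subtype (· ∈ U)), ?_, ?_, ?_⟩, ?_, ?_⟩
    · rw [Finset.supIndep_iff_pairwiseDisjoint]
      intro X hX Y hY hXY
      obtain ⟨S, hS, rfl⟩ := Finset.mem_image.mp (Finset.mem_coe.mp hX)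
      obtain ⟨T, hT, rfl⟩ := Finset.mem_image.mp (Finset.mem_coe.mp hY)
      have hST : S ≠ T := fun h => hXY (by rw [h])
      have hd := P.disjoint (Finset.mem_coe.mpr (Finset.mem_filter.mp hS).1)
        (Finset.mem_coe.mpr (Finset.mem_filter.mp hT).1) hST
      show Disjoint (S.subtype (· ∈ U)) (T.subtype (· ∈ U))
      rw [Finset.disjoint_left]
      intro a haS haT
      exact (Finset.disjoint_left.mp hd) (Finset.mem_subtype.mp haS) (Finset.mem_subtype.mp haT)
    · rw [Finset.eq_univ_iff_forall]
      intro x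
      rw [Finset.mem_sup]
      obtain ⟨S, hS, hxS⟩ := (hmemU x.1).mp x.2
      exact ⟨S.subtype (· ∈ U), Finset.mem_image_of_mem _ hS, Finset.mem_subtype.mpr hxS⟩
    · intro h
      obtain ⟨S, hS, hpbS⟩ := Finset.mem_image.mp h
      obtain ⟨v, hv⟩ := P.nonempty_of_mem_parts (Finset.mem_filter.mp hS).1
      have : (⟨v, hsubU S hS hv⟩ : ↥U) ∈ S.subtype (· ∈ U) := Finset.mem_subtype.mpr hv
      rw [hpbS] at this
      exact absurd this (Finset.notMem_empty _)
    · intro X hX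
      obtain ⟨S, hS, rfl⟩ := Finset.mem_image.mp hX
      exact diacyclic_pullback (hPcol S (Finset.mem_filter.mp hS).1) (hsubU S hS)
    · exact Finset.card_image_of_injOn hpb_inj
  obtain ⟨Qr, hQrcol, hQrcard⟩ := hQres
  have hdichiU : dichi ↥U (inducedRel E U) = smalls.card := by
    refine le_antisymm (hQrcard ▸ dichi_le hQrcol) ?_
    refine le_csInf ⟨smalls.card, Qr, hQrcol, hQrcard⟩ ?_
    rintro n ⟨Q, hQcol, rfl⟩
    -- combine Q with the big parts of P to colour all of V
    set emb : ↥U ↪ V := Function.Embedding.subtype (· ∈ U) with hemb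
    set lifted := Q.parts.image (fun T => T.map emb) with hlift
    have hliftU : ∀ X ∈ lifted, ∀ v ∈ X, v ∈ U := by
      intro X hX v hv
      obtain ⟨T, hT, rfl⟩ := Finset.mem_image.mp hX
      obtain ⟨y, hy, rfl⟩ := Finset.mem_map.mp hv
      exact y.2
    have hdisjBL : Disjoint bigs lifted := by
      rw [Finset.disjoint_left]
      intro X hXb hXl
      obtain ⟨v, hv⟩ := P.nonempty_of_mem_parts (Finset.mem_filter.mp hXb).1
      exact hbigU X hXb v hv (hliftU X hXl v hv)
    have hQC : ∃ QC : Finpartition (Finset.univ : Finset V),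
        IsDiColoring E QC ∧ QC.parts.card = bigs.card + Q.parts.card := by
      refine ⟨⟨bigs ∪ lifted, ?_, ?_, ?_⟩, ?_, ?_⟩
      · rw [Finset.supIndep_iff_pairwiseDisjoint]
        intro X hX Y hY hXY
        show Disjoint X Y
        rcases Finset.mem_union.mp (Finset.mem_coe.mp hX) with hXb | hXl <;>
          rcases Finset.mem_union.mp (Finset.mem_coe.mp hY) with hYb | hYl
        · exact P.disjoint (Finset.mem_coe.mpr (Finset.mem_filter.mp hXb).1)
            (Finset.mem_coe.mpr (Finset.mem_filter.mp hYb).1) hXY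
        · rw [Finset.disjoint_left]
          intro v hvX hvY
          exact hbigU X hXb v hvX (hliftU Y hYl v hvY)
        · rw [Finset.disjoint_right]
          intro v hvY hvX
          exact hbigU Y hYb v hvY (hliftU X hXl v hvX)
        · obtain ⟨T, hT, rfl⟩ := Finset.mem_image.mp hXl
          obtain ⟨T', hT', rfl⟩ := Finset.mem_image.mp hYl
          have hTT : T ≠ T' := fun h => hXY (by rw [h])
          exact (Finset.disjoint_map emb).mpr
            (Q.disjoint (Finset.mem_coe.mpr hT) (Finset.mem_coe.mpr hT') hTT)
      · rw [Finset.eq_univ_iff_forall]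
        intro v
        rw [Finset.mem_sup]
        by_cases hvU : v ∈ U
        · obtain ⟨T, hT, hvT⟩ := Q.exists_mem (Finset.mem_univ (⟨v, hvU⟩ : ↥U))
          refine ⟨T.map emb, Finset.mem_union_right _ (Finset.mem_image_of_mem _ hT), ?_⟩
          exact Finset.mem_map.mpr ⟨⟨v, hvU⟩, hvT, rfl⟩
        · obtain ⟨S, hS, hvS⟩ := P.exists_mem (Finset.mem_univ v)
          have hSb : S ∈ bigs := by
            rw [hbg, Finset.mem_filter]
            refine ⟨hS, fun hc => hvU ((hmemU v).mpr ⟨S, Finset.mem_filter.mpr ⟨hS, hc⟩, hvS⟩)⟩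
          exact ⟨S, Finset.mem_union_left _ hSb, hvS⟩
      · intro h
        rcases Finset.mem_union.mp h with hb | hl
        · exact P.bot_notMem (Finset.mem_filter.mp hb).1
        · obtain ⟨T, hT, hTb⟩ := Finset.mem_image.mp hl
          obtain ⟨y, hy⟩ := Q.nonempty_of_mem_parts hT
          have : emb y ∈ T.map emb := Finset.mem_map_of_mem _ hy
          rw [hTb] at this
          exact absurd this (Finset.notMem_empty _)
      · intro X hX
        rcases Finset.mem_union.mp hX with hb | hl
        · exact hPcol X (Finset.mem_filter.mp hb).1
        · obtain ⟨T, hT, rfl⟩ := Finset.mem_image.mp hl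
          exact diacyclic_map (hQcol T hT)
      · rw [Finset.card_union_of_disjoint hdisjBL, hlift,
          Finset.card_image_of_injective _ (Finset.map_injective emb)]
    obtain ⟨QC, hQCcol, hQCcard⟩ := hQC
    have h1 : dichi V E ≤ bigs.card + Q.parts.card := hQCcard ▸ dichi_le hQCcol
    omega
  have hmax : ∀ M' : (auxGraph E U).Subgraph, M'.IsMatching →
      M'.edgeSet.ncard ≤ twos.card := by
    intro M' hm
    have hfin : M'.edgeSet.Finite := Set.toFinite _
    set F := hfin.toFinset with hF
    have hFcard : F.card = M'.edgeSet.ncard := (Set.ncard_eq_toFinset_card _ hfin).symm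
    set g : Sym2 ↥U → Finset ↥U :=
      Sym2.lift ⟨fun a b => {a, b}, fun a b => Finset.pair_comm a b⟩ with hg
    set pairs := F.image g with hpairs
    have hmemF : ∀ e ∈ F, e ∈ M'.edgeSet := fun e he => (Set.Finite.mem_toFinset hfin).mp he
    have hpair_ex : ∀ X ∈ pairs, ∃ a b : ↥U, a ≠ b ∧ M'.Adj a b ∧ X = {a, b} := by
      intro X hX
      obtain ⟨e, heF, rfl⟩ := Finset.mem_image.mp hX
      induction e using Sym2.ind with | _ a b =>
      have he := SimpleGraph.Subgraph.mem_edgeSet.mp (hmemF _ heF)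
      exact ⟨a, b, (M'.adj_sub he).ne, he, by simp [hg]⟩
    have huniq : ∀ {a b c : ↥U}, M'.Adj a b → M'.Adj a c → b = c := by
      intro a b c h1 h2
      obtain ⟨w, _, hwu⟩ := hm (M'.edge_vert h1)
      rw [hwu b h1, hwu c h2]
    have hmempair : ∀ {X : Finset ↥U}, X ∈ pairs → ∀ {v : ↥U}, v ∈ X →
        ∃ w, M'.Adj v w ∧ X = {v, w} := by
      intro X hX v hv
      obtain ⟨a, b, hab, hadj, rfl⟩ := hpair_ex X hX
      rcases Finset.mem_insert.mp hv with rfl | hv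
      · exact ⟨b, hadj, rfl⟩
      · rw [Finset.mem_singleton] at hv
        subst hv
        exact ⟨a, hadj.symm, by rw [Finset.pair_comm]⟩
    have hpdisj : ∀ X ∈ pairs, ∀ Y ∈ pairs, X ≠ Y → Disjoint X Y := by
      intro X hX Y hY hXY
      rw [Finset.disjoint_left]
      intro v hvX hvY
      obtain ⟨w1, h1, rfl⟩ := hmempair hX hvX
      obtain ⟨w2, h2, rfl⟩ := hmempair hY hvY
      exact hXY (by rw [huniq h1 h2])
    have hginj : Set.InjOn g ↑F := by
      intro e1 he1 e2 he2 hge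
      induction e1 using Sym2.ind with | _ a b =>
      induction e2 using Sym2.ind with | _ c d =>
      have hab := (M'.adj_sub (SimpleGraph.Subgraph.mem_edgeSet.mp
        (hmemF _ (Finset.mem_coe.mp he1)))).ne
      simp only [hg, Sym2.lift_mk] at hge
      rcases pair_finset_cases hab hge with ⟨h1, h2⟩ | ⟨h1, h2⟩
      · rw [Sym2.eq_iff]
        exact Or.inl ⟨h1, h2⟩
      · rw [Sym2.eq_iff]
        exact Or.inr ⟨h1, h2⟩
    have hpairs_card : pairs.card = M'.edgeSet.ncard := by
      rw [hpairs, Finset.card_image_of_injOn hginj, hFcard]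
    set cover := pairs.biUnion id with hcover
    have hcovercard : cover.card = 2 * pairs.card := by
      have hc2 : ∀ X ∈ pairs, (id X).card = 2 := by
        intro X hX
        obtain ⟨a, b, hab, _, rfl⟩ := hpair_ex X hX
        exact Finset.card_pair hab
      rw [hcover, Finset.card_biUnion (t := id) (fun X hX Y hY h => hpdisj X hX Y hY h),
        Finset.sum_congr rfl hc2, Finset.sum_const, smul_eq_mul, mul_comm]
    set rest := (Finset.univ : Finset ↥U) \ cover with hrest
    have hUuniv : (Finset.univ : Finset ↥U).card = U.card := by
      rw [Finset.card_univ, Fintype.card_coe]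
    have hrestcard : rest.card = U.card - 2 * pairs.card := by
      rw [hrest, Finset.card_sdiff_of_subset (Finset.subset_univ _), hUuniv, hcovercard]
    have hcoverle : 2 * pairs.card ≤ U.card := by
      rw [← hcovercard, ← hUuniv]
      exact Finset.card_le_card (Finset.subset_univ _)
    have hdisjPS : Disjoint pairs (rest.image (fun x => ({x} : Finset ↥U))) := by
      rw [Finset.disjoint_left]
      intro X hXp hXs
      obtain ⟨a, b, hab, _, rfl⟩ := hpair_ex X hXp
      obtain ⟨x, _, hx⟩ := Finset.mem_image.mp hXs
      have h2 := Finset.card_pair hab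
      rw [← hx] at h2
      simp at h2
    have hQM : ∃ QM : Finpartition (Finset.univ : Finset ↥U),
        IsDiColoring (inducedRel E U) QM ∧ QM.parts.card = pairs.card + rest.card := by
      refine ⟨⟨pairs ∪ rest.image (fun x => ({x} : Finset ↥U)), ?_, ?_, ?_⟩, ?_, ?_⟩
      · rw [Finset.supIndep_iff_pairwiseDisjoint]
        intro X hX Y hY hXY
        show Disjoint X Y
        rcases Finset.mem_union.mp (Finset.mem_coe.mp hX) with hXp | hXs <;>
          rcases Finset.mem_union.mp (Finset.mem_coe.mp hY) with hYp | hYs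
        · exact hpdisj X hXp Y hYp hXY
        · obtain ⟨x, hxrest, rfl⟩ := Finset.mem_image.mp hYs
          rw [Finset.disjoint_right]
          intro v hvY hvX
          rw [Finset.mem_singleton] at hvY
          subst hvY
          exact (Finset.mem_sdiff.mp hxrest).2 (Finset.mem_biUnion.mpr ⟨X, hXp, hvX⟩)
        · obtain ⟨x, hxrest, rfl⟩ := Finset.mem_image.mp hXs
          rw [Finset.disjoint_left]
          intro v hvX hvY
          rw [Finset.mem_singleton] at hvX
          subst hvX
          exact (Finset.mem_sdiff.mp hxrest).2 (Finset.mem_biUnion.mpr ⟨Y, hYp, hvY⟩)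
        · obtain ⟨x, _, rfl⟩ := Finset.mem_image.mp hXs
          obtain ⟨y, _, rfl⟩ := Finset.mem_image.mp hYs
          rw [Finset.disjoint_left]
          intro v hvX hvY
          rw [Finset.mem_singleton] at hvX hvY
          exact hXY (by rw [hvX.symm.trans hvY])
      · rw [Finset.eq_univ_iff_forall]
        intro v
        rw [Finset.mem_sup]
        by_cases hv : v ∈ cover
        · obtain ⟨X, hXp, hvX⟩ := Finset.mem_biUnion.mp hv
          exact ⟨X, Finset.mem_union_left _ hXp, hvX⟩
        · refine ⟨{v}, Finset.mem_union_right _ ?_, Finset.mem_singleton_self v⟩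
          exact Finset.mem_image_of_mem _ (Finset.mem_sdiff.mpr ⟨Finset.mem_univ v, hv⟩)
      · intro h
        rcases Finset.mem_union.mp h with hp | hs
        · obtain ⟨a, b, _, _, hab⟩ := hpair_ex _ hp
          exact absurd hab.symm (Finset.nonempty_iff_ne_empty.mp (Finset.insert_nonempty _ _))
        · obtain ⟨x, _, hx⟩ := Finset.mem_image.mp hs
          exact absurd hx (Finset.nonempty_iff_ne_empty.mp (Finset.singleton_nonempty x))
      · intro X hX
        rcases Finset.mem_union.mp hX with hp | hs
        · obtain ⟨a, b, hab, hadj, rfl⟩ := hpair_ex _ hp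
          exact diacyclic_pair hirrI hab (M'.adj_sub hadj : a ≠ b ∧ ¬ (E a.1 b.1 ∧ E b.1 a.1)).2
        · obtain ⟨x, _, rfl⟩ := Finset.mem_image.mp hs
          exact diacyclic_singleton hirrI x
      · rw [Finset.card_union_of_disjoint hdisjPS,
          Finset.card_image_of_injective _ Finset.singleton_injective]
    obtain ⟨QM, hQMcol, hQMcard⟩ := hQM
    have h1 : dichi ↥U (inducedRel E U) ≤ pairs.card + rest.card :=
      hQMcard ▸ dichi_le hQMcol
    rw [hdichiU] at h1
    omega
  have hmnum : matchNum (auxGraph E U) = twos.card := by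
    have hbdd : ∀ n ∈ {n | ∃ M' : (auxGraph E U).Subgraph, M'.IsMatching ∧
        M'.edgeSet.ncard = n}, n ≤ twos.card := by
      rintro n ⟨M', hM', rfl⟩; exact hmax M' hM'
    refine le_antisymm (csSup_le ⟨twos.card, M, hmatch, hedge⟩ hbdd)
      (le_csSup ⟨twos.card, hbdd⟩ ⟨M, hmatch, hedge⟩)
  refine ⟨M, ⟨hmatch, fun M' h => (hmax M' h).trans_eq hedge.symm⟩, hMadj, ?_⟩
  rw [hmnum, hdichiU, hsmcard, hUcard]
  omega
end

section
/- Let G be a digraph, P an extreme colouring of G, W the union of the colour classes of P of size at least 3, and U = V(G)∖W. Then χ(G) = χ(G[W]) + χ(G[U]). -/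
open Finset

section helpers
variable {V : Type*} [DecidableEq V] (E : V → V → Prop)

lemma acyclic_map_iff (T : Finset V) (S : Finset ↥T) :
    DiAcyclic E (S.map (Function.Embedding.subtype _)) ↔ DiAcyclic (inducedRel E T) S := by
  have hmem : ∀ a : V, a ∈ S.map (Function.Embedding.subtype _) ↔ ∃ h : a ∈ T, (⟨a, h⟩ : ↥T) ∈ S := by
    intro a
    simp only [Finset.mem_map, Function.Embedding.coe_subtype]
    constructor
    · rintro ⟨⟨x, hx⟩, hxS, rfl⟩; exact ⟨hx, hxS⟩
    · rintro ⟨h, hS⟩; exact ⟨⟨a, h⟩, hS, rfl⟩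
  constructor
  · intro hA v hv hcyc
    apply hA v.1 ((hmem v.1).2 ⟨v.2, by simpa using hv⟩)
    refine Relation.TransGen.lift Subtype.val (fun a b hab => ?_) _ _ hcyc
    exact ⟨(hmem a.1).2 ⟨a.2, by simpa using hab.1⟩, (hmem b.1).2 ⟨b.2, by simpa using hab.2.1⟩, hab.2.2⟩
  · intro hA v hv hcyc
    obtain ⟨hvT, hvS⟩ := (hmem v).1 hv
    apply hA ⟨v, hvT⟩ hvS
    have key : ∀ {a b : V}, Relation.TransGen (fun a b => a ∈ S.map (Function.Embedding.subtype _) ∧ b ∈ S.map (Function.Embedding.subtype _) ∧ E a b) a b →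
        ∀ (ha : a ∈ T) (hb : b ∈ T),
        Relation.TransGen (fun x y => x ∈ S ∧ y ∈ S ∧ inducedRel E T x y) ⟨a, ha⟩ ⟨b, hb⟩ := by
      intro a b h
      induction h with
      | single h => intro ha hb; exact Relation.TransGen.single ⟨((hmem _).1 h.1).2, ((hmem _).1 h.2.1).2, h.2.2⟩
      | tail h1 h2 ih =>
        intro ha hc
        have hb : _ ∈ T := ((hmem _).1 h2.1).1
        exact (ih ha hb).tail ⟨((hmem _).1 h2.1).2, ((hmem _).1 h2.2.1).2, h2.2.2⟩
    exact key hcyc hvT hvT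

variable [Fintype V]

lemma singleton_acyclic (hirr : Irreflexive E) (a : V) : DiAcyclic E {a} := by
  intro v hv hcyc
  have hstep : ∀ x y : V, ¬ (x ∈ ({a} : Finset V) ∧ y ∈ ({a} : Finset V) ∧ E x y) := by
    rintro x y ⟨hx, hy, hE⟩
    simp only [Finset.mem_singleton] at hx hy
    subst hx; subst hy
    exact hirr _ hE
  cases hcyc with
  | single h => exact hstep _ _ h
  | tail _ h => exact hstep _ _ h

lemma dichi_set_nonempty (hirr : Irreflexive E) :
    {n | ∃ P : Finpartition (Finset.univ : Finset V), IsDiColoring E P ∧ P.parts.card = n}.Nonempty := by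
  refine ⟨_, ⊥, fun S hS => ?_, rfl⟩
  rw [Finpartition.mem_bot_iff] at hS
  obtain ⟨a, _, rfl⟩ := hS
  exact singleton_acyclic E hirr a

lemma dichi_mem (hirr : Irreflexive E) :
    ∃ P : Finpartition (Finset.univ : Finset V), IsDiColoring E P ∧ P.parts.card = dichi V E :=
  Nat.sInf_mem (dichi_set_nonempty E hirr)

end helpers

section main
variable {V : Type*} [Fintype V] [DecidableEq V] (E : V → V → Prop)

lemma dichi_restrict_le (P : Finpartition (Finset.univ : Finset V)) (hP : IsDiColoring E P)
    (T : Finset V) (F : Finset (Finset V)) (hF : F ⊆ P.parts)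
    (hT : ∀ v : V, v ∈ T ↔ ∃ S ∈ F, v ∈ S) :
    dichi ↥T (inducedRel E T) ≤ F.card := by
  classical
  have hsub : ∀ S ∈ F, S ⊆ T := by
    intro S hS v hv
    exact (hT v).2 ⟨S, hS, hv⟩
  have hrecover : ∀ S ∈ F, (S.subtype (· ∈ T)).map (Function.Embedding.subtype _) = S := by
    intro S hS
    exact Finset.subtype_map_of_mem (fun x hx => hsub S hS hx)
  have hinj : Set.InjOn (fun S : Finset V => S.subtype (· ∈ T)) ↑F := by
    intro S1 h1 S2 h2 h
    simp only at h
    rw [← hrecover S1 h1, ← hrecover S2 h2, h]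
  refine Nat.sInf_le ⟨⟨F.image (fun S => S.subtype (· ∈ T)), ?_, ?_, ?_⟩, ?_, ?_⟩
  · rw [Finset.supIndep_iff_pairwiseDisjoint]
    intro s hs t ht hst
    simp only [Finset.coe_image, Set.mem_image, Finset.mem_coe] at hs ht
    obtain ⟨S1, h1, rfl⟩ := hs
    obtain ⟨S2, h2, rfl⟩ := ht
    have hne : S1 ≠ S2 := fun h => hst (by rw [h])
    have := P.disjoint (hF h1) (hF h2) hne
    simp only [Function.onFun, id] at this ⊢
    rw [Finset.disjoint_left] at this ⊢
    intro x hx1 hx2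
    rw [Finset.mem_subtype] at hx1 hx2
    exact this hx1 hx2
  · ext x
    simp only [Finset.mem_sup, Finset.mem_image, id, Finset.mem_univ, iff_true]
    obtain ⟨S, hS, hxS⟩ := (hT x.1).1 x.2
    exact ⟨S.subtype (· ∈ T), ⟨S, hS, rfl⟩, Finset.mem_subtype.2 hxS⟩
  · simp only [Finset.bot_eq_empty, Finset.mem_image, not_exists, not_and]
    intro S hS h
    obtain ⟨v, hv⟩ := P.nonempty_of_mem_parts (hF hS)
    have : (⟨v, hsub S hS hv⟩ : ↥T) ∈ S.subtype (· ∈ T) := Finset.mem_subtype.2 hv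
    rw [h] at this
    exact absurd this (Finset.notMem_empty _)
  · intro S' hS'
    simp only [Finset.mem_image] at hS'
    obtain ⟨S, hS, rfl⟩ := hS'
    rw [← acyclic_map_iff, hrecover S hS]
    exact hP S (hF hS)
  · exact Finset.card_image_of_injOn hinj

lemma dichi_combine_le (W U : Finset V) (hUW : U = Finset.univ \ W)
    (PW : Finpartition (Finset.univ : Finset ↥W)) (hPW : IsDiColoring (inducedRel E W) PW)
    (PU : Finpartition (Finset.univ : Finset ↥U)) (hPU : IsDiColoring (inducedRel E U) PU) :
    dichi V E ≤ PW.parts.card + PU.parts.card := by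
  classical
  set fW : Finset ↥W → Finset V := fun S => S.map (Function.Embedding.subtype _) with hfW
  set fU : Finset ↥U → Finset V := fun S => S.map (Function.Embedding.subtype _) with hfU
  have hWsub : ∀ S : Finset ↥W, fW S ⊆ W := by
    intro S v hv
    simp only [hfW, Finset.mem_map, Function.Embedding.coe_subtype] at hv
    obtain ⟨x, _, rfl⟩ := hv
    exact x.2
  have hUsub : ∀ S : Finset ↥U, fU S ⊆ U := by
    intro S v hv
    simp only [hfU, Finset.mem_map, Function.Embedding.coe_subtype] at hv
    obtain ⟨x, _, rfl⟩ := hv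
    exact x.2
  have hdisjWU : Disjoint W U := by
    rw [hUW]; exact Finset.disjoint_sdiff
  have hinjW : Function.Injective fW := fun a b h => Finset.map_injective _ h
  have hinjU : Function.Injective fU := fun a b h => Finset.map_injective _ h
  have himdisj : Disjoint (PW.parts.image fW) (PU.parts.image fU) := by
    rw [Finset.disjoint_left]
    intro S hSW hSU
    simp only [Finset.mem_image] at hSW hSU
    obtain ⟨S1, h1, rfl⟩ := hSW
    obtain ⟨S2, h2, hEq⟩ := hSU
    obtain ⟨x, hx⟩ := PW.nonempty_of_mem_parts h1
    have hxW : (x : V) ∈ W := x.2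
    have hxU : (x : V) ∈ fU S2 := by
      rw [hEq]
      exact Finset.mem_map_of_mem _ hx
    exact Finset.disjoint_left.1 hdisjWU hxW (hUsub S2 hxU)
  refine Nat.sInf_le ⟨⟨PW.parts.image fW ∪ PU.parts.image fU, ?_, ?_, ?_⟩, ?_, ?_⟩
  · rw [Finset.supIndep_iff_pairwiseDisjoint]
    intro s hs t ht hst
    simp only [Finset.coe_union, Set.mem_union, Finset.coe_image, Set.mem_image,
      Finset.mem_coe] at hs ht
    have key : ∀ {A : Finset V}, (∃ S ∈ PW.parts, fW S = A) ∨ (∃ S ∈ PU.parts, fU S = A) →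
        ∀ {B : Finset V}, (∃ S ∈ PW.parts, fW S = B) ∨ (∃ S ∈ PU.parts, fU S = B) →
        A ≠ B → Disjoint A B := by
      rintro A (⟨S1, h1, rfl⟩ | ⟨S1, h1, rfl⟩) B (⟨S2, h2, rfl⟩ | ⟨S2, h2, rfl⟩) hne
      · have hne' : S1 ≠ S2 := fun h => hne (by rw [h])
        have hd := PW.disjoint h1 h2 hne'
        simp only [Function.onFun, id] at hd
        exact Finset.disjoint_map _ |>.2 hd
      · exact (Finset.disjoint_left.2 fun x hx1 hx2 =>
          Finset.disjoint_left.1 hdisjWU (hWsub S1 hx1) (hUsub S2 hx2))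
      · exact (Finset.disjoint_left.2 fun x hx1 hx2 =>
          Finset.disjoint_left.1 hdisjWU (hWsub S2 hx2) (hUsub S1 hx1))
      · have hne' : S1 ≠ S2 := fun h => hne (by rw [h])
        have hd := PU.disjoint h1 h2 hne'
        simp only [Function.onFun, id] at hd
        exact Finset.disjoint_map _ |>.2 hd
    exact key hs ht hst
  · ext v
    simp only [Finset.mem_sup, Finset.mem_union, Finset.mem_image, id, Finset.mem_univ, iff_true]
    by_cases hv : v ∈ W
    · obtain ⟨S, hS, hvS⟩ := PW.exists_mem (Finset.mem_univ (⟨v, hv⟩ : ↥W))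
      exact ⟨fW S, Or.inl ⟨S, hS, rfl⟩, Finset.mem_map_of_mem _ hvS⟩
    · have hv' : v ∈ U := by rw [hUW]; simp [hv]
      obtain ⟨S, hS, hvS⟩ := PU.exists_mem (Finset.mem_univ (⟨v, hv'⟩ : ↥U))
      exact ⟨fU S, Or.inr ⟨S, hS, rfl⟩, Finset.mem_map_of_mem _ hvS⟩
  · simp only [Finset.bot_eq_empty, Finset.mem_union, Finset.mem_image, not_or, not_exists, not_and]
    constructor
    · intro S hS h
      obtain ⟨x, hx⟩ := PW.nonempty_of_mem_parts hS
      have : (x : V) ∈ fW S := Finset.mem_map_of_mem _ hx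
      rw [h] at this
      exact absurd this (Finset.notMem_empty _)
    · intro S hS h
      obtain ⟨x, hx⟩ := PU.nonempty_of_mem_parts hS
      have : (x : V) ∈ fU S := Finset.mem_map_of_mem _ hx
      rw [h] at this
      exact absurd this (Finset.notMem_empty _)
  · intro S hS
    simp only [Finset.mem_union, Finset.mem_image] at hS
    rcases hS with ⟨S', hS', rfl⟩ | ⟨S', hS', rfl⟩
    · exact (acyclic_map_iff E W S').2 (hPW S' hS')
    · exact (acyclic_map_iff E U S').2 (hPU S' hS')
  · rw [Finset.card_union_of_disjoint himdisj,
      Finset.card_image_of_injective _ hinjW, Finset.card_image_of_injective _ hinjU]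

end main

theorem stmt8' {V : Type*} [Fintype V] [DecidableEq V] (E : V → V → Prop)
    (hirr : Irreflexive E) (P : Finpartition (Finset.univ : Finset V))
    (hcol : IsDiColoring E P) (hcard : P.parts.card = dichi V E) (W U : Finset V)
    (hW : ∀ v : V, v ∈ W ↔ ∃ S ∈ P.parts, v ∈ S ∧ 3 ≤ S.card)
    (hUW : U = Finset.univ \ W) :
    dichi V E = dichi ↥W (inducedRel E W) + dichi ↥U (inducedRel E U) := by
  classical
  set F3 : Finset (Finset V) := P.parts.filter (fun S => 3 ≤ S.card) with hF3
  set Fs : Finset (Finset V) := P.parts.filter (fun S => ¬ 3 ≤ S.card) with hFs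
  have hWiff : ∀ v : V, v ∈ W ↔ ∃ S ∈ F3, v ∈ S := by
    intro v
    rw [hW v]
    simp only [hF3, Finset.mem_filter]
    tauto
  have hUiff : ∀ v : V, v ∈ U ↔ ∃ S ∈ Fs, v ∈ S := by
    intro v
    rw [hUW]
    simp only [Finset.mem_sdiff, Finset.mem_univ, true_and]
    constructor
    · intro hv
      obtain ⟨S, hS, hvS⟩ := P.exists_mem (Finset.mem_univ v)
      refine ⟨S, ?_, hvS⟩
      simp only [hFs, Finset.mem_filter]
      refine ⟨hS, fun hbig => hv ((hW v).2 ⟨S, hS, hvS, hbig⟩)⟩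
    · rintro ⟨S, hS, hvS⟩ hv
      obtain ⟨S', hS', hvS', hbig⟩ := (hW v).1 hv
      simp only [hFs, Finset.mem_filter] at hS
      exact hS.2 (P.eq_of_mem_parts hS.1 hS' hvS hvS' ▸ hbig)
  have h1 : dichi ↥W (inducedRel E W) ≤ F3.card :=
    dichi_restrict_le E P hcol W F3 (Finset.filter_subset _ _) hWiff
  have h2 : dichi ↥U (inducedRel E U) ≤ Fs.card :=
    dichi_restrict_le E P hcol U Fs (Finset.filter_subset _ _) hUiff
  have hsum : F3.card + Fs.card = P.parts.card :=
    Finset.card_filter_add_card_filter_not _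
  have hge : dichi ↥W (inducedRel E W) + dichi ↥U (inducedRel E U) ≤ dichi V E := by
    rw [← hcard, ← hsum]; omega
  obtain ⟨PW, hPW, hPWc⟩ := dichi_mem (inducedRel E W) (fun a => hirr a.1)
  obtain ⟨PU, hPU, hPUc⟩ := dichi_mem (inducedRel E U) (fun a => hirr a.1)
  have hle : dichi V E ≤ dichi ↥W (inducedRel E W) + dichi ↥U (inducedRel E U) := by
    rw [← hPWc, ← hPUc]
    exact dichi_combine_le E W U hUW PW hPW PU hPU
  omega

theorem stmt8 {V : Type*} [Fintype V] [DecidableEq V] (E : V → V → Prop)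
    (hirr : Irreflexive E) (P : Finpartition (Finset.univ : Finset V))
    (hP : Extreme E P) (W U : Finset V)
    (hW : ∀ v : V, v ∈ W ↔ ∃ S ∈ P.parts, v ∈ S ∧ 3 ≤ S.card)
    (hUW : U = Finset.univ \ W) :
    dichi V E = dichi ↥W (inducedRel E W) + dichi ↥U (inducedRel E U) := by
  exact stmt8' E hirr P hP.1 hP.2.1 W U hW hUW
end

section
/- Let H be a finite undirected graph with Gallai–Edmonds decomposition D(H), A(H), C(H), where D(H) is the set of vertices missed by some maximum matching, A(H) the set of vertices outside D(H) with a neighbour in D(H), and C(H) the remaining vertices. Then every maximum matching of H contains a perfect matching of H[C(H)] and a near-perfect matching of each connected component of H[D(H)]. -/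
open Finset

open scoped Classical

namespace GE9

variable {V : Type*} [Fintype V] {H : SimpleGraph V}
set_option linter.unusedSectionVars false

def IsIM (H : SimpleGraph V) (f : V → V) : Prop :=
  (∀ v, f (f v) = v) ∧ ∀ v, f v ≠ v → H.Adj v (f v)

def covs (f : V → V) : Set V := {v | f v ≠ v}

def MaxIM (H : SimpleGraph V) (S : Set V) (f : V → V) : Prop :=
  IsIM H f ∧ covs f ⊆ S ∧
    ∀ g, IsIM H g → covs g ⊆ S → (covs g).ncard ≤ (covs f).ncard

section Seq

variable (f g : V → V) (u : V)

def seqa : ℕ → V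
  | 0 => u
  | (n+1) => (if Even n then g else f) (seqa n)

def stp (i : ℕ) : Prop :=
  if Even i then g (seqa f g u i) = seqa f g u i else f (seqa f g u i) = seqa f g u i

variable {f g u}
variable (hf : ∀ v, f (f v) = v) (hg : ∀ v, g (g v) = v)
  (hfu : f u = u) (hgu : g u ≠ u)

lemma seqa_fwd (i : ℕ) :
    seqa f g u (i+1) = (if Even i then g else f) (seqa f g u i) := rfl

include hf hg in
lemma seqa_back (i : ℕ) :
    seqa f g u i = (if Even (i+1) then f else g) (seqa f g u (i+1)) := by
  have hs : seqa f g u (i+1) = (if Even i then g else f) (seqa f g u i) := rfl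
  rcases Nat.even_or_odd i with h | h
  · rw [hs, if_pos h, if_neg (by simp [Nat.even_add_one, h]), hg]
  · have h' : ¬ Even i := Nat.not_even_iff_odd.mpr h
    rw [hs, if_neg h', if_pos (by simp [Nat.even_add_one, h']), hf]

lemma stp_of_consec {i : ℕ} (h : seqa f g u i = seqa f g u (i+1)) : stp f g u i := by
  unfold stp
  rcases Nat.even_or_odd i with he | ho
  · rw [if_pos he]
    have hs : seqa f g u (i+1) = g (seqa f g u i) := by rw [seqa_fwd, if_pos he]
    rw [hs] at h; exact h.symm
  · have h' : ¬ Even i := Nat.not_even_iff_odd.mpr ho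
    rw [if_neg h']
    have hs : seqa f g u (i+1) = f (seqa f g u i) := by rw [seqa_fwd, if_neg h']
    rw [hs] at h; exact h.symm

include hf hg hfu hgu in
lemma seqa_inj {n : ℕ} (hns : ∀ i, 1 ≤ i → i < n → ¬ stp f g u i) :
    ∀ d i k, k - i = d → i < k → k ≤ n → seqa f g u i ≠ seqa f g u k := by
  intro d
  induction d using Nat.strong_induction_on with
  | _ d ih =>
    intro i k hd hik hkn heq
    rcases Nat.even_or_odd d with hde | hdo
    · -- even gap: descend to a 0 = a (k-i)
      have key : ∀ i k, i < k → k ≤ n → Even (k - i) →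
          seqa f g u i = seqa f g u k → seqa f g u 0 = seqa f g u (k - i) := by
        intro i
        induction i with
        | zero => intro k _ _ _ h; simpa using h
        | succ m ihm =>
          intro k hik hkn hev h
          obtain ⟨k', rfl⟩ : ∃ k', k = k' + 1 := ⟨k - 1, by omega⟩
          have hb1 := seqa_back hf hg (u := u) m
          have hb2 := seqa_back hf hg (u := u) k'
          have hstep : seqa f g u m = seqa f g u k' := by
            rw [hb1, hb2, h]
            rcases Nat.even_or_odd (m+1) with he | ho
            · have : Even (k'+1) := by
                obtain ⟨c, hc⟩ := hev; obtain ⟨c2, hc2⟩ := he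
                simp only [Nat.even_iff] at *; omega
              rw [if_pos he, if_pos this]
            · have h1 : ¬ Even (m+1) := Nat.not_even_iff_odd.mpr ho
              have h2 : ¬ Even (k'+1) := by
                obtain ⟨c, hc⟩ := hev
                simp only [Nat.even_iff, Nat.not_even_iff] at *; omega
              rw [if_neg h1, if_neg h2]
          have hred : k' + 1 - (m + 1) = k' - m := by omega
          rw [hred]
          exact ihm k' (by omega) (by omega) (by rwa [hred] at hev) hstep
      have h0 := key i k hik hkn (hd ▸ hde) heq
      set m := k - i with hm
      have hm2 : 2 ≤ m := by
        obtain ⟨c, hc⟩ := hde; omega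
      have hb := seqa_back hf hg (u := u) (m - 1)
      have hmm : m - 1 + 1 = m := by omega
      rw [hmm] at hb
      have hmev : Even m := hd ▸ hde
      rw [if_pos hmev] at hb
      have ham : seqa f g u m = u := by rw [← h0]; rfl
      have hcons : seqa f g u (m-1) = seqa f g u m := by rw [hb, ham, hfu]
      have hstp := stp_of_consec (f := f) (g := g) (u := u) (i := m - 1) (by rwa [hmm])
      exact hns (m-1) (by omega) (by omega) hstp
    · -- odd gap
      rcases Nat.lt_or_ge d 2 with hd1 | hd3
      · have hd1' : d = 1 := by obtain ⟨c, hc⟩ := hdo; omega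
        have hk : k = i + 1 := by omega
        subst hk
        have hstp := stp_of_consec (f := f) (g := g) (u := u) (i := i) heq
        rcases Nat.eq_zero_or_pos i with h0 | h1
        · subst h0
          unfold stp at hstp
          rw [if_pos Even.zero] at hstp
          exact hgu hstp
        · exact hns i h1 (by omega) hstp
      · have hd3' : 3 ≤ d := by obtain ⟨c, hc⟩ := hdo; omega
        obtain ⟨k', rfl⟩ : ∃ k', k = k' + 1 := ⟨k - 1, by omega⟩
        have hb := seqa_back hf hg (u := u) k'
        have hstep : seqa f g u (i+1) = seqa f g u k' := by
          rw [seqa_fwd, hb, heq]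
          rcases Nat.even_or_odd i with he | ho
          · have h2 : ¬ Even (k'+1) := by
              obtain ⟨c, hc⟩ := he; obtain ⟨c2, hc2⟩ := hdo
              simp only [Nat.even_iff, Nat.not_even_iff] at *; omega
            rw [if_pos he, if_neg h2]
          · have h1 : ¬ Even i := Nat.not_even_iff_odd.mpr ho
            have h2 : Even (k'+1) := by
              obtain ⟨c, hc⟩ := ho; obtain ⟨c2, hc2⟩ := hdo
              simp only [Nat.even_iff, Nat.odd_iff] at *; omega
            rw [if_neg h1, if_pos h2]
        exact ih (d - 2) (by omega) (i+1) k' (by omega) (by omega) (by omega) hstep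

end Seq

section Exchange

def agr (f g : V → V) : Set V := {x | f x = g x ∧ f x ≠ x}

/-- swap two matchings along a set -/
noncomputable def swp (S : Set V) (g f : V → V) : V → V := fun x => if x ∈ S then g x else f x

lemma swp_pos {S : Set V} {g f : V → V} {x : V} (h : x ∈ S) : swp S g f x = g x := if_pos h

lemma swp_neg {S : Set V} {g f : V → V} {x : V} (h : x ∉ S) : swp S g f x = f x := if_neg h

variable {f g : V → V} {u : V}

theorem exchange (hf : IsIM H f) (hg : IsIM H g) (hfu : f u = u) (hgu : g u ≠ u) :
    (∃ f', IsIM H f' ∧ covs f' ⊆ covs f ∪ covs g ∧ (covs f').ncard = (covs f).ncard + 2) ∨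
    ∃ (S : Set V) (t : V),
      u ∈ S ∧ t ∈ S ∧ t ≠ u ∧ f t ≠ t ∧ g t = t ∧
      S ⊆ covs f ∪ covs g ∧
      (∀ x ∈ S, x ≠ u → f x ≠ x) ∧
      (∀ x ∈ S, x ≠ t → g x ≠ x) ∧
      IsIM H (swp S g f) ∧
      IsIM H (swp S f g) ∧
      covs (swp S g f) = insert u (covs f) \ {t} ∧
      covs (swp S f g) = insert t (covs g) \ {u} ∧
      agr f g ∩ S = ∅ ∧
      agr f (swp S f g) = agr f g ∪ (S \ {u}) := by
  obtain ⟨hf1, hf2⟩ := hf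
  obtain ⟨hg1, hg2⟩ := hg
  have hstop : ∃ j, 1 ≤ j ∧ stp f g u j ∧ ∀ i, 1 ≤ i → i < j → ¬ stp f g u i := by
    have hne : {j | 1 ≤ j ∧ stp f g u j}.Nonempty := by
      by_contra hc
      rw [Set.not_nonempty_iff_eq_empty, Set.eq_empty_iff_forall_notMem] at hc
      have hns : ∀ i, 1 ≤ i → ¬ stp f g u i := fun i h1 hs => hc i ⟨h1, hs⟩
      have hinj : Function.Injective
          (fun i : Fin (Fintype.card V + 1) => seqa f g u i.1) := by
        intro x y hxy
        by_contra hne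
        have hne' : x.1 ≠ y.1 := fun hc' => hne (Fin.ext hc')
        rcases hne'.lt_or_gt with h | h
        · exact seqa_inj hf1 hg1 hfu hgu (n := Fintype.card V)
            (fun i h1 h2 => hns i h1) (y.1 - x.1) x.1 y.1 rfl h (by omega) hxy
        · exact seqa_inj hf1 hg1 hfu hgu (n := Fintype.card V)
            (fun i h1 h2 => hns i h1) (x.1 - y.1) y.1 x.1 rfl h (by omega) hxy.symm
      have := Fintype.card_le_of_injective _ hinj
      simp at this
    refine ⟨sInf {j | 1 ≤ j ∧ stp f g u j}, (Nat.sInf_mem hne).1, (Nat.sInf_mem hne).2,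
      fun i h1 hlt hs => Nat.notMem_of_lt_sInf hlt ⟨h1, hs⟩⟩
  obtain ⟨j, hj1, hjs, hjmin⟩ := hstop
  have hinj : ∀ i k, i ≤ j → k ≤ j → i ≠ k → seqa f g u i ≠ seqa f g u k := by
    intro i k hij hkj hik
    rcases hik.lt_or_gt with h | h
    · exact seqa_inj hf1 hg1 hfu hgu (n := j) hjmin (k - i) i k rfl h hkj
    · exact fun hc => seqa_inj hf1 hg1 hfu hgu (n := j) hjmin (i - k) k i rfl h hij hc.symm
  have ha0 : seqa f g u 0 = u := rfl
  have hfa : ∀ i, 1 ≤ i → Even i → f (seqa f g u i) = seqa f g u (i - 1) := by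
    intro i h1 he
    have hb := seqa_back hf1 hg1 (u := u) (i - 1)
    have hred : i - 1 + 1 = i := by omega
    rw [hred, if_pos he] at hb
    exact hb.symm
  have hgb : ∀ i, 1 ≤ i → ¬ Even i → g (seqa f g u i) = seqa f g u (i - 1) := by
    intro i h1 ho
    have hb := seqa_back hf1 hg1 (u := u) (i - 1)
    have hred : i - 1 + 1 = i := by omega
    rw [hred, if_neg ho] at hb
    exact hb.symm
  have hga : ∀ i, Even i → g (seqa f g u i) = seqa f g u (i + 1) := by
    intro i he
    rw [seqa_fwd, if_pos he]
  have hfb : ∀ i, ¬ Even i → f (seqa f g u i) = seqa f g u (i + 1) := by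
    intro i ho
    rw [seqa_fwd, if_neg ho]
  set S : Set V := {x | ∃ i, i ≤ j ∧ seqa f g u i = x} with hS
  have huS : u ∈ S := ⟨0, by omega, rfl⟩
  have htS : seqa f g u j ∈ S := ⟨j, le_rfl, rfl⟩
  rcases Nat.even_or_odd j with hje | hjo
  · -- j even : exchange case
    have hjstop : g (seqa f g u j) = seqa f g u j := by
      have h := hjs; unfold stp at h; rwa [if_pos hje] at h
    have hj2 : 2 ≤ j := by
      rcases Nat.eq_or_lt_of_le hj1 with h | h
      · exfalso; rw [← h] at hje; simp [Nat.even_iff] at hje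
      · omega
    have htu : seqa f g u j ≠ u := by
      rw [← ha0]; exact hinj j 0 le_rfl (by omega) (by omega)
    have hft : f (seqa f g u j) ≠ seqa f g u j := by
      rw [hfa j hj1 hje]
      exact hinj (j-1) j (by omega) le_rfl (by omega)
    have hcovf : ∀ x ∈ S, x ≠ u → f x ≠ x := by
      rintro x ⟨i, hi, rfl⟩ hxu
      have hi1 : 1 ≤ i := by
        rcases Nat.eq_zero_or_pos i with h | h
        · exact absurd (h ▸ ha0) hxu
        · exact h
      rcases Nat.even_or_odd i with he | ho
      · rw [hfa i hi1 he]
        exact hinj (i-1) i (by omega) hi (by omega)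
      · have hij : i < j := by
          rcases Nat.eq_or_lt_of_le hi with h | h
          · exfalso; rw [h] at ho; exact (Nat.not_even_iff_odd.mpr ho) hje
          · exact h
        rw [hfb i (Nat.not_even_iff_odd.mpr ho)]
        exact hinj (i+1) i (by omega) (by omega) (by omega)
    have hcovg : ∀ x ∈ S, x ≠ seqa f g u j → g x ≠ x := by
      rintro x ⟨i, hi, rfl⟩ hxt
      have hij : i < j := by
        rcases Nat.eq_or_lt_of_le hi with h | h
        · exact absurd (by rw [h]) hxt
        · exact h
      rcases Nat.even_or_odd i with he | ho
      · rw [hga i he]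
        exact hinj (i+1) i (by omega) (by omega) (by omega)
      · have h1 : 1 ≤ i := by rcases ho with ⟨c, hc⟩; omega
        rw [hgb i h1 (Nat.not_even_iff_odd.mpr ho)]
        exact hinj (i-1) i (by omega) (by omega) (by omega)
    have hclf : ∀ x ∈ S, f x ∈ S := by
      rintro x ⟨i, hi, rfl⟩
      rcases Nat.eq_zero_or_pos i with h0 | h1
      · subst h0; rw [ha0, hfu]; exact huS
      rcases Nat.even_or_odd i with he | ho
      · rw [hfa i h1 he]; exact ⟨i-1, by omega, rfl⟩
      · have hij : i < j := by
          rcases Nat.eq_or_lt_of_le hi with h | h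
          · exfalso; rw [h] at ho; exact (Nat.not_even_iff_odd.mpr ho) hje
          · exact h
        rw [hfb i (Nat.not_even_iff_odd.mpr ho)]; exact ⟨i+1, by omega, rfl⟩
    have hclg : ∀ x ∈ S, g x ∈ S := by
      rintro x ⟨i, hi, rfl⟩
      rcases Nat.eq_or_lt_of_le hi with hij | hij
      · subst hij; rw [hjstop]; exact htS
      rcases Nat.even_or_odd i with he | ho
      · rw [hga i he]; exact ⟨i+1, by omega, rfl⟩
      · rw [hgb i (by rcases ho with ⟨c,hc⟩; omega) (Nat.not_even_iff_odd.mpr ho)]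
        exact ⟨i-1, by omega, rfl⟩
    have hsub : S ⊆ covs f ∪ covs g := by
      rintro x hx
      by_cases hxu : x = u
      · right; rw [hxu]; exact hgu
      · left; exact hcovf x hx hxu
    have hswf : IsIM H (swp S g f) := by
      constructor
      · intro v
        by_cases hv : v ∈ S
        · simp only [swp_pos hv, swp_pos (hclg v hv), hg1]
        · have hnv : f v ∉ S := fun hc => hv (by rw [← hf1 v]; exact hclf _ hc)
          simp only [swp_neg hv, swp_neg hnv, hf1]
      · intro v hv
        by_cases h : v ∈ S
        · rw [swp_pos h] at hv ⊢; exact hg2 v hv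
        · rw [swp_neg h] at hv ⊢; exact hf2 v hv
    have hswg : IsIM H (swp S f g) := by
      constructor
      · intro v
        by_cases hv : v ∈ S
        · simp only [swp_pos hv, swp_pos (hclf v hv), hf1]
        · have hnv : g v ∉ S := fun hc => hv (by rw [← hg1 v]; exact hclg _ hc)
          simp only [swp_neg hv, swp_neg hnv, hg1]
      · intro v hv
        by_cases h : v ∈ S
        · rw [swp_pos h] at hv ⊢; exact hf2 v hv
        · rw [swp_neg h] at hv ⊢; exact hg2 v hv
    have hcovswf : covs (swp S g f)
        = insert u (covs f) \ {seqa f g u j} := by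
      ext x
      simp only [covs, Set.mem_setOf_eq, Set.mem_diff, Set.mem_insert_iff, Set.mem_singleton_iff]
      by_cases hx : x ∈ S
      · rw [swp_pos hx]
        constructor
        · intro hgx
          refine ⟨?_, fun hxt => ?_⟩
          · by_cases hxu : x = u
            · exact Or.inl hxu
            · exact Or.inr (hcovf x hx hxu)
          · rw [hxt] at hgx; exact hgx hjstop
        · rintro ⟨_, hxt⟩
          exact hcovg x hx hxt
      · rw [swp_neg hx]
        constructor
        · intro hfx
          exact ⟨Or.inr hfx, fun hc => hx (hc ▸ htS)⟩
        · rintro ⟨h1, h2⟩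
          rcases h1 with h1 | h1
          · exact absurd (h1 ▸ huS) hx
          · exact h1
    have hcovswg : covs (swp S f g)
        = insert (seqa f g u j) (covs g) \ {u} := by
      ext x
      simp only [covs, Set.mem_setOf_eq, Set.mem_diff, Set.mem_insert_iff, Set.mem_singleton_iff]
      by_cases hx : x ∈ S
      · rw [swp_pos hx]
        constructor
        · intro hfx
          refine ⟨?_, fun hxu => ?_⟩
          · by_cases hxt : x = seqa f g u j
            · exact Or.inl hxt
            · exact Or.inr (hcovg x hx hxt)
          · rw [hxu] at hfx; exact hfx hfu
        · rintro ⟨_, hxu⟩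
          exact hcovf x hx hxu
      · rw [swp_neg hx]
        constructor
        · intro hgx
          exact ⟨Or.inr hgx, fun hc => hx (hc ▸ huS)⟩
        · rintro ⟨h1, h2⟩
          rcases h1 with h1 | h1
          · exact absurd (h1 ▸ htS) hx
          · exact h1
    have hagr1 : agr f g ∩ S = ∅ := by
      ext x
      simp only [agr, Set.mem_inter_iff, Set.mem_setOf_eq, Set.mem_empty_iff_false, iff_false,
        not_and]
      rintro ⟨hfg, hfx⟩ hx
      obtain ⟨i, hi, rfl⟩ := hx
      rcases Nat.eq_zero_or_pos i with h0 | h1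
      · apply hfx; subst h0; rw [ha0, hfu]
      rcases Nat.eq_or_lt_of_le hi with hij | hij
      · subst hij
        rw [hjstop] at hfg
        exact hft hfg
      rcases Nat.even_or_odd i with he | ho
      · rw [hfa i h1 he, hga i he] at hfg
        exact hinj (i-1) (i+1) (by omega) (by omega) (by omega) hfg
      · rw [hfb i (Nat.not_even_iff_odd.mpr ho), hgb i h1 (Nat.not_even_iff_odd.mpr ho)] at hfg
        exact hinj (i+1) (i-1) (by omega) (by omega) (by omega) hfg
    have hagr2 : agr f (swp S f g) = agr f g ∪ (S \ {u}) := by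
      ext x
      simp only [agr, Set.mem_setOf_eq, Set.mem_union, Set.mem_diff, Set.mem_singleton_iff]
      by_cases hx : x ∈ S
      · rw [swp_pos hx]
        constructor
        · rintro ⟨-, hfx⟩
          refine Or.inr ⟨hx, fun hxu => ?_⟩
          rw [hxu] at hfx; exact hfx hfu
        · rintro (⟨hfg, hfx⟩ | ⟨-, hxu⟩)
          · exact ⟨rfl, hfx⟩
          · exact ⟨rfl, hcovf x hx hxu⟩
      · rw [swp_neg hx]
        constructor
        · rintro ⟨hfg, hfx⟩; exact Or.inl ⟨hfg, hfx⟩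
        · rintro (⟨hfg, hfx⟩ | ⟨hxS, -⟩)
          · exact ⟨hfg, hfx⟩
          · exact absurd hxS hx
    exact Or.inr ⟨S, seqa f g u j, huS, htS, htu, hft, hjstop, hsub, hcovf, hcovg, hswf, hswg,
      hcovswf, hcovswg, hagr1, hagr2⟩
  · -- j odd : augmenting case
    have hjo' : ¬ Even j := Nat.not_even_iff_odd.mpr hjo
    have hjstop : f (seqa f g u j) = seqa f g u j := by
      have h := hjs; unfold stp at h; rwa [if_neg hjo'] at h
    have htu : seqa f g u j ≠ u := by
      rw [← ha0]; exact hinj j 0 le_rfl (by omega) (by omega)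
    have hgt : g (seqa f g u j) ≠ seqa f g u j := by
      rw [hgb j hj1 hjo']
      exact hinj (j-1) j (by omega) le_rfl (by omega)
    have hclf : ∀ x ∈ S, f x ∈ S := by
      rintro x ⟨i, hi, rfl⟩
      rcases Nat.eq_zero_or_pos i with h0 | h1
      · subst h0; rw [ha0, hfu]; exact huS
      rcases Nat.eq_or_lt_of_le hi with hij | hij
      · subst hij; rw [hjstop]; exact htS
      rcases Nat.even_or_odd i with he | ho
      · rw [hfa i h1 he]; exact ⟨i-1, by omega, rfl⟩
      · rw [hfb i (Nat.not_even_iff_odd.mpr ho)]; exact ⟨i+1, by omega, rfl⟩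
    have hclg : ∀ x ∈ S, g x ∈ S := by
      rintro x ⟨i, hi, rfl⟩
      rcases Nat.eq_zero_or_pos i with h0 | h1
      · subst h0; rw [hga 0 Even.zero]; exact ⟨1, by omega, rfl⟩
      rcases Nat.even_or_odd i with he | ho
      · have hij : i < j := by
          rcases Nat.eq_or_lt_of_le hi with h | h
          · exfalso; rw [h] at he; exact hjo' he
          · exact h
        rw [hga i he]; exact ⟨i+1, by omega, rfl⟩
      · rw [hgb i h1 (Nat.not_even_iff_odd.mpr ho)]; exact ⟨i-1, by omega, rfl⟩
    have hswf : IsIM H (swp S g f) := by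
      constructor
      · intro v
        by_cases hv : v ∈ S
        · simp only [swp_pos hv, swp_pos (hclg v hv), hg1]
        · have hnv : f v ∉ S := fun hc => hv (by rw [← hf1 v]; exact hclf _ hc)
          simp only [swp_neg hv, swp_neg hnv, hf1]
      · intro v hv
        by_cases h : v ∈ S
        · rw [swp_pos h] at hv ⊢; exact hg2 v hv
        · rw [swp_neg h] at hv ⊢; exact hf2 v hv
    have hcovgS : ∀ x ∈ S, g x ≠ x := by
      rintro x ⟨i, hi, rfl⟩
      rcases Nat.eq_zero_or_pos i with h0 | h1
      · subst h0; rw [ha0]; exact hgu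
      rcases Nat.even_or_odd i with he | ho
      · have hij : i < j := by
          rcases Nat.eq_or_lt_of_le hi with h | h
          · exfalso; rw [h] at he; exact hjo' he
          · exact h
        rw [hga i he]
        exact hinj (i+1) i (by omega) (by omega) (by omega)
      · rw [hgb i h1 (Nat.not_even_iff_odd.mpr ho)]
        exact hinj (i-1) i (by omega) (by omega) (by omega)
    have hcovfS : ∀ x ∈ S, x ≠ u → x ≠ seqa f g u j → f x ≠ x := by
      rintro x ⟨i, hi, rfl⟩ hxu hxt
      have h1 : 1 ≤ i := by
        rcases Nat.eq_zero_or_pos i with h | h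
        · exact absurd (h ▸ ha0) hxu
        · exact h
      have hij : i < j := by
        rcases Nat.eq_or_lt_of_le hi with h | h
        · exact absurd (by rw [h]) hxt
        · exact h
      rcases Nat.even_or_odd i with he | ho
      · rw [hfa i h1 he]
        exact hinj (i-1) i (by omega) (by omega) (by omega)
      · rw [hfb i (Nat.not_even_iff_odd.mpr ho)]
        exact hinj (i+1) i (by omega) (by omega) (by omega)
    have hcovswf : covs (swp S g f)
        = insert u (insert (seqa f g u j) (covs f)) := by
      ext x
      simp only [covs, Set.mem_setOf_eq, Set.mem_insert_iff]
      by_cases hx : x ∈ S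
      · rw [swp_pos hx]
        constructor
        · intro _
          by_cases hxu : x = u
          · exact Or.inl hxu
          by_cases hxt : x = seqa f g u j
          · exact Or.inr (Or.inl hxt)
          · exact Or.inr (Or.inr (hcovfS x hx hxu hxt))
        · intro _; exact hcovgS x hx
      · rw [swp_neg hx]
        constructor
        · intro h; exact Or.inr (Or.inr h)
        · rintro (h | h | h)
          · exact absurd (h ▸ huS) hx
          · exact absurd (h ▸ htS) hx
          · exact h
    have huf : u ∉ covs f := by simp [covs, hfu]
    have htf : seqa f g u j ∉ covs f := by simp [covs, hjstop]
    refine Or.inl ⟨(swp S g f), hswf, ?_, ?_⟩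
    · rw [hcovswf]
      rintro x (rfl | rfl | h)
      · exact Or.inr hgu
      · exact Or.inr hgt
      · exact Or.inl h
    · rw [hcovswf, Set.ncard_insert_of_notMem (by
        simp only [Set.mem_insert_iff, not_or]; exact ⟨Ne.symm htu, huf⟩) (Set.toFinite _),
        Set.ncard_insert_of_notMem htf (Set.toFinite _)]

end Exchange

section Basics

/-- add an edge between two exposed vertices -/
noncomputable def addE (f : V → V) (u w : V) : V → V :=
  fun x => if x = u then w else if x = w then u else f x

/-- expose the edge at `a` -/
noncomputable def rel1 (f : V → V) (a : V) : V → V :=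
  fun x => if x = a ∨ x = f a then x else f x

lemma addE_isIM {f : V → V} (hf : IsIM H f) {u w : V} (hu : f u = u) (hw : f w = w)
    (huw : u ≠ w) (hadj : H.Adj u w) : IsIM H (addE f u w) := by
  constructor
  · intro v
    unfold addE
    by_cases h1 : v = u
    · rw [if_pos h1, if_neg (Ne.symm huw), if_pos rfl]
      exact h1.symm
    by_cases h2 : v = w
    · rw [if_neg h1, if_pos h2, if_pos rfl]
      exact h2.symm
    · rw [if_neg h1, if_neg h2]
      have hfv1 : f v ≠ u := by
        intro hc; apply h1; rw [← hf.1 v, hc, hu]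
      have hfv2 : f v ≠ w := by
        intro hc; apply h2; rw [← hf.1 v, hc, hw]
      rw [if_neg hfv1, if_neg hfv2, hf.1]
  · intro v hv
    unfold addE at hv ⊢
    by_cases h1 : v = u
    · subst h1; rw [if_pos rfl] at hv ⊢; exact hadj
    by_cases h2 : v = w
    · subst h2; rw [if_neg h1, if_pos rfl] at hv ⊢; exact hadj.symm
    · rw [if_neg h1, if_neg h2] at hv ⊢; exact hf.2 v hv

lemma addE_covs {f : V → V} (hf : IsIM H f) {u w : V} (hu : f u = u) (hw : f w = w)
    (huw : u ≠ w) : covs (addE f u w) = insert u (insert w (covs f)) := by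
  ext x
  simp only [covs, Set.mem_setOf_eq, Set.mem_insert_iff, addE]
  by_cases h1 : x = u
  · subst h1; simp [huw, Ne.symm huw]
  by_cases h2 : x = w
  · subst h2; simp [h1, huw, Ne.symm huw]
  · rw [if_neg h1, if_neg h2]
    simp [h1, h2]

lemma rel1_fix1 {f : V → V} {a : V} : rel1 f a a = a := by
  unfold rel1; rw [if_pos (Or.inl rfl)]

lemma rel1_fix2 {f : V → V} {a : V} : rel1 f a (f a) = f a := by
  unfold rel1; rw [if_pos (Or.inr rfl)]

lemma rel1_fixed {f : V → V} {a x : V} (h : f x = x) : rel1 f a x = x := by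
  unfold rel1
  by_cases hc : x = a ∨ x = f a
  · rw [if_pos hc]
  · rw [if_neg hc]; exact h

lemma rel1_isIM {f : V → V} (hf : IsIM H f) (a : V) : IsIM H (rel1 f a) := by
  constructor
  · intro v
    unfold rel1
    by_cases h : v = a ∨ v = f a
    · rw [if_pos h, if_pos h]
    · rw [if_neg h]
      have hfv : ¬ (f v = a ∨ f v = f a) := by
        rintro (hc | hc)
        · exact h (Or.inr (by rw [← hc, hf.1]))
        · exact h (Or.inl (by rw [← hf.1 v, hc, hf.1]))
      rw [if_neg hfv, hf.1]
  · intro v hv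
    unfold rel1 at hv ⊢
    by_cases h : v = a ∨ v = f a
    · rw [if_pos h] at hv; exact absurd rfl hv
    · rw [if_neg h] at hv ⊢; exact hf.2 v hv

lemma rel1_covs {f : V → V} (hf : IsIM H f) {a : V} (ha : f a ≠ a) :
    covs (rel1 f a) = covs f \ {a, f a} := by
  ext x
  simp only [covs, Set.mem_setOf_eq, Set.mem_diff, Set.mem_insert_iff, Set.mem_singleton_iff,
    rel1]
  by_cases h : x = a ∨ x = f a
  · rw [if_pos h]; simp [h]
  · rw [if_neg h]
    push_neg at h
    simp [h.1, h.2]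

lemma covs_even {f : V → V} (hf : IsIM H f) : Even (covs f).ncard := by
  generalize hn : (covs f).ncard = n
  induction n using Nat.strong_induction_on generalizing f with
  | _ n ih =>
    rcases Set.eq_empty_or_nonempty (covs f) with h | ⟨v, hv⟩
    · rw [h] at hn; simp at hn; subst hn; exact Even.zero
    · have hfv : f v ≠ v := hv
      have hsub : {v, f v} ⊆ covs f := by
        rintro x (rfl | rfl)
        · exact hv
        · show f (f v) ≠ f v; rw [hf.1]; exact Ne.symm hfv
      have hcard2 : ({v, f v} : Set V).ncard = 2 :=
        Set.ncard_pair (Ne.symm hfv)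
      have hd := rel1_covs hf hfv
      have hn2 : (covs (rel1 f v)).ncard = n - 2 := by
        rw [hd, Set.ncard_diff hsub (Set.toFinite _), hcard2, hn]
      have hge : 2 ≤ n := by
        rw [← hn, ← hcard2]
        exact Set.ncard_le_ncard hsub (Set.toFinite _)
      obtain ⟨c, hc⟩ := ih (n-2) (by omega) (rel1_isIM hf v) hn2
      exact ⟨c + 1, by omega⟩

/-- the sets D and A relative to a vertex set -/
def Dse (H : SimpleGraph V) (S : Set V) : Set V :=
  {v | v ∈ S ∧ ∃ f, MaxIM H S f ∧ f v = v}

def Ase (H : SimpleGraph V) (S : Set V) : Set V :=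
  {v | v ∈ S ∧ v ∉ Dse H S ∧ ∃ u ∈ Dse H S, H.Adj v u}

lemma exists_maxIM (H : SimpleGraph V) (S : Set V) : ∃ f, MaxIM H S f := by
  set T : Set ℕ := {n | ∃ f, IsIM H f ∧ covs f ⊆ S ∧ (covs f).ncard = n} with hT
  have hne : T.Nonempty := ⟨0, id, ⟨fun v => rfl, fun v hv => absurd rfl hv⟩, by
    simp [covs], by simp [covs]⟩
  have hbdd : BddAbove T := by
    refine ⟨Fintype.card V, ?_⟩
    rintro n ⟨f, hf, hfS, rfl⟩
    calc (covs f).ncard ≤ (Set.univ : Set V).ncard :=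
          Set.ncard_le_ncard (Set.subset_univ _) (Set.toFinite _)
      _ = Fintype.card V := by rw [Set.ncard_univ, Nat.card_eq_fintype_card]
  obtain ⟨f, hf, hfS, hfn⟩ := Nat.sSup_mem hne hbdd
  exact ⟨f, hf, hfS, fun g hg hgS => by
    rw [hfn]
    exact le_csSup hbdd ⟨g, hg, hgS, rfl⟩⟩

lemma maxIM_ncard_eq {S : Set V} {f g : V → V} (hf : MaxIM H S f) (hg : MaxIM H S g) :
    (covs f).ncard = (covs g).ncard :=
  le_antisymm (hg.2.2 f hf.1 hf.2.1) (hf.2.2 g hg.1 hg.2.1)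

lemma maxIM_of_ncard {S : Set V} {f g : V → V} (hf : MaxIM H S f) (hg : IsIM H g)
    (hgS : covs g ⊆ S) (hn : (covs g).ncard = (covs f).ncard) : MaxIM H S g :=
  ⟨hg, hgS, fun h hh hhS => by rw [hn]; exact hf.2.2 h hh hhS⟩

lemma covered_of_not_mem_Dse {S : Set V} {f : V → V} (hf : MaxIM H S f) {v : V}
    (hv : v ∈ S) (hvd : v ∉ Dse H S) : f v ≠ v := by
  intro hc
  exact hvd ⟨hv, f, hf, hc⟩

lemma Dse_subset {S : Set V} : Dse H S ⊆ S := fun v hv => hv.1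

lemma Ase_subset {S : Set V} : Ase H S ⊆ S := fun v hv => hv.1

lemma ncard_insert_diff {A : Set V} {u t : V} (hu : u ∉ A) (ht : t ∈ A) (htu : t ≠ u) :
    ((insert u A) \ {t}).ncard = A.ncard := by
  have h1 : ({t} : Set V) ⊆ insert u A := by
    rintro x rfl; exact Set.mem_insert_of_mem _ ht
  rw [Set.ncard_diff h1 (Set.toFinite _), Set.ncard_insert_of_notMem hu (Set.toFinite _),
    Set.ncard_singleton]
  omega

/-- restriction of a matching to a vertex set -/
noncomputable def rstr (f : V → V) (T : Set V) : V → V :=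
  fun x => if x ∈ T ∧ f x ∈ T then f x else x

/-- combination of two matchings -/
noncomputable def cmb (g₁ g₂ : V → V) : V → V :=
  fun x => if g₁ x ≠ x then g₁ x else g₂ x

lemma rstr_isIM {f : V → V} (hf : IsIM H f) (T : Set V) : IsIM H (rstr f T) := by
  constructor
  · intro v
    unfold rstr
    by_cases h : v ∈ T ∧ f v ∈ T
    · rw [if_pos h]
      have h2 : f v ∈ T ∧ f (f v) ∈ T := ⟨h.2, by rw [hf.1]; exact h.1⟩
      rw [if_pos h2, hf.1]
    · rw [if_neg h, if_neg h]
  · intro v hv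
    unfold rstr at hv ⊢
    by_cases h : v ∈ T ∧ f v ∈ T
    · rw [if_pos h] at hv ⊢; exact hf.2 v hv
    · rw [if_neg h] at hv; exact absurd rfl hv

lemma rstr_covs {f : V → V} (T : Set V) :
    covs (rstr f T) = {x | x ∈ covs f ∧ x ∈ T ∧ f x ∈ T} := by
  ext x
  simp only [covs, Set.mem_setOf_eq, rstr]
  by_cases h : x ∈ T ∧ f x ∈ T
  · rw [if_pos h]; exact ⟨fun hx => ⟨hx, h⟩, fun hx => hx.1⟩
  · rw [if_neg h]; simp [h]

lemma cmb_isIM {g₁ g₂ : V → V} (hg₁ : IsIM H g₁) (hg₂ : IsIM H g₂)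
    (hd : Disjoint (covs g₁) (covs g₂)) : IsIM H (cmb g₁ g₂) := by
  have key1 : ∀ x, x ∈ covs g₂ → g₁ x = x := by
    intro x hx
    by_contra hc
    exact Set.disjoint_left.mp hd hc hx
  constructor
  · intro v
    unfold cmb
    by_cases h : g₁ v ≠ v
    · rw [if_pos h]
      have h2 : g₁ (g₁ v) ≠ g₁ v := by rw [hg₁.1]; exact Ne.symm h
      rw [if_pos h2, hg₁.1]
    · rw [if_neg h]
      by_cases h2 : g₂ v = v
      · rw [h2, if_neg h, h2]
      · have hcov : g₂ v ∈ covs g₂ := by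
          show g₂ (g₂ v) ≠ g₂ v
          rw [hg₂.1]; exact Ne.symm h2
        have : ¬ (g₁ (g₂ v) ≠ g₂ v) := by
          rw [key1 _ hcov]; exact fun hc => hc rfl
        rw [if_neg this, hg₂.1]
  · intro v hv
    unfold cmb at hv ⊢
    by_cases h : g₁ v ≠ v
    · rw [if_pos h] at hv ⊢; exact hg₁.2 v h
    · rw [if_neg h] at hv ⊢; exact hg₂.2 v hv

lemma cmb_covs {g₁ g₂ : V → V} : covs (cmb g₁ g₂) = covs g₁ ∪ covs g₂ := by
  ext x
  simp only [covs, Set.mem_setOf_eq, Set.mem_union, cmb]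
  by_cases h : g₁ x ≠ x
  · rw [if_pos h]; exact ⟨fun _ => Or.inl h, fun _ => h⟩
  · rw [if_neg h]
    constructor
    · intro hx; exact Or.inr hx
    · rintro (hx | hx)
      · exact absurd hx h
      · exact hx

section Split

variable {S₁ S₂ : Set V}

/-- closure of covered sets in a separated union -/
lemma split_closure (hsep : ∀ x ∈ S₁, ∀ y ∈ S₂, ¬ H.Adj x y)
    {f : V → V} (hf : IsIM H f) (hfS : covs f ⊆ S₁ ∪ S₂) :
    ∀ x ∈ covs f, x ∈ S₁ → f x ∈ S₁ := by
  intro x hx hx1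
  have hfx : f x ∈ covs f := by
    show f (f x) ≠ f x
    rw [hf.1]; exact Ne.symm hx
  rcases hfS hfx with h | h
  · exact h
  · exact absurd (hf.2 x hx) (hsep x hx1 (f x) h)

lemma split_rstr_covs (hsep : ∀ x ∈ S₁, ∀ y ∈ S₂, ¬ H.Adj x y)
    (hdisj : Disjoint S₁ S₂)
    {f : V → V} (hf : IsIM H f) (hfS : covs f ⊆ S₁ ∪ S₂) :
    covs (rstr f S₁) = covs f ∩ S₁ ∧ covs (rstr f S₂) = covs f ∩ S₂ := by
  constructor
  · rw [rstr_covs]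
    ext x
    simp only [Set.mem_setOf_eq, Set.mem_inter_iff]
    exact ⟨fun h => ⟨h.1, h.2.1⟩, fun h => ⟨h.1, h.2, split_closure hsep hf hfS x h.1 h.2⟩⟩
  · rw [rstr_covs]
    ext x
    simp only [Set.mem_setOf_eq, Set.mem_inter_iff]
    refine ⟨fun h => ⟨h.1, h.2.1⟩, fun h => ⟨h.1, h.2, ?_⟩⟩
    have hfx : f x ∈ covs f := by
      show f (f x) ≠ f x
      rw [hf.1]; exact Ne.symm h.1
    rcases hfS hfx with h2 | h2
    · exact absurd (hf.2 x h.1).symm (hsep (f x) h2 x h.2)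
    · exact h2

lemma split_ncard (hsep : ∀ x ∈ S₁, ∀ y ∈ S₂, ¬ H.Adj x y) (hdisj : Disjoint S₁ S₂)
    {f : V → V} (hf : IsIM H f) (hfS : covs f ⊆ S₁ ∪ S₂) :
    (covs f).ncard = (covs (rstr f S₁)).ncard + (covs (rstr f S₂)).ncard := by
  obtain ⟨h1, h2⟩ := split_rstr_covs hsep hdisj hf hfS
  rw [h1, h2, ← Set.ncard_union_eq (hdisj.mono Set.inter_subset_right Set.inter_subset_right)
    (Set.toFinite _) (Set.toFinite _), ← Set.inter_union_distrib_left,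
    Set.inter_eq_self_of_subset_left hfS]

lemma split_maxIM (hsep : ∀ x ∈ S₁, ∀ y ∈ S₂, ¬ H.Adj x y) (hdisj : Disjoint S₁ S₂)
    {f : V → V} (hf : MaxIM H (S₁ ∪ S₂) f) : MaxIM H S₁ (rstr f S₁) := by
  obtain ⟨hc1, hc2⟩ := split_rstr_covs hsep hdisj hf.1 hf.2.1
  refine ⟨rstr_isIM hf.1 S₁, by rw [hc1]; exact Set.inter_subset_right, ?_⟩
  intro g hg hgS
  by_contra hlt
  push_neg at hlt
  have hd : Disjoint (covs g) (covs (rstr f S₂)) := by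
    rw [hc2]
    exact (hdisj.mono hgS Set.inter_subset_right)
  have hcomb := cmb_isIM hg (rstr_isIM hf.1 S₂) hd
  have hcombS : covs (cmb g (rstr f S₂)) ⊆ S₁ ∪ S₂ := by
    rw [cmb_covs, hc2]
    exact Set.union_subset (hgS.trans Set.subset_union_left)
      (Set.inter_subset_right.trans Set.subset_union_right)
  have := hf.2.2 _ hcomb hcombS
  rw [cmb_covs, Set.ncard_union_eq hd (Set.toFinite _) (Set.toFinite _),
    split_ncard hsep hdisj hf.1 hf.2.1] at this
  omega

lemma split_Dse (hsep : ∀ x ∈ S₁, ∀ y ∈ S₂, ¬ H.Adj x y) (hdisj : Disjoint S₁ S₂)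
    {v : V} (hv : v ∈ S₁) : v ∈ Dse H S₁ ↔ v ∈ Dse H (S₁ ∪ S₂) := by
  constructor
  · rintro ⟨-, g₁, hg₁, hg₁v⟩
    obtain ⟨f, hf⟩ := exists_maxIM H (S₁ ∪ S₂)
    have hf2 : MaxIM H S₂ (rstr f S₂) := by
      have hsep' : ∀ x ∈ S₂, ∀ y ∈ S₁, ¬ H.Adj x y := fun x hx y hy hadj =>
        hsep y hy x hx hadj.symm
      have := split_maxIM (S₁ := S₂) (S₂ := S₁) hsep' hdisj.symm
        (by rwa [Set.union_comm] at hf)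
      exact this
    have hd : Disjoint (covs g₁) (covs (rstr f S₂)) :=
      (hdisj.mono hg₁.2.1 hf2.2.1)
    refine ⟨Set.mem_union_left _ hv, cmb g₁ (rstr f S₂), ⟨cmb_isIM hg₁.1 hf2.1 hd, ?_, ?_⟩, ?_⟩
    · rw [cmb_covs]
      exact Set.union_subset (hg₁.2.1.trans Set.subset_union_left)
        (hf2.2.1.trans Set.subset_union_right)
    · intro h hh hhS
      rw [cmb_covs, Set.ncard_union_eq hd (Set.toFinite _) (Set.toFinite _)]
      have hsplit := split_ncard hsep hdisj hh hhS
      have hr1 : (covs (rstr h S₁)).ncard ≤ (covs g₁).ncard :=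
        hg₁.2.2 _ (rstr_isIM hh S₁) (by rw [rstr_covs]; intro x hx; exact hx.2.1)
      have hr2 : (covs (rstr h S₂)).ncard ≤ (covs (rstr f S₂)).ncard :=
        hf2.2.2 _ (rstr_isIM hh S₂) (by rw [rstr_covs]; intro x hx; exact hx.2.1)
      omega
    · show (if g₁ v ≠ v then g₁ v else rstr f S₂ v) = v
      rw [if_neg (by rw [hg₁v]; exact fun hc => hc rfl)]
      by_contra hc
      have : v ∈ covs (rstr f S₂) := hc
      rw [(split_rstr_covs hsep hdisj hf.1 hf.2.1).2] at this
      exact Set.disjoint_left.mp hdisj hv this.2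
  · rintro ⟨-, f, hf, hfv⟩
    refine ⟨hv, rstr f S₁, split_maxIM hsep hdisj hf, ?_⟩
    show (if v ∈ S₁ ∧ f v ∈ S₁ then f v else v) = v
    by_cases h : v ∈ S₁ ∧ f v ∈ S₁
    · rw [if_pos h, hfv]
    · rw [if_neg h]

end Split

end Basics

section Gallai

lemma rtg_chain {α : Type*} {r : α → α → Prop} {u w : α} (h : Relation.ReflTransGen r u w) :
    ∃ n, ∃ c : ℕ → α, c 0 = u ∧ c n = w ∧ ∀ i < n, r (c i) (c (i+1)) := by
  induction h with
  | refl => exact ⟨0, fun _ => u, rfl, rfl, by omega⟩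
  | @tail b d hab hbd ih =>
    obtain ⟨n, c, hc0, hcn, hce⟩ := ih
    refine ⟨n+1, fun i => if i ≤ n then c i else d, by simp [hc0], by simp, ?_⟩
    intro i hi
    rcases Nat.lt_or_ge i n with h1 | h1
    · simp only [if_pos (by omega : i ≤ n), if_pos (by omega : i + 1 ≤ n)]
      exact hce i h1
    · have hin : i = n := by omega
      subst hin
      simp only [if_pos (le_refl i), if_neg (by omega : ¬ i + 1 ≤ i), hcn]
      exact hbd

/-- a violating configuration : maximum matching missing two ends of a chain of length n -/
def ChP (H : SimpleGraph V) (S : Set V) (n : ℕ) : Prop :=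
  ∃ f u w, ∃ c : ℕ → V, MaxIM H S f ∧ u ≠ w ∧ f u = u ∧ f w = w ∧
    c 0 = u ∧ c n = w ∧ ∀ i < n, c i ∈ S ∧ c (i+1) ∈ S ∧ H.Adj (c i) (c (i+1))

lemma gallai_no_chain {S : Set V} (hD : ∀ v ∈ S, v ∈ Dse H S) :
    ∀ n, ¬ ChP H S n := by
  by_contra hc
  push_neg at hc
  obtain ⟨n0, hn0⟩ := hc
  have hne : {n | ChP H S n}.Nonempty := ⟨n0, hn0⟩
  set N := sInf {n | ChP H S n} with hN
  have hmem : ChP H S N := Nat.sInf_mem hne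
  have hmin : ∀ m, m < N → ¬ ChP H S m := fun m hm hcm =>
    Nat.notMem_of_lt_sInf hm hcm
  obtain ⟨f, u, w, c, hf, huw, hfu, hfw, hc0, hcN, hce⟩ := hmem
  -- N = 0 impossible
  rcases Nat.eq_zero_or_pos N with h0 | h1
  · apply huw; rw [← hc0, ← hcN, h0]
  have huS : u ∈ S := by rw [← hc0]; exact (hce 0 h1).1
  -- N = 1 : augment directly
  rcases Nat.lt_or_ge N 2 with h2 | h2
  · have hN1 : N = 1 := by omega
    have hadj : H.Adj u w := by
      have h := (hce 0 h1).2.2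
      rw [hc0, show (0:ℕ)+1 = N from by omega, hcN] at h
      exact h
    have hbig := hf.2.2 (addE f u w) (addE_isIM hf.1 hfu hfw huw hadj) (by
      rw [addE_covs hf.1 hfu hfw huw]
      intro x hx
      rcases hx with rfl | rfl | hx
      · exact huS
      · have hh := (hce 0 h1).2.1
        rw [show (0:ℕ)+1 = N from by omega, hcN] at hh
        exact hh
      · exact hf.2.1 hx)
    rw [addE_covs hf.1 hfu hfw huw,
      Set.ncard_insert_of_notMem (by
        simp only [Set.mem_insert_iff, not_or]
        exact ⟨huw, by simp [covs, hfu]⟩) (Set.toFinite _),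
      Set.ncard_insert_of_notMem (by simp [covs, hfw]) (Set.toFinite _)] at hbig
    omega
  -- N ≥ 2
  set z := c 1 with hz
  have hzS : z ∈ S := (hce 0 h1).2.1
  have hwS : w ∈ S := by
    have hh := (hce (N-1) (by omega)).2.1
    rw [show N-1+1 = N from by omega, hcN] at hh
    exact hh
  have hadjuz : H.Adj u z := by
    have := (hce 0 h1).2.2; rwa [hc0] at this
  have huz : u ≠ z := hadjuz.ne
  have hfz : f z ≠ z := by
    intro hcz
    exact hmin 1 (by omega) ⟨f, u, z, fun i => if i = 0 then u else z, hf, huz, hfu, hcz,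
      by simp, by simp, fun i hi => by
        have : i = 0 := by omega
        subst this
        simp [huS, hzS, hadjuz]⟩
  -- choose a max matching missing z with maximal agreement with f
  have hTne : {m | ∃ g, (MaxIM H S g ∧ g z = z) ∧ (agr f g).ncard = m}.Nonempty := by
    obtain ⟨-, g, hg, hgz⟩ := hD z hzS
    exact ⟨(agr f g).ncard, g, ⟨hg, hgz⟩, rfl⟩
  have hTbdd : BddAbove {m | ∃ g, (MaxIM H S g ∧ g z = z) ∧ (agr f g).ncard = m} := by
    refine ⟨Fintype.card V, ?_⟩
    rintro m ⟨g, -, rfl⟩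
    calc (agr f g).ncard ≤ (Set.univ : Set V).ncard :=
          Set.ncard_le_ncard (Set.subset_univ _) (Set.toFinite _)
      _ = Fintype.card V := by rw [Set.ncard_univ, Nat.card_eq_fintype_card]
  have hmem' := Nat.sSup_mem hTne hTbdd
  simp only [Set.mem_setOf_eq] at hmem'
  obtain ⟨g, ⟨hg, hgz⟩, hgm⟩ := hmem'
  have hgmax : ∀ g', MaxIM H S g' → g' z = z → (agr f g').ncard ≤ (agr f g).ncard := by
    intro g' hg' hg'z
    rw [hgm]
    exact le_csSup hTbdd ⟨g', ⟨hg', hg'z⟩, rfl⟩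
  clear hgm
  have hgu : g u ≠ u := by
    intro hcu
    exact hmin 1 (by omega) ⟨g, u, z, fun i => if i = 0 then u else z, hg, huz, hcu, hgz,
      by simp, by simp, fun i hi => by
        have : i = 0 := by omega
        subst this
        simp [huS, hzS, hadjuz]⟩
  rcases exchange hf.1 hg.1 hfu hgu with ⟨f', hf', hf'sub, hf'n⟩ |
    ⟨P, t, huP, htP, htu, hft, hgt, hPsub, hPf, hPg, hswf, hswg, hcovswf, hcovswg, hagr1, hagr2⟩
  · have := hf.2.2 f' hf' (hf'sub.trans (Set.union_subset hf.2.1 hg.2.1))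
    omega
  by_cases htz : t = z
  · -- t = z : swap f along the path, miss z instead of u
    subst htz
    have hf2 : MaxIM H S (swp P g f) := by
      apply maxIM_of_ncard hf hswf
      · rw [hcovswf]
        intro x hx
        rcases hx.1 with rfl | hx1
        · exact huS
        · exact hf.2.1 hx1
      · rw [hcovswf]
        exact ncard_insert_diff (by simp [covs, hfu]) hft htu
    have hwP : w ∉ P := by
      intro hwP
      rcases eq_or_ne w u with rfl | hwu
      · exact huw rfl
      · exact hPf w hwP hwu hfw
    have hf2w : swp P g f w = w := by rw [swp_neg hwP]; exact hfw
    have hf2z : swp P g f z = z := by rw [swp_pos htP]; exact hgt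
    have hzw : z ≠ w := by
      intro hc; rw [hc] at hft; exact hft hfw
    exact hmin (N-1) (by omega) ⟨swp P g f, z, w, fun i => c (i+1), hf2, hzw, hf2z, hf2w,
      rfl, by show c (N-1+1) = w; rw [show N-1+1 = N from by omega, hcN], fun i hi => by
        have h := hce (i+1) (by omega)
        exact ⟨h.1, h.2.1, h.2.2⟩⟩
  · -- t ≠ z : improve agreement, contradiction with maximality
    have hzP : z ∉ P := fun h => (hPg z h (fun hc => htz hc.symm)) hgz
    have hg2 : MaxIM H S (swp P f g) := by
      apply maxIM_of_ncard hg hswg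
      · rw [hcovswg]
        intro x hx
        rcases hx.1 with rfl | hx1
        · exact hf.2.1 hft
        · exact hg.2.1 hx1
      · rw [hcovswg]
        exact ncard_insert_diff (by simp [covs, hgt]) hgu (Ne.symm htu)
    have hg2z : swp P f g z = z := by rw [swp_neg hzP]; exact hgz
    have hlt : (agr f g).ncard < (agr f (swp P f g)).ncard := by
      rw [hagr2, Set.ncard_union_eq (by
        rw [Set.disjoint_right]
        intro x hx hax
        have : x ∈ agr f g ∩ P := ⟨hax, hx.1⟩
        rw [hagr1] at this
        exact this) (Set.toFinite _) (Set.toFinite _)]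
      have : 0 < (P \ {u}).ncard := by
        rw [Set.ncard_pos (Set.toFinite _)]
        exact ⟨t, htP, htu⟩
      omega
    have hle : (agr f (swp P f g)).ncard ≤ (agr f g).ncard := hgmax _ hg2 hg2z
    omega

theorem gallai {S : Set V} (hD : ∀ v ∈ S, v ∈ Dse H S) (hne : S.Nonempty)
    (hconn : ∀ u ∈ S, ∀ w ∈ S,
      Relation.ReflTransGen (fun x y => x ∈ S ∧ y ∈ S ∧ H.Adj x y) u w)
    {f : V → V} (hf : MaxIM H S f) : ∃! z, z ∈ S ∧ f z = z := by
  -- existence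
  obtain ⟨v₀, hv₀⟩ := hne
  have hex : ∃ z ∈ S, f z = z := by
    by_contra hcov
    push_neg at hcov
    have hcovS : covs f = S := by
      apply Set.Subset.antisymm hf.2.1
      intro x hx
      exact hcov x hx
    obtain ⟨-, g, hg, hgv⟩ := hD v₀ hv₀
    have hgsub : covs g ⊆ S \ {v₀} := by
      intro x hx
      refine ⟨hg.2.1 hx, fun hc => ?_⟩
      rw [Set.mem_singleton_iff] at hc
      subst hc
      exact hx hgv
    have h1 : (covs g).ncard < (covs f).ncard := by
      rw [hcovS]
      calc (covs g).ncard ≤ (S \ {v₀}).ncard :=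
            Set.ncard_le_ncard hgsub (Set.toFinite _)
        _ < S.ncard := Set.ncard_lt_ncard (by
            constructor
            · exact Set.diff_subset
            · intro hsub
              exact (hsub hv₀).2 rfl) (Set.toFinite _)
    have h2 := hg.2.2 f hf.1 hf.2.1
    omega
  obtain ⟨z, hzS, hfz⟩ := hex
  refine ⟨z, ⟨hzS, hfz⟩, ?_⟩
  rintro y ⟨hyS, hfy⟩
  by_contra hyz
  exact gallai_no_chain hD (rtg_chain (hconn y hyS z hzS)).choose
    ⟨f, y, z, (rtg_chain (hconn y hyS z hzS)).choose_spec.choose, hf, hyz, hfy, hfz,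
      (rtg_chain (hconn y hyS z hzS)).choose_spec.choose_spec.1,
      (rtg_chain (hconn y hyS z hzS)).choose_spec.choose_spec.2.1,
      fun i hi => (rtg_chain (hconn y hyS z hzS)).choose_spec.choose_spec.2.2 i hi⟩

end Gallai

section Stability

variable {S : Set V} {a : V}

lemma maxIM_covers_not_Dse (hv : a ∈ S) (hvd : a ∉ Dse H S) {f : V → V}
    (hf : MaxIM H S f) : f a ≠ a :=
  covered_of_not_mem_Dse hf hv hvd

lemma Ase_not_Dse (ha : a ∈ Ase H S) : a ∉ Dse H S := ha.2.1

/-- deleting a vertex of `A` : the matching number drops by exactly one edge -/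
lemma stability_nu (ha : a ∈ Ase H S) {f : V → V} (hf : MaxIM H S f) :
    MaxIM H (S \ {a}) (rel1 f a) ∧
      ∀ f', IsIM H f' → covs f' ⊆ S \ {a} → (covs f').ncard + 2 ≤ (covs f).ncard := by
  have hfa : f a ≠ a := maxIM_covers_not_Dse ha.1 ha.2.1 hf
  have hsub2 : {a, f a} ⊆ covs f := by
    rintro x (rfl | rfl)
    · exact hfa
    · show f (f a) ≠ f a; rw [hf.1.1]; exact Ne.symm hfa
  have hrc : covs (rel1 f a) = covs f \ {a, f a} := rel1_covs hf.1 hfa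
  have hrn : (covs (rel1 f a)).ncard = (covs f).ncard - 2 := by
    rw [hrc, Set.ncard_diff hsub2 (Set.toFinite _), Set.ncard_pair (Ne.symm hfa)]
  have hge2 : 2 ≤ (covs f).ncard := by
    calc 2 = ({a, f a} : Set V).ncard := (Set.ncard_pair (Ne.symm hfa)).symm
      _ ≤ (covs f).ncard := Set.ncard_le_ncard hsub2 (Set.toFinite _)
  have hbound : ∀ f', IsIM H f' → covs f' ⊆ S \ {a} →
      (covs f').ncard + 2 ≤ (covs f).ncard := by
    intro f' hf' hf'S
    have hle : (covs f').ncard ≤ (covs f).ncard :=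
      hf.2.2 f' hf' (hf'S.trans Set.diff_subset)
    rcases Nat.eq_or_lt_of_le hle with heq | hlt
    · exfalso
      have hmax' : MaxIM H S f' := maxIM_of_ncard hf hf' (hf'S.trans Set.diff_subset) heq
      have : a ∈ Dse H S := ⟨ha.1, f', hmax', by
        by_contra hc
        exact (hf'S hc).2 rfl⟩
      exact ha.2.1 this
    · obtain ⟨c1, hc1⟩ := covs_even hf'
      obtain ⟨c2, hc2⟩ := covs_even hf.1
      omega
  refine ⟨⟨rel1_isIM hf.1 a, ?_, ?_⟩, hbound⟩
  · rw [hrc]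
    intro x hx
    refine ⟨hf.2.1 hx.1, fun hc => ?_⟩
    rw [Set.mem_singleton_iff] at hc
    exact hx.2 (Or.inl hc)
  · intro g hg hgS
    have := hbound g hg hgS
    omega

lemma stability_Dse (ha : a ∈ Ase H S) : Dse H (S \ {a}) = Dse H S := by
  obtain ⟨haS, haD, u₀, hu₀D, hadj₀⟩ := ha
  have hau₀ : a ≠ u₀ := fun hc => haD (hc ▸ hu₀D)
  obtain ⟨fS, hfS⟩ := exists_maxIM H S
  obtain ⟨hrmax, hbound⟩ := stability_nu ⟨haS, haD, u₀, hu₀D, hadj₀⟩ hfS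
  have hnu' : (covs (rel1 fS a)).ncard + 2 = (covs fS).ncard := by
    have h1 := hbound (rel1 fS a) hrmax.1 hrmax.2.1
    have hfa : fS a ≠ a := maxIM_covers_not_Dse haS haD hfS
    have hrn : (covs (rel1 fS a)).ncard = (covs fS).ncard - 2 := by
      rw [rel1_covs hfS.1 hfa, Set.ncard_diff (by
        rintro x (rfl | rfl)
        · exact hfa
        · show fS (fS a) ≠ fS a; rw [hfS.1.1]; exact Ne.symm hfa) (Set.toFinite _),
        Set.ncard_pair (Ne.symm hfa)]
    omega
  ext v
  constructor
  · -- hard direction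
    rintro ⟨hvS', M', hM', hM'v⟩
    have hvS : v ∈ S := hvS'.1
    have hva : v ≠ a := hvS'.2
    have hM'n : (covs M').ncard = (covs (rel1 fS a)).ncard := maxIM_ncard_eq hM' hrmax
    by_cases hvu : v = u₀
    · exact hvu ▸ hu₀D
    have hM'a : M' a = a := by
      by_contra hc
      exact (hM'.2.1 hc).2 rfl
    by_cases hMu : M' u₀ = u₀
    · -- just add the edge a-u₀
      have hF := addE_isIM hM'.1 hM'a hMu hau₀ hadj₀
      have hFc := addE_covs hM'.1 hM'a hMu hau₀
      have hFsub : covs (addE M' a u₀) ⊆ S := by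
        rw [hFc]
        rintro x (rfl | rfl | hx)
        · exact haS
        · exact hu₀D.1
        · exact (hM'.2.1 hx).1
      have hFn : (covs (addE M' a u₀)).ncard = (covs fS).ncard := by
        rw [hFc, Set.ncard_insert_of_notMem (by
            simp only [Set.mem_insert_iff, not_or]
            refine ⟨hau₀, fun hc => (hM'.2.1 hc).2 rfl⟩) (Set.toFinite _),
          Set.ncard_insert_of_notMem (by simp [covs, hMu]) (Set.toFinite _), hM'n]
        omega
      refine ⟨hvS, addE M' a u₀, maxIM_of_ncard hfS hF hFsub hFn, ?_⟩
      unfold addE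
      rw [if_neg hva, if_neg hvu]
      exact hM'v
    · -- u₀ is matched by M' : use the exchange lemma
      obtain ⟨N, hN, hNu⟩ := hu₀D.2
      have hNa : N a ≠ a := maxIM_covers_not_Dse haS haD hN
      obtain ⟨hN'max, -⟩ := stability_nu ⟨haS, haD, u₀, hu₀D, hadj₀⟩ hN
      set N' := rel1 N a with hN'
      have hxu : N a ≠ u₀ := by
        intro hc
        have : N u₀ = a := by rw [← hc, hN.1.1]
        rw [hNu] at this
        exact hau₀ this.symm
      have hN'u : N' u₀ = u₀ := by
        rw [hN']; exact rel1_fixed hNu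
      have hN'x : N' (N a) = N a := by
        rw [hN']; exact rel1_fix2
      have hN'n : (covs N').ncard = (covs (rel1 fS a)).ncard := maxIM_ncard_eq hN'max hrmax
      rcases exchange hN'max.1 hM'.1 hN'u hMu with ⟨f', hf', hf'sub, hf'n⟩ |
        ⟨P, t, huP, htP, htu, hft, hgt, hPsub, hPf, hPg, hswf, hswg, hcovswf, hcovswg, -, -⟩
      · exfalso
        have hsub : covs f' ⊆ S \ {a} :=
          hf'sub.trans (Set.union_subset hN'max.2.1 hM'.2.1)
        have := hbound f' hf' hsub
        omega
      have htcov : N' t ≠ t := hft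
      have htS' : t ∈ S \ {a} := hN'max.2.1 htcov
      have hu₀cov : M' u₀ ≠ u₀ := hMu
      by_cases hvt : v = t
      · -- v = t : swap N' along the path and re-add the edge a - N a
        subst hvt
        have hxP : N a ∉ P := by
          intro hc
          exact (hPf (N a) hc hxu) hN'x
        have hswfS : covs (swp P M' N') ⊆ S \ {a} := by
          rw [hcovswf]
          rintro x ⟨h1, -⟩
          rcases h1 with rfl | h1
          · exact ⟨hu₀D.1, Ne.symm hau₀⟩
          · exact hN'max.2.1 h1
        have hswfa : swp P M' N' a = a := by
          rw [swp_neg (fun hc => ((Set.union_subset hN'max.2.1 hM'.2.1) (hPsub hc)).2 rfl)]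
          rw [hN']; exact rel1_fix1
        have hswfx : swp P M' N' (N a) = N a := by
          rw [swp_neg hxP]
          exact hN'x
        have hswfcard : (covs (swp P M' N')).ncard = (covs N').ncard := by
          rw [hcovswf]
          exact ncard_insert_diff (by simp [covs, hN'u]) htcov htu
        have haxadj : H.Adj a (N a) := hN.1.2 a hNa
        have hF := addE_isIM hswf hswfa hswfx (Ne.symm hNa) haxadj
        have hFc := addE_covs hswf hswfa hswfx (Ne.symm hNa)
        have hFsub : covs (addE (swp P M' N') a (N a)) ⊆ S := by
          rw [hFc]
          rintro x (rfl | rfl | hx)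
          · exact haS
          · exact hN.2.1 (show N (N a) ≠ N a from by rw [hN.1.1]; exact Ne.symm hNa)
          · exact (hswfS hx).1
        have hFn : (covs (addE (swp P M' N') a (N a))).ncard = (covs fS).ncard := by
          rw [hFc, Set.ncard_insert_of_notMem (by
              simp only [Set.mem_insert_iff, not_or]
              exact ⟨Ne.symm hNa, by simp [covs, hswfa]⟩) (Set.toFinite _),
            Set.ncard_insert_of_notMem (by simp [covs, hswfx]) (Set.toFinite _),
            hswfcard, hN'n]
          omega
        refine ⟨(htS').1, addE (swp P M' N') a (N a), maxIM_of_ncard hfS hF hFsub hFn, ?_⟩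
        unfold addE
        rw [if_neg hva, if_neg (by
            intro hc
            rw [hc] at htcov
            exact htcov hN'x), swp_pos htP]
        exact hgt
      · -- v ≠ t : swap M' along the path, miss u₀, then add the edge a - u₀
        have hvP : v ∉ P := by
          intro hc
          have hgv : M' v ≠ v := hPg v hc (fun hc2 => hvt hc2)
          exact hgv hM'v
        have hg'S : covs (swp P N' M') ⊆ S \ {a} := by
          rw [hcovswg]
          rintro x ⟨h1, -⟩
          rcases h1 with rfl | h1
          · exact htS'
          · exact hM'.2.1 h1
        have hg'card : (covs (swp P N' M')).ncard = (covs M').ncard := by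
          rw [hcovswg]
          exact ncard_insert_diff (by simp [covs, hgt]) hu₀cov (Ne.symm htu)
        have hg'u : swp P N' M' u₀ = u₀ := by
          rw [swp_pos huP]
          exact hN'u
        have hg'a : swp P N' M' a = a := by
          rw [swp_neg (fun hc => ((Set.union_subset hN'max.2.1 hM'.2.1) (hPsub hc)).2 rfl)]
          exact hM'a
        have hg'v : swp P N' M' v = v := by
          rw [swp_neg hvP]
          exact hM'v
        have hF := addE_isIM hswg hg'a hg'u hau₀ hadj₀
        have hFc := addE_covs hswg hg'a hg'u hau₀
        have hFsub : covs (addE (swp P N' M') a u₀) ⊆ S := by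
          rw [hFc]
          rintro x (rfl | rfl | hx)
          · exact haS
          · exact hu₀D.1
          · exact (hg'S hx).1
        have hFn : (covs (addE (swp P N' M') a u₀)).ncard = (covs fS).ncard := by
          rw [hFc, Set.ncard_insert_of_notMem (by
              simp only [Set.mem_insert_iff, not_or]
              exact ⟨hau₀, by simp [covs, hg'a]⟩) (Set.toFinite _),
            Set.ncard_insert_of_notMem (by simp [covs, hg'u]) (Set.toFinite _),
            hg'card, hM'n]
          omega
        refine ⟨hvS, addE (swp P N' M') a u₀, maxIM_of_ncard hfS hF hFsub hFn, ?_⟩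
        unfold addE
        rw [if_neg hva, if_neg hvu]
        exact hg'v
  · -- easy direction
    rintro ⟨hvS, f, hf, hfv⟩
    have hva : v ≠ a := fun hc => haD (hc ▸ ⟨hvS, f, hf, hfv⟩)
    have hfa : f a ≠ a := maxIM_covers_not_Dse haS haD hf
    obtain ⟨hrmax2, -⟩ := stability_nu ⟨haS, haD, u₀, hu₀D, hadj₀⟩ hf
    exact ⟨⟨hvS, hva⟩, rel1 f a, hrmax2, rel1_fixed hfv⟩

lemma stability_Ase (ha : a ∈ Ase H S) : Ase H (S \ {a}) = Ase H S \ {a} := by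
  have hD := stability_Dse ha
  ext v
  simp only [Ase, Set.mem_setOf_eq, Set.mem_diff, Set.mem_singleton_iff, hD]
  constructor
  · rintro ⟨⟨hvS, hva⟩, hvd, u, hu, hadj⟩
    exact ⟨⟨hvS, hvd, u, hu, hadj⟩, hva⟩
  · rintro ⟨⟨hvS, hvd, u, hu, hadj⟩, hva⟩
    exact ⟨⟨hvS, hva⟩, hvd, u, hu, hadj⟩

end Stability

section Iter

lemma iterA : ∀ n (S : Set V), (Ase H S).ncard = n →
    Dse H (S \ Ase H S) = Dse H S ∧ Ase H (S \ Ase H S) = ∅ ∧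
    ∀ f, MaxIM H S f → ∀ f', MaxIM H (S \ Ase H S) f' →
      (covs f').ncard + 2 * (Ase H S).ncard = (covs f).ncard := by
  intro n
  induction n using Nat.strong_induction_on with
  | _ n ih =>
    intro S hn
    rcases Set.eq_empty_or_nonempty (Ase H S) with hA | ⟨a, ha⟩
    · have hsd : S \ Ase H S = S := by rw [hA, Set.diff_empty]
      refine ⟨by rw [hsd], by rw [hsd, hA], ?_⟩
      intro f hf f' hf'
      rw [hsd] at hf'
      rw [hA, Set.ncard_empty, mul_zero, add_zero]
      exact maxIM_ncard_eq hf' hf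
    · have hDeq := stability_Dse ha
      have hAeq := stability_Ase ha
      have hAn : (Ase H (S \ {a})).ncard = n - 1 := by
        rw [hAeq, Set.ncard_diff_singleton_of_mem ha, hn]
      have hn1 : 1 ≤ n := by
        rw [← hn]
        exact (Set.ncard_pos (Set.toFinite _)).mpr ⟨a, ha⟩
      have hset : (S \ {a}) \ Ase H (S \ {a}) = S \ Ase H S := by
        rw [hAeq]
        ext x
        simp only [Set.mem_diff, Set.mem_singleton_iff]
        constructor
        · rintro ⟨⟨hxS, hxa⟩, hx2⟩
          refine ⟨hxS, fun hxA => hx2 ⟨hxA, hxa⟩⟩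
        · rintro ⟨hxS, hxA⟩
          exact ⟨⟨hxS, fun hc => hxA (hc ▸ ha)⟩, fun hc => hxA hc.1⟩
      obtain ⟨ih1, ih2, ih3⟩ := ih (n-1) (by omega) (S \ {a}) hAn
      rw [hset] at ih1 ih2 ih3
      refine ⟨by rw [ih1, hDeq], ih2, ?_⟩
      intro f hf f' hf'
      obtain ⟨hrmax, -⟩ := stability_nu ha hf
      have hc1 := ih3 (rel1 f a) hrmax f' hf'
      have hfa : f a ≠ a := maxIM_covers_not_Dse ha.1 ha.2.1 hf
      have hrn : (covs (rel1 f a)).ncard + 2 = (covs f).ncard := by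
        have hsub2 : {a, f a} ⊆ covs f := by
          rintro x (rfl | rfl)
          · exact hfa
          · show f (f a) ≠ f a; rw [hf.1.1]; exact Ne.symm hfa
        have hge2 : 2 ≤ (covs f).ncard := by
          calc 2 = ({a, f a} : Set V).ncard := (Set.ncard_pair (Ne.symm hfa)).symm
            _ ≤ (covs f).ncard := Set.ncard_le_ncard hsub2 (Set.toFinite _)
        rw [rel1_covs hf.1 hfa, Set.ncard_diff hsub2 (Set.toFinite _),
          Set.ncard_pair (Ne.symm hfa)]
        omega
      rw [hAn] at hc1
      rw [hn]
      omega

/-- trimming the edges at `A` from a maximum matching -/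
noncomputable def trf (f : V → V) (A : Set V) : V → V :=
  fun x => if x ∈ A ∨ f x ∈ A then x else f x

lemma trf_isIM {f : V → V} (hf : IsIM H f) (A : Set V) : IsIM H (trf f A) := by
  constructor
  · intro v
    unfold trf
    by_cases h : v ∈ A ∨ f v ∈ A
    · rw [if_pos h, if_pos h]
    · rw [if_neg h]
      have h2 : ¬ (f v ∈ A ∨ f (f v) ∈ A) := by
        rw [hf.1]
        rintro (hc | hc)
        · exact h (Or.inr hc)
        · exact h (Or.inl hc)
      rw [if_neg h2, hf.1]
  · intro v hv
    unfold trf at hv ⊢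
    by_cases h : v ∈ A ∨ f v ∈ A
    · rw [if_pos h] at hv; exact absurd rfl hv
    · rw [if_neg h] at hv ⊢; exact hf.2 v hv

lemma trf_covs {f : V → V} (A : Set V) :
    covs (trf f A) = {x | x ∈ covs f ∧ x ∉ A ∧ f x ∉ A} := by
  ext x
  simp only [covs, Set.mem_setOf_eq, trf]
  by_cases h : x ∈ A ∨ f x ∈ A
  · rw [if_pos h]
    constructor
    · intro hc; exact absurd rfl hc
    · rintro ⟨h1, h2, h3⟩
      rcases h with h | h
      · exact absurd h h2
      · exact absurd h h3
  · rw [if_neg h]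
    push_neg at h
    simp [h.1, h.2]

theorem trim {S : Set V} {f : V → V} (hf : MaxIM H S f) :
    MaxIM H (S \ Ase H S) (trf f (Ase H S)) ∧
      ∀ x ∈ Ase H S, f x ≠ x ∧ f x ∉ Ase H S := by
  set A := Ase H S with hA
  have hAf : A ⊆ covs f := by
    intro x hx
    by_contra hc
    have hfx : f x = x := not_not.mp hc
    exact hx.2.1 ⟨hx.1, f, hf, hfx⟩
  have hinjf : Function.Injective f := by
    intro x y hxy
    rw [← hf.1.1 x, hxy, hf.1.1]
  have himg : {x | x ∈ covs f ∧ (x ∈ A ∨ f x ∈ A)} = A ∪ f '' A := by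
    ext x
    simp only [Set.mem_setOf_eq, Set.mem_union, Set.mem_image]
    constructor
    · rintro ⟨hx, h | h⟩
      · exact Or.inl h
      · exact Or.inr ⟨f x, h, hf.1.1 x⟩
    · rintro (h | ⟨y, hy, rfl⟩)
      · exact ⟨hAf h, Or.inl h⟩
      · refine ⟨?_, Or.inr (by rw [hf.1.1]; exact hy)⟩
        show f (f y) ≠ f y
        rw [hf.1.1]
        exact Ne.symm (hAf hy)
  have hXsub : A ∪ f '' A ⊆ covs f := by
    rw [← himg]; exact fun x hx => hx.1
  have hcovtr : covs (trf f A) = covs f \ (A ∪ f '' A) := by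
    rw [trf_covs, ← himg]
    ext x
    simp only [Set.mem_setOf_eq, Set.mem_diff]
    constructor
    · rintro ⟨h1, h2, h3⟩
      exact ⟨h1, fun hc => by
        rcases hc.2 with h | h
        · exact h2 h
        · exact h3 h⟩
    · rintro ⟨h1, h2⟩
      refine ⟨h1, fun hc => h2 ⟨h1, Or.inl hc⟩, fun hc => h2 ⟨h1, Or.inr hc⟩⟩
  have hXle : (A ∪ f '' A).ncard ≤ 2 * A.ncard := by
    calc (A ∪ f '' A).ncard ≤ A.ncard + (f '' A).ncard :=
          Set.ncard_union_le _ _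
      _ = 2 * A.ncard := by rw [Set.ncard_image_of_injective _ hinjf]; ring
  have htrn : (covs (trf f A)).ncard = (covs f).ncard - (A ∪ f '' A).ncard := by
    rw [hcovtr, Set.ncard_diff hXsub (Set.toFinite _)]
  have htrsub : covs (trf f A) ⊆ S \ A := by
    rw [hcovtr]
    rintro x ⟨h1, h2⟩
    exact ⟨hf.2.1 h1, fun hc => h2 (Or.inl hc)⟩
  obtain ⟨f', hf'⟩ := exists_maxIM H (S \ A)
  obtain ⟨-, -, hcount⟩ := iterA (H := H) (Ase H S).ncard S rfl
  have hcnt := hcount f hf f' hf'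
  rw [← hA] at hcnt
  have hXge : (covs f).ncard ≤ (covs (trf f A)).ncard + (A ∪ f '' A).ncard := by
    rw [htrn]
    have := Set.ncard_le_ncard hXsub (Set.toFinite _)
    omega
  have hle1 : (covs (trf f A)).ncard ≤ (covs f').ncard :=
    hf'.2.2 _ (trf_isIM hf.1 A) htrsub
  have heq : (covs (trf f A)).ncard = (covs f').ncard ∧ (A ∪ f '' A).ncard = 2 * A.ncard := by
    constructor <;> omega
  have htrmax : MaxIM H (S \ A) (trf f A) :=
    maxIM_of_ncard hf' (trf_isIM hf.1 A) htrsub heq.1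
  refine ⟨htrmax, ?_⟩
  have hdisjAf : A ∩ f '' A = ∅ := by
    have hui := Set.ncard_union_add_ncard_inter A (f '' A) (Set.toFinite _) (Set.toFinite _)
    rw [heq.2, Set.ncard_image_of_injective _ hinjf] at hui
    have : (A ∩ f '' A).ncard = 0 := by omega
    rwa [Set.ncard_eq_zero (Set.toFinite _)] at this
  intro x hx
  refine ⟨hAf hx, fun hc => ?_⟩
  have : f x ∈ A ∩ f '' A := ⟨hc, x, hx, rfl⟩
  rw [hdisjAf] at this
  exact this

end Iter

section Bridge

variable {M : H.Subgraph}

/-- the involution associated to a matching subgraph -/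
noncomputable def mfun (M : H.Subgraph) (hM : M.IsMatching) : V → V :=
  fun v => if h : v ∈ M.verts then (hM h).choose else v

lemma mfun_adj (hM : M.IsMatching) {v : V} (hv : v ∈ M.verts) : M.Adj v (mfun M hM v) := by
  unfold mfun
  rw [dif_pos hv]
  exact (hM hv).choose_spec.1

lemma mfun_eq_of_adj (hM : M.IsMatching) {v w : V} (h : M.Adj v w) : mfun M hM v = w := by
  have hv : v ∈ M.verts := M.edge_vert h
  unfold mfun
  rw [dif_pos hv]
  exact ((hM hv).choose_spec.2 w h).symm

lemma mfun_not_mem (hM : M.IsMatching) {v : V} (hv : v ∉ M.verts) : mfun M hM v = v := by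
  unfold mfun
  rw [dif_neg hv]

lemma mfun_covs (hM : M.IsMatching) : covs (mfun M hM) = M.verts := by
  ext v
  constructor
  · intro hv
    by_contra hc
    exact hv (mfun_not_mem hM hc)
  · intro hv
    show mfun M hM v ≠ v
    intro hc
    exact (M.adj_sub (hc ▸ mfun_adj hM hv)).ne' rfl
  
lemma mfun_isIM (hM : M.IsMatching) : IsIM H (mfun M hM) := by
  constructor
  · intro v
    by_cases hv : v ∈ M.verts
    · have h1 := mfun_adj hM hv
      exact mfun_eq_of_adj hM h1.symm
    · rw [mfun_not_mem hM hv, mfun_not_mem hM hv]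
  · intro v hv
    have hvm : v ∈ M.verts := by
      by_contra hc
      exact hv (mfun_not_mem hM hc)
    exact M.adj_sub (mfun_adj hM hvm)

/-- the matching subgraph associated to an involution -/
noncomputable def msub (H : SimpleGraph V) (f : V → V) (hf : IsIM H f) : H.Subgraph where
  verts := covs f
  Adj := fun v w => f v = w ∧ v ≠ w
  adj_sub := by
    rintro v w ⟨h1, h2⟩
    have : f v ≠ v := by rw [h1]; exact Ne.symm h2
    have := hf.2 v this
    rwa [h1] at this
  edge_vert := by
    rintro v w ⟨h1, h2⟩
    show f v ≠ v
    rw [h1]; exact fun hc => h2 hc.symm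
  symm := by
    constructor
    rintro v w ⟨h1, h2⟩
    exact ⟨by rw [← h1, hf.1], Ne.symm h2⟩

lemma msub_isMatching {f : V → V} (hf : IsIM H f) : (msub H f hf).IsMatching := by
  intro v hv
  refine ⟨f v, ⟨rfl, Ne.symm hv⟩, ?_⟩
  rintro y ⟨h1, h2⟩
  exact h1.symm

lemma msub_verts {f : V → V} (hf : IsIM H f) : (msub H f hf).verts = covs f := rfl

/-- vertex count is twice the edge count for a matching -/
lemma matching_card2 (hM : M.IsMatching) : M.verts.ncard = 2 * M.edgeSet.ncard := by
  classical
  have hedge : M.edgeSet = (fun v => s(v, mfun M hM v)) '' M.verts := by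
    ext e
    induction e with
    | _ x y =>
      simp only [SimpleGraph.Subgraph.mem_edgeSet, Set.mem_image]
      constructor
      · intro h
        exact ⟨x, M.edge_vert h, by rw [mfun_eq_of_adj hM h]⟩
      · rintro ⟨v, hv, he⟩
        rw [Sym2.eq_iff] at he
        rcases he with ⟨rfl, h2⟩ | ⟨h1, h2⟩
        · rw [← h2]; exact mfun_adj hM hv
        · rw [← h1, ← h2]
          exact (mfun_adj hM hv).symm
  have hvfin : M.verts.Finite := Set.toFinite _
  have hefin : M.edgeSet.Finite := Set.toFinite _
  rw [Set.ncard_eq_toFinset_card _ hvfin, Set.ncard_eq_toFinset_card _ hefin]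
  have hmap : ∀ v ∈ hvfin.toFinset, (fun v => s(v, mfun M hM v)) v ∈ hefin.toFinset := by
    intro v hv
    rw [Set.Finite.mem_toFinset] at hv ⊢
    exact mfun_adj hM hv
  rw [Finset.card_eq_sum_card_fiberwise hmap]
  have hfib : ∀ e ∈ hefin.toFinset,
      (hvfin.toFinset.filter (fun v => s(v, mfun M hM v) = e)).card = 2 := by
    intro e he
    rw [Set.Finite.mem_toFinset, hedge] at he
    obtain ⟨x, hx, rfl⟩ := he
    have hfx : mfun M hM x ≠ x := by
      rw [← mfun_covs hM] at hx
      exact hx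
    have hfxv : mfun M hM x ∈ M.verts := M.edge_vert (mfun_adj hM hx).symm
    have hffx : mfun M hM (mfun M hM x) = x := (mfun_isIM hM).1 x
    have hset : hvfin.toFinset.filter (fun v => s(v, mfun M hM v) = s(x, mfun M hM x))
        = {x, mfun M hM x} := by
      ext w
      simp only [Finset.mem_filter, Set.Finite.mem_toFinset, Finset.mem_insert,
        Finset.mem_singleton]
      constructor
      · rintro ⟨hw, hw2⟩
        rw [Sym2.eq_iff] at hw2
        rcases hw2 with ⟨h1, h2⟩ | ⟨h1, h2⟩
        · exact Or.inl h1
        · exact Or.inr h1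
      · rintro (rfl | rfl)
        · exact ⟨hx, rfl⟩
        · refine ⟨hfxv, ?_⟩
          rw [hffx, Sym2.eq_swap]
    rw [hset, Finset.card_insert_of_notMem (by
      rw [Finset.mem_singleton]; exact fun hc => hfx hc.symm), Finset.card_singleton]
  rw [Finset.sum_congr rfl hfib, Finset.sum_const, smul_eq_mul, mul_comm]

/-- bridging maximality -/
lemma isMax_to_maxIM (hM : IsMaxMatching H M) : MaxIM H Set.univ (mfun M hM.1) := by
  refine ⟨mfun_isIM hM.1, Set.subset_univ _, ?_⟩
  intro g hg _
  rw [mfun_covs hM.1]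
  have h1 := hM.2 (msub H g hg) (msub_isMatching hg)
  have h2 := matching_card2 hM.1
  have h3 := matching_card2 (M := msub H g hg) (msub_isMatching hg)
  rw [msub_verts hg] at h3
  omega

lemma maxIM_to_isMax {f : V → V} (hf : MaxIM H Set.univ f) :
    IsMaxMatching H (msub H f hf.1) := by
  refine ⟨msub_isMatching hf.1, ?_⟩
  intro M' hM'
  have h1 := hf.2.2 (mfun M' hM') (mfun_isIM hM') (Set.subset_univ _)
  rw [mfun_covs hM'] at h1
  have h2 := matching_card2 hM'
  have h3 := matching_card2 (M := msub H f hf.1) (msub_isMatching hf.1)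
  rw [msub_verts hf.1] at h3
  omega

lemma GED_eq_Dse : GED H = Dse H (Set.univ : Set V) := by
  ext v
  constructor
  · rintro ⟨M, hM, hv⟩
    refine ⟨trivial, mfun M hM.1, isMax_to_maxIM hM, mfun_not_mem hM.1 hv⟩
  · rintro ⟨-, f, hf, hfv⟩
    refine ⟨msub H f hf.1, maxIM_to_isMax hf, ?_⟩
    rw [msub_verts hf.1]
    exact fun hc => hc hfv

lemma GEA_eq_Ase : GEA H = Ase H (Set.univ : Set V) := by
  ext v
  simp only [GEA, Set.mem_setOf_eq, Ase, GED_eq_Dse]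
  constructor
  · rintro ⟨h1, u, h2, h3⟩
    exact ⟨trivial, h1, u, h2, h3⟩
  · rintro ⟨-, h1, u, h2, h3⟩
    exact ⟨h1, u, h2, h3⟩

end Bridge

section Final

lemma Dse_Ase_disjoint {S : Set V} : ∀ v, v ∈ Dse H S → v ∉ Ase H S :=
  fun v hv ha => ha.2.1 hv

/-- walk in the induced graph gives a restricted reflexive-transitive chain -/
lemma rtg_of_walk {D : Set V} (K : (H.induce D).ConnectedComponent) :
    ∀ {u' w' : ↥D}, (H.induce D).Walk u' w' → u' ∈ K.supp →
      Relation.ReflTransGen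
        (fun x y => x ∈ Subtype.val '' K.supp ∧ y ∈ Subtype.val '' K.supp ∧ H.Adj x y)
        u'.1 w'.1 := by
  intro u' w' p
  induction p with
  | nil => intro _; exact Relation.ReflTransGen.refl
  | @cons a b c h q ih =>
    intro ha
    have hreach : (H.induce D).connectedComponentMk b = K := by
      rw [SimpleGraph.ConnectedComponent.mem_supp_iff] at ha
      rw [← ha]
      exact (SimpleGraph.ConnectedComponent.sound h.reachable).symm
    have hb : b ∈ K.supp := SimpleGraph.ConnectedComponent.mem_supp_iff _ _ |>.mpr hreach
    refine Relation.ReflTransGen.head ⟨⟨a, ha, rfl⟩, ⟨b, hb, rfl⟩, ?_⟩ (ih hb)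
    exact h

lemma trf_ne_imp {f : V → V} {A : Set V} {x : V} (h : trf f A x ≠ x) :
    trf f A x = f x ∧ x ∉ A ∧ f x ∉ A := by
  by_cases hc : x ∈ A ∨ f x ∈ A
  · exfalso
    apply h
    unfold trf
    rw [if_pos hc]
  · push_neg at hc
    have he : trf f A x = f x := by
      unfold trf
      rw [if_neg (by push_neg; exact hc)]
    exact ⟨he, hc.1, hc.2⟩

end Final


end GE9

theorem stmt9 {V : Type*} [Fintype V] (H : SimpleGraph V)
    (M : H.Subgraph) (hM : IsMaxMatching H M) :
    (∀ v ∈ GEC H, ∃ w ∈ GEC H, M.Adj v w) ∧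
    (∀ K : (H.induce (GED H)).ConnectedComponent,
      ∃! v : ↥(GED H), v ∈ K.supp ∧
        ¬ ∃ w : ↥(GED H), w ∈ K.supp ∧ M.Adj v.1 w.1) := by
  classical
  have hfmax : GE9.MaxIM H Set.univ (GE9.mfun M hM.1) := GE9.isMax_to_maxIM hM
  obtain ⟨htr, hAcov⟩ := GE9.trim hfmax
  have hGED : GED H = GE9.Dse H (Set.univ : Set V) := GE9.GED_eq_Dse
  have hGEA : GEA H = GE9.Ase H (Set.univ : Set V) := GE9.GEA_eq_Ase
  obtain ⟨hDW, hAW, -⟩ :=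
    GE9.iterA (H := H) (GE9.Ase H (Set.univ : Set V)).ncard (Set.univ : Set V) rfl
  have hDnotA : ∀ v, v ∈ GE9.Dse H (Set.univ : Set V) → v ∉ GE9.Ase H (Set.univ : Set V) :=
    fun v hv ha => ha.2.1 hv
  constructor
  · -- Part 1 : vertices of C are matched inside C
    intro v hv
    have hvW : v ∈ Set.univ \ GE9.Ase H (Set.univ : Set V) :=
      ⟨trivial, by rw [← hGEA]; exact hv.2⟩
    have hvD' : v ∉ GE9.Dse H (Set.univ \ GE9.Ase H (Set.univ : Set V)) := by
      rw [hDW, ← hGED]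
      exact hv.1
    have hfv' := GE9.covered_of_not_mem_Dse htr hvW hvD'
    obtain ⟨heq, hvA, hfvA⟩ := GE9.trf_ne_imp hfv'
    have hfv : GE9.mfun M hM.1 v ≠ v := by rw [← heq]; exact hfv'
    have hvverts : v ∈ M.verts := by rw [← GE9.mfun_covs hM.1]; exact hfv
    have hMadj : M.Adj v (GE9.mfun M hM.1 v) := GE9.mfun_adj hM.1 hvverts
    refine ⟨GE9.mfun M hM.1 v, ⟨?_, ?_⟩, hMadj⟩
    · intro hcD
      exact hv.2 ⟨hv.1, GE9.mfun M hM.1 v, hcD, M.adj_sub hMadj⟩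
    · intro hcA
      exact hfvA (hGEA ▸ hcA)
  · -- Part 2 : near perfect matchings on the components of D
    intro K
    have hKsub : Subtype.val '' K.supp ⊆ GED H := by
      rintro x ⟨x', -, rfl⟩
      exact x'.2
    have hmemK : ∀ (x : ↥(GED H)), x.1 ∈ Subtype.val '' K.supp ↔ x ∈ K.supp := by
      intro x
      constructor
      · rintro ⟨y, hy, hxy⟩
        rwa [← Subtype.ext hxy]
      · intro h
        exact ⟨x, h, rfl⟩
    have hclose : ∀ x ∈ Subtype.val '' K.supp, ∀ y, y ∈ GED H → H.Adj x y →
        y ∈ Subtype.val '' K.supp := by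
      rintro x ⟨x', hx', rfl⟩ y hy hadj
      have hadj' : (H.induce (GED H)).Adj x' ⟨y, hy⟩ := hadj
      have hmk : (H.induce (GED H)).connectedComponentMk ⟨y, hy⟩ = K := by
        rw [SimpleGraph.ConnectedComponent.mem_supp_iff] at hx'
        rw [← hx']
        exact (SimpleGraph.ConnectedComponent.sound hadj'.reachable).symm
      exact ⟨⟨y, hy⟩, (SimpleGraph.ConnectedComponent.mem_supp_iff _ _).mpr hmk, rfl⟩
    have hconn : ∀ u ∈ Subtype.val '' K.supp, ∀ w ∈ Subtype.val '' K.supp,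
        Relation.ReflTransGen
          (fun x y => x ∈ Subtype.val '' K.supp ∧ y ∈ Subtype.val '' K.supp ∧ H.Adj x y)
          u w := by
      rintro u ⟨u', hu', rfl⟩ w ⟨w', hw', rfl⟩
      rw [SimpleGraph.ConnectedComponent.mem_supp_iff] at hw'
      have hmk : (H.induce (GED H)).connectedComponentMk u'
          = (H.induce (GED H)).connectedComponentMk w' := by
        rw [hw']
        exact (SimpleGraph.ConnectedComponent.mem_supp_iff _ _).mp hu'
      obtain ⟨p⟩ := SimpleGraph.ConnectedComponent.exact hmk
      exact GE9.rtg_of_walk K p hu'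
    have hne : (Subtype.val '' K.supp).Nonempty := by
      obtain ⟨x0, hx0⟩ := K.exists_rep
      exact ⟨x0.1, x0, (SimpleGraph.ConnectedComponent.mem_supp_iff _ _).mpr hx0, rfl⟩
    have hKW : Subtype.val '' K.supp ⊆ Set.univ \ GE9.Ase H (Set.univ : Set V) := by
      intro x hx
      exact ⟨trivial, hDnotA x (by rw [← hGED]; exact hKsub hx)⟩
    have hsep : ∀ x ∈ Subtype.val '' K.supp,
        ∀ y ∈ (Set.univ \ GE9.Ase H (Set.univ : Set V)) \ Subtype.val '' K.supp,
        ¬ H.Adj x y := by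
      intro x hx y hy hadj
      by_cases hyD : y ∈ GED H
      · exact hy.2 (hclose x hx y hyD hadj)
      · exact hy.1.2 (hGEA ▸ (⟨hyD, x, hKsub hx, hadj.symm⟩ : y ∈ GEA H))
    have hdisj : Disjoint (Subtype.val '' K.supp)
        ((Set.univ \ GE9.Ase H (Set.univ : Set V)) \ Subtype.val '' K.supp) :=
      disjoint_sdiff_self_right
    have hunion : Subtype.val '' K.supp ∪
        ((Set.univ \ GE9.Ase H (Set.univ : Set V)) \ Subtype.val '' K.supp)
        = Set.univ \ GE9.Ase H (Set.univ : Set V) :=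
      Set.union_diff_cancel hKW
    have hDK : ∀ x ∈ Subtype.val '' K.supp, x ∈ GE9.Dse H (Subtype.val '' K.supp) := by
      intro x hx
      have hxW : x ∈ GE9.Dse H (Set.univ \ GE9.Ase H (Set.univ : Set V)) := by
        rw [hDW, ← hGED]
        exact hKsub hx
      exact (GE9.split_Dse hsep hdisj hx).mpr (by rwa [hunion])
    have htrK : GE9.MaxIM H
        (Subtype.val '' K.supp ∪
          ((Set.univ \ GE9.Ase H (Set.univ : Set V)) \ Subtype.val '' K.supp))
        (GE9.trf (GE9.mfun M hM.1) (GE9.Ase H (Set.univ : Set V))) := by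
      rwa [hunion]
    have hrmax := GE9.split_maxIM hsep hdisj htrK
    have hgal := GE9.gallai hDK hne hconn hrmax
    -- translate the fixed point condition
    have hk8 : ∀ x ∈ Subtype.val '' K.supp,
        (GE9.rstr (GE9.trf (GE9.mfun M hM.1) (GE9.Ase H (Set.univ : Set V)))
          (Subtype.val '' K.supp) x = x ↔
        GE9.trf (GE9.mfun M hM.1) (GE9.Ase H (Set.univ : Set V)) x = x) := by
      intro x hx
      constructor
      · intro h
        by_cases hc : x ∈ Subtype.val '' K.supp ∧
            GE9.trf (GE9.mfun M hM.1) (GE9.Ase H (Set.univ : Set V)) x ∈ Subtype.val '' K.supp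
        · unfold GE9.rstr at h
          rw [if_pos hc] at h
          exact h
        · by_contra hne'
          obtain ⟨heq, hxA, hfxA⟩ := GE9.trf_ne_imp hne'
          have hfx : GE9.mfun M hM.1 x ≠ x := by rw [← heq]; exact hne'
          have hadj : H.Adj x (GE9.mfun M hM.1 x) := hfmax.1.2 x hfx
          have hfxD : GE9.mfun M hM.1 x ∈ GED H := by
            by_contra hcD
            exact hfxA (hGEA ▸ (⟨hcD, x, hKsub hx, hadj.symm⟩ : GE9.mfun M hM.1 x ∈ GEA H))
          exact hc ⟨hx, by rw [heq]; exact hclose x hx _ hfxD hadj⟩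
      · intro h
        unfold GE9.rstr
        by_cases hc : x ∈ Subtype.val '' K.supp ∧
            GE9.trf (GE9.mfun M hM.1) (GE9.Ase H (Set.univ : Set V)) x ∈ Subtype.val '' K.supp
        · rw [if_pos hc]; exact h
        · rw [if_neg hc]
    -- translate the unmatched-within-K condition
    have hiff : ∀ v : ↥(GED H), v ∈ K.supp →
        ((¬ ∃ w : ↥(GED H), w ∈ K.supp ∧ M.Adj v.1 w.1) ↔
          GE9.trf (GE9.mfun M hM.1) (GE9.Ase H (Set.univ : Set V)) v.1 = v.1) := by
      intro v hvK
      constructor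
      · intro hno
        by_contra hne'
        obtain ⟨heq, hxA, hfxA⟩ := GE9.trf_ne_imp hne'
        have hfx : GE9.mfun M hM.1 v.1 ≠ v.1 := by rw [← heq]; exact hne'
        have hadj : H.Adj v.1 (GE9.mfun M hM.1 v.1) := hfmax.1.2 _ hfx
        have hfxD : GE9.mfun M hM.1 v.1 ∈ GED H := by
          by_contra hcD
          exact hfxA (hGEA ▸ (⟨hcD, v.1, v.2, hadj.symm⟩ : GE9.mfun M hM.1 v.1 ∈ GEA H))
        have hfxK := hclose v.1 ((hmemK v).mpr hvK) _ hfxD hadj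
        obtain ⟨w', hw', hww⟩ := hfxK
        apply hno
        refine ⟨w', hw', ?_⟩
        have hvverts : v.1 ∈ M.verts := by rw [← GE9.mfun_covs hM.1]; exact hfx
        have := GE9.mfun_adj hM.1 hvverts
        rwa [← hww] at this
      · rintro hfix ⟨w, hwK, hMadj⟩
        have hfvw : GE9.mfun M hM.1 v.1 = w.1 := GE9.mfun_eq_of_adj hM.1 hMadj
        by_cases hc : v.1 ∈ GE9.Ase H (Set.univ : Set V) ∨
            GE9.mfun M hM.1 v.1 ∈ GE9.Ase H (Set.univ : Set V)
        · rcases hc with hc | hc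
          · exact hDnotA v.1 (by rw [← hGED]; exact v.2) hc
          · exact hDnotA (GE9.mfun M hM.1 v.1) (by rw [← hGED, hfvw]; exact w.2) hc
        · unfold GE9.trf at hfix
          rw [if_neg hc] at hfix
          rw [hfvw] at hfix
          exact (M.adj_sub hMadj).ne' hfix
    obtain ⟨z, ⟨hzK, hzfix⟩, hzuniq⟩ := hgal
    have hzD : z ∈ GED H := hKsub hzK
    refine ⟨⟨z, hzD⟩, ⟨(hmemK ⟨z, hzD⟩).mp hzK, ?_⟩, ?_⟩
    · exact (hiff ⟨z, hzD⟩ ((hmemK ⟨z, hzD⟩).mp hzK)).mpr ((hk8 z hzK).mp hzfix)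
    · rintro v ⟨hvK, hvprop⟩
      have hvfix := (hiff v hvK).mp hvprop
      have hvKval : v.1 ∈ Subtype.val '' K.supp := (hmemK v).mpr hvK
      have := hzuniq v.1 ⟨hvKval, (hk8 v.1 hvKval).mpr hvfix⟩
      exact Subtype.ext this
end

section
/- Let H be a finite undirected graph in which every maximum matching misses at least two vertices. Then the subgraph induced by D(H), the set of vertices missed by some maximum matching, has at least two connected components. -/
open Finset

section GEAux
open SimpleGraph

variable {V : Type*} [Fintype V] {H : SimpleGraph V}

lemma exists_maxMatching (H : SimpleGraph V) : ∃ M, IsMaxMatching H M := by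
  classical
  set S := {n | ∃ M : H.Subgraph, M.IsMatching ∧ M.edgeSet.ncard = n} with hS
  have hne : S.Nonempty := ⟨(⊥ : H.Subgraph).edgeSet.ncard, ⊥, fun v hv => by simp at hv, rfl⟩
  have hbdd : BddAbove S := by
    refine ⟨(Set.univ : Set (Sym2 V)).ncard, fun n hn => ?_⟩
    obtain ⟨M, _, rfl⟩ := hn
    exact Set.ncard_le_ncard (Set.subset_univ _) Set.finite_univ
  obtain ⟨M, hM, hMn⟩ := Nat.sSup_mem hne hbdd
  exact ⟨M, hM, fun M' hM' => hMn ▸ le_csSup hbdd ⟨M', hM', rfl⟩⟩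

lemma augment {M : H.Subgraph} (hM : M.IsMatching) {x y : V}
    (hx : x ∉ M.verts) (hy : y ∉ M.verts) (hxy : H.Adj x y) :
    ∃ M' : H.Subgraph, M'.IsMatching ∧ M'.edgeSet.ncard = M.edgeSet.ncard + 1 := by
  refine ⟨M ⊔ H.subgraphOfAdj hxy, hM.sup (Subgraph.IsMatching.subgraphOfAdj hxy) ?_, ?_⟩
  · rw [support_subgraphOfAdj]
    rw [Set.disjoint_right]
    rintro a (rfl | rfl) ha <;>
      exact (by assumption : _ ∉ M.verts) (M.support_subset_verts ha)
  · have hnm : s(x, y) ∉ M.edgeSet := fun he => hx (M.edge_vert he)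
    rw [Subgraph.edgeSet_sup, edgeSet_subgraphOfAdj,
      Set.union_singleton, Set.ncard_insert_of_notMem hnm (Set.toFinite _)]

lemma no_augment {M : H.Subgraph} (hM : IsMaxMatching H M) {x y : V}
    (hx : x ∉ M.verts) (hy : y ∉ M.verts) (hxy : H.Adj x y) : False := by
  obtain ⟨M', hM', hcard⟩ := augment hM.1 hx hy hxy
  have := hM.2 M' hM'
  omega

omit [Fintype V] in
lemma partner_unique {M : H.Subgraph} (hM : M.IsMatching) {a b c : V}
    (h1 : M.Adj a b) (h2 : M.Adj a c) : b = c := by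
  obtain ⟨w, _, hw⟩ := hM (M.edge_vert h1)
  rw [hw b h1, hw c h2]

omit [Fintype V] in
lemma deleteVerts_pair_matching {N : H.Subgraph} (hN : N.IsMatching) {y z : V}
    (hyz : N.Adj y z) : (N.deleteVerts {y, z}).IsMatching := by
  rintro v hv
  rw [Subgraph.deleteVerts_verts] at hv
  obtain ⟨hv1, hv2⟩ := hv
  obtain ⟨w, hw1, hw2⟩ := hN hv1
  have hvy : v ≠ y := fun h => hv2 (by simp [h])
  have hvz : v ≠ z := fun h => hv2 (by simp [h])
  have hwy : w ≠ y := by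
    intro h
    exact hvz (partner_unique hN (h ▸ hw1.symm) hyz)
  have hwz : w ≠ z := by
    intro h
    exact hvy (partner_unique hN (h ▸ hw1.symm) hyz.symm)
  have hwyz : w ∉ ({y, z} : Set V) := by simp [hwy, hwz]
  refine ⟨w, ?_, fun c hc => hw2 c ?_⟩
  · simp only [Subgraph.deleteVerts_adj]
    exact ⟨hv1, hv2, N.edge_vert hw1.symm, hwyz, hw1⟩
  · exact (Subgraph.deleteVerts_adj.mp hc).2.2.2.2

omit [Fintype V] in
lemma deleteVerts_pair_edgeSet {N : H.Subgraph} (hN : N.IsMatching) {y z : V}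
    (hyz : N.Adj y z) :
    (N.deleteVerts {y, z}).edgeSet = N.edgeSet \ {s(y, z)} := by
  ext e
  induction e with
  | _ a b =>
    simp only [Subgraph.mem_edgeSet, Subgraph.deleteVerts_adj, Set.mem_diff,
      Set.mem_singleton_iff]
    constructor
    · rintro ⟨_, ha, _, hb, hadj⟩
      refine ⟨hadj, fun he => ?_⟩
      rw [Sym2.eq_iff] at he
      rcases he with ⟨rfl, rfl⟩ | ⟨rfl, rfl⟩
      · exact ha (by simp)
      · exact hb (by simp)
    · rintro ⟨hadj, hne⟩
      have ha : a ∉ ({y, z} : Set V) := by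
        intro hmem
        simp only [Set.mem_insert_iff, Set.mem_singleton_iff] at hmem
        rcases hmem with h | h
        · have hb := partner_unique hN (h ▸ hadj) hyz
          exact hne (by rw [h, hb])
        · have hb := partner_unique hN (h ▸ hadj) hyz.symm
          exact hne (by rw [h, hb, Sym2.eq_swap])
      have hb : b ∉ ({y, z} : Set V) := by
        intro hmem
        simp only [Set.mem_insert_iff, Set.mem_singleton_iff] at hmem
        rcases hmem with h | h
        · have ha' := partner_unique hN (h ▸ hadj.symm) hyz
          exact hne (by rw [h, ha', Sym2.eq_swap])
        · have ha' := partner_unique hN (h ▸ hadj.symm) hyz.symm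
          exact hne (by rw [h, ha'])
      exact ⟨N.edge_vert hadj, ha, N.edge_vert hadj.symm, hb, hadj⟩

lemma matching_verts_ncard (M : H.Subgraph) (hM : M.IsMatching) :
    M.verts.ncard = 2 * M.edgeSet.ncard := by
  classical
  have hinj : Function.Injective (Sym2.map ((↑) : M.verts → V)) :=
    Sym2.map.injective Subtype.val_injective
  have h1 : M.edgeSet.ncard = M.coe.edgeSet.ncard := by
    rw [← M.image_coe_edgeSet_coe, Set.ncard_image_of_injective _ hinj]
  have h2 : M.verts.ncard = Fintype.card M.verts := by
    rw [Set.ncard_eq_toFinset_card', Set.toFinset_card]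
  have h3 := M.coe.sum_degrees_eq_twice_card_edges
  have h4 : Fintype.card M.verts = 2 * M.coe.edgeFinset.card := by
    rw [← h3, Fintype.card, Finset.card_eq_sum_ones]
    symm
    refine Finset.sum_congr rfl fun v _ => ?_
    rw [M.coe_degree, Subgraph.degree_eq_one_iff_existsUnique_adj]
    exact hM v.2
  rw [h1, h2, h4, Set.ncard_eq_toFinset_card', Set.toFinset_card, SimpleGraph.edgeFinset_card]

lemma swap_matching {N : H.Subgraph} (hN : N.IsMatching) {x y z : V} (hx : x ∉ N.verts)
    (hyz : N.Adj y z) (hxy : H.Adj x y) :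
    ∃ N' : H.Subgraph, N'.IsMatching ∧
      N'.edgeSet = insert s(x, y) (N.edgeSet \ {s(y, z)}) ∧
      N'.verts = (N.verts \ {y, z}) ∪ {x, y} := by
  refine ⟨N.deleteVerts {y, z} ⊔ H.subgraphOfAdj hxy, ?_, ?_, ?_⟩
  · refine (deleteVerts_pair_matching hN hyz).sup (Subgraph.IsMatching.subgraphOfAdj hxy) ?_
    rw [support_subgraphOfAdj, Set.disjoint_right]
    intro a hamem ha
    have ha' := (N.deleteVerts {y, z}).support_subset_verts ha
    rw [Subgraph.deleteVerts_verts] at ha'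
    simp only [Set.mem_insert_iff, Set.mem_singleton_iff] at hamem
    rcases hamem with rfl | rfl
    · exact hx ha'.1
    · exact ha'.2 (by simp)
  · rw [Subgraph.edgeSet_sup, deleteVerts_pair_edgeSet hN hyz, edgeSet_subgraphOfAdj,
      Set.union_singleton]
  · rw [Subgraph.verts_sup, Subgraph.deleteVerts_verts, subgraphOfAdj_verts]

lemma key_lemma : ∀ d : ℕ, ∀ M : H.Subgraph, IsMaxMatching H M → ∀ u v : V,
    ∀ hu : u ∈ GED H, ∀ hv : v ∈ GED H, u ∉ M.verts → v ∉ M.verts →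
    u ≠ v → (H.induce (GED H)).Reachable ⟨u, hu⟩ ⟨v, hv⟩ →
    (H.induce (GED H)).dist ⟨u, hu⟩ ⟨v, hv⟩ = d → False := by
  classical
  intro d
  induction d using Nat.strong_induction_on with
  | _ d IH =>
  intro M hM u v hu hv huM hvM huv hr hd
  set G' := H.induce (GED H) with hG'
  set u' : ↥(GED H) := ⟨u, hu⟩
  set v' : ↥(GED H) := ⟨v, hv⟩
  have hdpos : 0 < d := by
    rcases Nat.eq_zero_or_pos d with h0 | h0
    · exact absurd (Subtype.ext_iff.mp ((hr.dist_eq_zero_iff).mp (hd.trans h0))) huv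
    · exact h0
  obtain ⟨p, hp⟩ := hr.exists_walk_length_eq_dist
  rw [hd] at hp
  have hnp : ¬ p.Nil := by
    rw [SimpleGraph.Walk.nil_iff_length_eq, hp]
    omega
  set w : ↥(GED H) := p.getVert 1 with hw
  have hadj' : G'.Adj u' w := p.adj_snd hnp
  have hH : H.Adj u w.1 := hadj'
  have hut : u ≠ w.1 := fun e => hadj'.ne (Subtype.ext e)
  have hq : G'.dist w v' + 1 ≤ d := by
    have h1 := SimpleGraph.dist_le p.tail
    have h2 := SimpleGraph.Walk.length_tail_add_one hnp
    have h1' : G'.dist w v' ≤ p.tail.length := h1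
    omega
  -- short case : d = 1
  rcases Nat.lt_or_ge d 2 with hd1 | hd2
  · have hdq : d = 1 := by omega
    have : G'.dist w v' = 0 := by omega
    have hwv : w = v' := by
      by_contra hne
      have h1 := SimpleGraph.dist_le (p.tail)
      have h2 := SimpleGraph.Walk.length_tail_add_one hnp
      have h3 : p.tail.length = 0 := by omega
      have h4 : p.getVert 1 = v' := SimpleGraph.Walk.eq_of_length_eq_zero h3
      exact hne (by rw [hw]; exact h4)
    have hwv1 : w.1 = v := congrArg Subtype.val hwv
    exact no_augment hM huM hvM (by rw [hwv1] at hH; exact hH)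
  -- main case : d ≥ 2
  have hdu : G'.dist u' w ≤ 1 := by
    have := SimpleGraph.dist_le (SimpleGraph.Walk.cons hadj' SimpleGraph.Walk.nil)
    simpa using this
  have htv : w.1 ≠ v := by
    intro e
    have hwv : w = v' := Subtype.ext e
    have h5 := SimpleGraph.dist_le
      ((SimpleGraph.Walk.cons hadj' SimpleGraph.Walk.nil).copy rfl hwv)
    simp only [SimpleGraph.Walk.length_copy, SimpleGraph.Walk.length_cons,
      SimpleGraph.Walk.length_nil] at h5
    omega
  obtain ⟨N0, hN0, hN0t⟩ := w.2
  set T := {n | ∃ N : H.Subgraph, IsMaxMatching H N ∧ w.1 ∉ N.verts ∧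
    (M.edgeSet ∩ N.edgeSet).ncard = n} with hT
  have hTne : T.Nonempty := ⟨_, N0, hN0, hN0t, rfl⟩
  have hTbdd : BddAbove T := by
    refine ⟨M.edgeSet.ncard, fun n hn => ?_⟩
    obtain ⟨N, _, _, rfl⟩ := hn
    exact Set.ncard_le_ncard Set.inter_subset_left (Set.toFinite _)
  obtain ⟨N, hNmax, hNt, hNcard⟩ := Nat.sSup_mem hTne hTbdd
  have hNu : u ∈ N.verts := by
    by_contra huN
    exact IH (G'.dist u' w) (by omega) N hNmax u w.1 hu w.2 huN hNt hut
      ⟨SimpleGraph.Walk.cons hadj' SimpleGraph.Walk.nil⟩ rfl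
  have hNv : v ∈ N.verts := by
    by_contra hvN
    exact IH (G'.dist w v') (by omega) N hNmax w.1 v w.2 hv hNt hvN htv ⟨p.tail⟩ rfl
  -- counting exposed vertices
  have hedge : N.edgeSet.ncard = M.edgeSet.ncard :=
    le_antisymm (hM.2 N hNmax.1) (hNmax.2 M hM.1)
  have hverts : M.verts.ncard = N.verts.ncard := by
    rw [matching_verts_ncard M hM.1, matching_verts_ncard N hNmax.1, hedge]
  have hcM := Set.ncard_add_ncard_compl M.verts
  have hcN := Set.ncard_add_ncard_compl N.verts
  have hd1 := Set.ncard_inter_add_ncard_diff_eq_ncard M.vertsᶜ N.vertsᶜ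
  have hd2 := Set.ncard_inter_add_ncard_diff_eq_ncard N.vertsᶜ M.vertsᶜ
  rw [Set.inter_comm] at hd2
  have hpair : ({u, v} : Set V) ⊆ M.vertsᶜ \ N.vertsᶜ := by
    rintro a (rfl | rfl)
    · exact ⟨huM, fun hc => hc hNu⟩
    · exact ⟨hvM, fun hc => hc hNv⟩
  have hpair2 : 2 ≤ (M.vertsᶜ \ N.vertsᶜ).ncard := by
    rw [← Set.ncard_pair huv]
    exact Set.ncard_le_ncard hpair (Set.toFinite _)
  have hBA : 1 < (N.vertsᶜ \ M.vertsᶜ).ncard := by omega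
  obtain ⟨x, hxmem, hxt⟩ := Set.exists_ne_of_one_lt_ncard hBA w.1
  have hxN : x ∉ N.verts := hxmem.1
  have hxM : x ∈ M.verts := by
    have := hxmem.2
    rw [Set.mem_compl_iff, not_not] at this
    exact this
  obtain ⟨y, hxy, -⟩ := hM.1 hxM
  have hxyH : H.Adj x y := M.adj_sub hxy
  have hyN : y ∈ N.verts := by
    by_contra hyN
    exact no_augment hNmax hxN hyN hxyH
  obtain ⟨z, hyz, -⟩ := hNmax.1 hyN
  obtain ⟨N', hN'm, hN'edge, hN'verts⟩ := swap_matching hNmax.1 hxN hyz hxyH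
  have hxyNe : s(x, y) ∉ N.edgeSet := fun he => hxN (N.edge_vert he)
  have hyzNe : s(y, z) ∈ N.edgeSet := hyz
  have hzN : z ∈ N.verts := N.edge_vert hyz.symm
  have hyzM : s(y, z) ∉ M.edgeSet := by
    intro he
    have hxz : x = z := partner_unique hM.1 hxy.symm he
    exact hxN (hxz ▸ hzN)
  have hN'card : N'.edgeSet.ncard = N.edgeSet.ncard := by
    have h0 : 0 < N.edgeSet.ncard := (Set.ncard_pos (Set.toFinite _)).mpr ⟨_, hyzNe⟩
    have hnm : s(x, y) ∉ N.edgeSet \ {s(y, z)} := fun hc => hxyNe hc.1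
    rw [hN'edge, Set.ncard_insert_of_notMem hnm (Set.toFinite _),
      Set.ncard_diff_singleton_of_mem hyzNe]
    omega
  have hN'max : IsMaxMatching H N' := by
    refine ⟨hN'm, fun P hP => ?_⟩
    have := hM.2 P hP
    omega
  have hN't : w.1 ∉ N'.verts := by
    rw [hN'verts]
    rintro (⟨h1, -⟩ | h2)
    · exact hNt h1
    · rcases h2 with h2 | h2
      · exact hxt h2.symm
      · rw [Set.mem_singleton_iff] at h2
        exact hNt (h2 ▸ hyN)
  have hinter : M.edgeSet ∩ N'.edgeSet = insert s(x, y) (M.edgeSet ∩ N.edgeSet) := by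
    rw [hN'edge]
    ext e
    simp only [Set.mem_inter_iff, Set.mem_insert_iff, Set.mem_diff, Set.mem_singleton_iff]
    constructor
    · rintro ⟨heM, (rfl | ⟨heN, -⟩)⟩
      · exact Or.inl rfl
      · exact Or.inr ⟨heM, heN⟩
    · rintro (rfl | ⟨heM, heN⟩)
      · exact ⟨hxy, Or.inl rfl⟩
      · exact ⟨heM, Or.inr ⟨heN, fun hc => hyzM (hc ▸ heM)⟩⟩
  have hfinal : (M.edgeSet ∩ N'.edgeSet).ncard = (M.edgeSet ∩ N.edgeSet).ncard + 1 := by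
    have hnm : s(x, y) ∉ M.edgeSet ∩ N.edgeSet := fun hc => hxyNe hc.2
    rw [hinter, Set.ncard_insert_of_notMem hnm (Set.toFinite _)]
  have hle : (M.edgeSet ∩ N'.edgeSet).ncard ≤ sSup T :=
    le_csSup hTbdd ⟨N', hN'max, hN't, rfl⟩
  omega

end GEAux

theorem stmt11 {V : Type*} [Fintype V] (H : SimpleGraph V)
    (h : ∀ M : H.Subgraph, IsMaxMatching H M → 2 ≤ (M.vertsᶜ).ncard) :
    2 ≤ Nat.card ((H.induce (GED H)).ConnectedComponent) := by
  classical
  by_contra hcon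
  obtain ⟨M, hM⟩ := exists_maxMatching H
  have h2 := h M hM
  obtain ⟨u, v, hu', hv', huv⟩ :=
    (Set.one_lt_ncard_iff (s := M.vertsᶜ) (Set.toFinite _)).mp (by omega)
  have huM : u ∉ M.verts := hu'
  have hvM : v ∉ M.verts := hv'
  have hu : u ∈ GED H := ⟨M, hM, huM⟩
  have hv : v ∈ GED H := ⟨M, hM, hvM⟩
  have hfin : Finite ((H.induce (GED H)).ConnectedComponent) := Quot.finite _
  have hsub : Subsingleton ((H.induce (GED H)).ConnectedComponent) := by
    rw [← not_nontrivial_iff_subsingleton]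
    intro hnt
    exact hcon (Finite.one_lt_card_iff_nontrivial.mpr hnt)
  have hreach : (H.induce (GED H)).Reachable ⟨u, hu⟩ ⟨v, hv⟩ := by
    have heq : (H.induce (GED H)).connectedComponentMk ⟨u, hu⟩ =
        (H.induce (GED H)).connectedComponentMk ⟨v, hv⟩ := Subsingleton.elim _ _
    exact SimpleGraph.ConnectedComponent.exact heq
  exact key_lemma ((H.induce (GED H)).dist ⟨u, hu⟩ ⟨v, hv⟩) M hM u v hu hv huM hvM huv hreach rfl
end

section
/- Let G be a digraph with an extreme colouring P, let U be the union of classes of size 1 or 2 and W = V(G)∖U, and let H be the undirected graph on U with edges uv whenever {u,v} is acyclic in G. Let D ⊆ U be the set of vertices of H missed by some maximum matching of H. Then for every u ∈ D there exists an optimal colouring of G in which {u} is a singleton colour class, obtained as P restricted to W together with the colouring of G[U] corresponding to a maximum matching of H missing u. -/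
open Finset

/-! ### Auxiliary machinery -/

section Machinery
open Function
variable {W V : Type*} [DecidableEq V] {H : SimpleGraph W}

/-- Sym2 to pair Finset. -/
def sym2ToFinset {W : Type*} [DecidableEq W] : Sym2 W → Finset W :=
  Sym2.lift ⟨fun a b => ({a, b} : Finset W), fun a b => by ext x; simp [or_comm]⟩

@[simp] lemma sym2ToFinset_mk {W : Type*} [DecidableEq W] (a b : W) :
    sym2ToFinset s(a, b) = {a, b} := rfl

lemma my_matching_card [Fintype W] [DecidableEq W] (N : H.Subgraph)
    (ι : W → V) (hι : Injective ι) (T2 : Finset (Finset V))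
    (hT2 : ∀ S, S ∈ T2 ↔ ∃ a b, N.Adj a b ∧ S = {ι a, ι b}) :
    N.edgeSet.ncard = T2.card := by
  classical
  have hfin : N.edgeSet.Finite := Set.toFinite _
  rw [Set.ncard_eq_toFinset_card N.edgeSet hfin]
  apply Finset.card_bij (fun e _ => (sym2ToFinset e).image ι)
  · intro e he
    rw [Set.Finite.mem_toFinset] at he
    induction e with
    | _ a b =>
      rw [hT2]
      exact ⟨a, b, he, by simp⟩
  · intro e₁ h₁ e₂ h₂ heq
    rw [Set.Finite.mem_toFinset] at h₁ h₂
    induction e₁ with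
    | _ a b =>
      induction e₂ with
      | _ c d =>
        simp only [sym2ToFinset_mk, Finset.image_insert, Finset.image_singleton] at heq
        have hab : a ≠ b := (N.adj_sub h₁).ne
        have h1 : ι a ∈ ({ι c, ι d} : Finset V) := heq ▸ (by simp)
        have h2 : ι b ∈ ({ι c, ι d} : Finset V) := heq ▸ (by simp)
        simp only [Finset.mem_insert, Finset.mem_singleton] at h1 h2
        rcases h1 with h1 | h1 <;> rcases h2 with h2 | h2
        · exact absurd (hι (h1.trans h2.symm)) hab
        · rw [hι h1, hι h2]
        · rw [hι h1, hι h2, Sym2.eq_swap]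
        · exact absurd (hι (h1.trans h2.symm)) hab
  · intro S hS
    obtain ⟨a, b, hab, rfl⟩ := (hT2 S).1 hS
    exact ⟨s(a, b), Set.Finite.mem_toFinset _ |>.2 hab, by simp⟩

lemma pair_diacyclic {E : V → V → Prop} (hirr : Irreflexive E)
    (a b : V) (h : ¬ (E a b ∧ E b a)) : DiAcyclic E ({a, b} : Finset V) := by
  intro v hv hcyc
  set S : Finset V := {a, b} with hS
  have key : ∀ x y, Relation.TransGen (fun p q => p ∈ S ∧ q ∈ S ∧ E p q) x y →
      (E a b ∧ x = a ∧ y = b) ∨ (E b a ∧ x = b ∧ y = a) := by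
    intro x y hxy
    induction hxy with
    | single hr =>
      obtain ⟨hx, hy, hE⟩ := hr
      simp only [hS, Finset.mem_insert, Finset.mem_singleton] at hx hy
      rcases hx with rfl | rfl <;> rcases hy with rfl | rfl
      · exact absurd hE (hirr _)
      · left; exact ⟨hE, rfl, rfl⟩
      · right; exact ⟨hE, rfl, rfl⟩
      · exact absurd hE (hirr _)
    | tail hxy hr ih =>
      obtain ⟨hy, hz, hE⟩ := hr
      simp only [hS, Finset.mem_insert, Finset.mem_singleton] at hz
      rcases ih with ⟨hab, rfl, rfl⟩ | ⟨hba, rfl, rfl⟩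
      · rcases hz with rfl | rfl
        · exact absurd ⟨hab, hE⟩ h
        · exact absurd hE (hirr _)
      · rcases hz with rfl | rfl
        · exact absurd hE (hirr _)
        · exact absurd ⟨hE, hba⟩ h
  rcases key v v hcyc with ⟨hab, rfl, hba⟩ | ⟨hba, rfl, hab⟩
  · subst hba; exact hirr _ hab
  · subst hab; exact hirr _ hba

lemma my_count (U : Finset V) (T : Finset (Finset V))
    (hd : (T : Set (Finset V)).PairwiseDisjoint id) (hc : T.sup id = U)
    (hcard : ∀ S ∈ T, S.card = 1 ∨ S.card = 2) :
    U.card = T.card + (T.filter fun S => S.card = 2).card := by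
  classical
  have hb : U = T.biUnion id := by rw [← hc, Finset.sup_eq_biUnion]
  rw [hb, Finset.card_biUnion (fun S hS S' hS' hne => hd hS hS' hne)]
  simp only [id_eq]
  rw [← Finset.sum_filter_add_sum_filter_not T (fun S => S.card = 2) (fun S => S.card)]
  have h2 : ∑ S ∈ T.filter (fun S => S.card = 2), S.card
      = 2 * (T.filter fun S => S.card = 2).card := by
    rw [Finset.sum_congr rfl (fun S hS => (Finset.mem_filter.1 hS).2), Finset.sum_const,
      smul_eq_mul, mul_comm]
  have h1 : ∑ S ∈ T.filter (fun S => ¬ S.card = 2), S.card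
      = (T.filter fun S => ¬ S.card = 2).card := by
    rw [Finset.sum_congr rfl (fun S hS => ?_), Finset.sum_const, smul_eq_mul, mul_one]
    have := Finset.mem_filter.1 hS
    rcases hcard S this.1 with h | h
    · exact h
    · exact absurd h this.2
  rw [h1, h2]
  have := Finset.card_filter_add_card_filter_not (s := T) (p := fun S => S.card = 2)
  omega

open Classical in
/-- Partner of a vertex in a matching. -/
noncomputable def partnerAux (M : H.Subgraph) (hM : M.IsMatching) (v : W) : W :=
  if h : v ∈ M.verts then (hM h).choose else v

variable {M : H.Subgraph} {hM : M.IsMatching}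

lemma partner_adj {v : W} (h : v ∈ M.verts) : M.Adj v (partnerAux M hM v) := by
  simp only [partnerAux, dif_pos h]
  exact (hM h).choose_spec.1

lemma partner_eq {v b : W} (h : M.Adj v b) : partnerAux M hM v = b := by
  have hv : v ∈ M.verts := M.edge_vert h
  simp only [partnerAux, dif_pos hv]
  exact ((hM hv).choose_spec.2 b h).symm

lemma partner_ne {v : W} (h : v ∈ M.verts) : partnerAux M hM v ≠ v :=
  (M.adj_sub (partner_adj h)).ne'

lemma partner_mem {v : W} (h : v ∈ M.verts) : partnerAux M hM v ∈ M.verts :=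
  M.edge_vert (M.adj_symm (partner_adj h))

lemma partner_invol {v : W} (h : v ∈ M.verts) : partnerAux M hM (partnerAux M hM v) = v :=
  partner_eq (M.adj_symm (partner_adj h))

open Classical in
/-- The colour class of a vertex determined by a matching. -/
noncomputable def fAux (M : H.Subgraph) (hM : M.IsMatching) (ι : W → V) (v : W) : Finset V :=
  if v ∈ M.verts then {ι v, ι (partnerAux M hM v)} else {ι v}

variable {ι : W → V}

lemma fAux_matched {v : W} (h : v ∈ M.verts) :
    fAux M hM ι v = {ι v, ι (partnerAux M hM v)} := by
  simp only [fAux, if_pos h]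

lemma fAux_unmatched {v : W} (h : v ∉ M.verts) : fAux M hM ι v = {ι v} := by
  simp only [fAux, if_neg h]

lemma fAux_mem_self (v : W) : ι v ∈ fAux M hM ι v := by
  by_cases h : v ∈ M.verts
  · rw [fAux_matched h]; simp
  · rw [fAux_unmatched h]; simp

lemma fAux_card_matched (hι : Injective ι) {v : W} (h : v ∈ M.verts) :
    (fAux M hM ι v).card = 2 := by
  rw [fAux_matched h, Finset.card_insert_of_notMem, Finset.card_singleton]
  simp only [Finset.mem_singleton]
  exact fun he => partner_ne h (hι he.symm)

lemma fAux_card (hι : Injective ι) (v : W) :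
    (fAux M hM ι v).card = 1 ∨ (fAux M hM ι v).card = 2 := by
  by_cases h : v ∈ M.verts
  · exact Or.inr (fAux_card_matched hι h)
  · rw [fAux_unmatched h]; exact Or.inl (Finset.card_singleton _)

lemma fAux_eq (hι : Injective ι) {v w : W} (hw : ι w ∈ fAux M hM ι v) :
    fAux M hM ι w = fAux M hM ι v := by
  by_cases h : v ∈ M.verts
  · rw [fAux_matched h] at hw ⊢
    simp only [Finset.mem_insert, Finset.mem_singleton] at hw
    rcases hw with hw | hw
    · rw [hι hw, fAux_matched h]
    · have hw' : w = partnerAux M hM v := hι hw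
      subst hw'
      rw [fAux_matched (partner_mem h), partner_invol h, Finset.pair_comm]
  · rw [fAux_unmatched h] at hw ⊢
    simp only [Finset.mem_singleton] at hw
    rw [hι hw, fAux_unmatched h]
end Machinery

set_option maxHeartbeats 2000000 in
theorem stmt12 {V : Type*} [Fintype V] [DecidableEq V] (E : V → V → Prop)
    (hirr : Irreflexive E) (P : Finpartition (Finset.univ : Finset V))
    (hP : Extreme E P) (U : Finset V)
    (hU : ∀ v : V, v ∈ U ↔ ∃ S ∈ P.parts, v ∈ S ∧ S.card ≤ 2)
    (u : ↥U)
    (hu : ∃ M : (auxGraph E U).Subgraph, IsMaxMatching (auxGraph E U) M ∧ u ∉ M.verts) :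
    ∃ M : (auxGraph E U).Subgraph, IsMaxMatching (auxGraph E U) M ∧ u ∉ M.verts ∧
      ∃ Q : Finpartition (Finset.univ : Finset V),
        IsDiColoring E Q ∧ Q.parts.card = dichi V E ∧ {u.1} ∈ Q.parts ∧
        (∀ S : Finset V, 3 ≤ S.card → (S ∈ Q.parts ↔ S ∈ P.parts)) ∧
        (∀ a b : ↥U, a ≠ b → ({a.1, b.1} ∈ Q.parts ↔ M.Adj a b)) ∧
        (∀ v : ↥U, {v.1} ∈ Q.parts ↔ v ∉ M.verts) := by
  classical
  obtain ⟨M, hMmax, huM⟩ := hu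
  have hM : M.IsMatching := hMmax.1
  have hι : Function.Injective (Subtype.val : ↥U → V) := Subtype.coe_injective
  set f : ↥U → Finset V := fAux M hM Subtype.val with hf_def
  have hfm : ∀ {v : ↥U}, v ∈ M.verts → f v = {v.1, (partnerAux M hM v).1} :=
    fun h => fAux_matched h
  have hfu : ∀ {v : ↥U}, v ∉ M.verts → f v = {v.1} := fun h => fAux_unmatched h
  have hfself : ∀ v : ↥U, v.1 ∈ f v := fun v => fAux_mem_self v
  have hfcard : ∀ v : ↥U, (f v).card = 1 ∨ (f v).card = 2 := fun v => fAux_card hι v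
  have hfcard2 : ∀ {v : ↥U}, v ∈ M.verts → (f v).card = 2 := fun h => fAux_card_matched hι h
  have hfeq : ∀ {v w : ↥U}, w.1 ∈ f v → f w = f v := fun h => fAux_eq hι h
  have hf_subU : ∀ (v : ↥U), f v ⊆ U := by
    intro v x hx
    by_cases h : v ∈ M.verts
    · rw [hfm h] at hx
      simp only [Finset.mem_insert, Finset.mem_singleton] at hx
      rcases hx with rfl | rfl
      · exact v.2
      · exact (partnerAux M hM v).2
    · rw [hfu h] at hx
      simp only [Finset.mem_singleton] at hx
      subst hx; exact v.2
  set bigP := P.parts.filter (fun S => 3 ≤ S.card) with hbigP_def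
  set smallP := P.parts.filter (fun S => ¬ 3 ≤ S.card) with hsmallP_def
  set smallQ := U.attach.image f with hsmallQ_def
  have hmem_smallQ : ∀ S, S ∈ smallQ ↔ ∃ v : ↥U, f v = S := by
    intro S; simp [hsmallQ_def]
  have hbigP_notU : ∀ S ∈ bigP, ∀ x ∈ S, x ∉ U := by
    intro S hS x hx hxU
    rw [hbigP_def, Finset.mem_filter] at hS
    obtain ⟨S', hS', hxS', hcard'⟩ := (hU x).1 hxU
    have heq := P.eq_of_mem_parts hS.1 hS' hx hxS'
    subst heq
    omega
  -- pairwise disjointness of the new parts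
  have hdisj : (↑(bigP ∪ smallQ) : Set (Finset V)).PairwiseDisjoint id := by
    intro S hS T hT hne
    simp only [Finset.coe_union, Set.mem_union, Finset.mem_coe] at hS hT
    simp only [Function.onFun, id_eq]
    rw [Finset.disjoint_left]
    intro x hxS hxT
    rcases hS with hS | hS <;> rcases hT with hT | hT
    · exact hne (P.eq_of_mem_parts (Finset.mem_filter.1 hS).1 (Finset.mem_filter.1 hT).1 hxS hxT)
    · obtain ⟨v, rfl⟩ := (hmem_smallQ T).1 hT
      exact hbigP_notU S hS x hxS (hf_subU v hxT)
    · obtain ⟨v, rfl⟩ := (hmem_smallQ S).1 hS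
      exact hbigP_notU T hT x hxT (hf_subU v hxS)
    · obtain ⟨v, rfl⟩ := (hmem_smallQ S).1 hS
      obtain ⟨w, rfl⟩ := (hmem_smallQ T).1 hT
      have hxU : x ∈ U := hf_subU v hxS
      have h1 : f ⟨x, hxU⟩ = f v := hfeq hxS
      have h2 : f ⟨x, hxU⟩ = f w := hfeq hxT
      exact hne (h1.symm.trans h2)
  have hcover : (bigP ∪ smallQ).sup id = Finset.univ := by
    rw [Finset.eq_univ_iff_forall]
    intro x
    rw [Finset.mem_sup]
    by_cases hx : x ∈ U
    · exact ⟨f ⟨x, hx⟩, Finset.mem_union_right _ ((hmem_smallQ _).2 ⟨⟨x, hx⟩, rfl⟩),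
        hfself ⟨x, hx⟩⟩
    · obtain ⟨S, hS, hxS⟩ := P.exists_mem (Finset.mem_univ x)
      have h3 : 3 ≤ S.card := by
        by_contra hlt
        exact hx ((hU x).2 ⟨S, hS, hxS, by omega⟩)
      exact ⟨S, Finset.mem_union_left _ (Finset.mem_filter.2 ⟨hS, h3⟩), hxS⟩
  have hnb : ⊥ ∉ bigP ∪ smallQ := by
    rw [Finset.mem_union]
    rintro (h | h)
    · exact P.bot_notMem (Finset.mem_filter.1 h).1
    · obtain ⟨v, hv⟩ := (hmem_smallQ _).1 h
      have hmem := hfself v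
      rw [hv] at hmem
      exact Finset.notMem_empty _ hmem
  set Q : Finpartition (Finset.univ : Finset V) :=
    ⟨bigP ∪ smallQ, Finset.supIndep_iff_pairwiseDisjoint.2 hdisj, hcover, hnb⟩ with hQ_def
  have hQparts : Q.parts = bigP ∪ smallQ := rfl
  -- Q is a colouring
  have hQcol : IsDiColoring E Q := by
    intro S hS
    rw [hQparts, Finset.mem_union] at hS
    rcases hS with hS | hS
    · exact hP.1 S (Finset.mem_filter.1 hS).1
    · obtain ⟨v, rfl⟩ := (hmem_smallQ S).1 hS
      by_cases h : v ∈ M.verts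
      · rw [hfm h]
        exact pair_diacyclic hirr _ _ (And.right (M.adj_sub (partner_adj (hM := hM) h)))
      · rw [hfu h]
        have hpair : ({v.1} : Finset V) = {v.1, v.1} := by simp
        rw [hpair]
        exact pair_diacyclic hirr _ _ (fun hc => hirr _ hc.1)
  -- membership characterizations
  have hQbig : ∀ S : Finset V, 3 ≤ S.card → (S ∈ Q.parts ↔ S ∈ P.parts) := by
    intro S h3
    rw [hQparts, Finset.mem_union]
    constructor
    · rintro (h | h)
      · exact (Finset.mem_filter.1 h).1
      · obtain ⟨v, rfl⟩ := (hmem_smallQ _).1 h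
        rcases hfcard v with h' | h' <;> omega
    · intro h
      exact Or.inl (Finset.mem_filter.2 ⟨h, h3⟩)
  have hQpair : ∀ a b : ↥U, a ≠ b → ({a.1, b.1} ∈ Q.parts ↔ M.Adj a b) := by
    intro a b hab
    have habV : a.1 ≠ b.1 := fun h => hab (Subtype.ext h)
    have hcard2 : ({a.1, b.1} : Finset V).card = 2 := Finset.card_pair habV
    rw [hQparts, Finset.mem_union]
    constructor
    · rintro (h | h)
      · have := (Finset.mem_filter.1 h).2
        omega
      · obtain ⟨v, hv⟩ := (hmem_smallQ _).1 h
        by_cases hvm : v ∈ M.verts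
        · rw [hfm hvm] at hv
          have h1 : v.1 ∈ ({a.1, b.1} : Finset V) := hv ▸ (by simp)
          have h2 : (partnerAux M hM v).1 ∈ ({a.1, b.1} : Finset V) := hv ▸ (by simp)
          simp only [Finset.mem_insert, Finset.mem_singleton] at h1 h2
          rcases h1 with h1 | h1 <;> rcases h2 with h2 | h2
          · exact absurd (Subtype.ext (h2.trans h1.symm)) (partner_ne hvm)
          · have hva : v = a := Subtype.ext h1
            have hpb : partnerAux M hM v = b := Subtype.ext h2
            rw [← hva, ← hpb]
            exact partner_adj hvm
          · have hvb : v = b := Subtype.ext h1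
            have hpa : partnerAux M hM v = a := Subtype.ext h2
            rw [← hvb, ← hpa]
            exact M.adj_symm (partner_adj hvm)
          · exact absurd (Subtype.ext (h2.trans h1.symm)) (partner_ne hvm)
        · rw [hfu hvm] at hv
          have := congrArg Finset.card hv
          simp only [Finset.card_singleton, hcard2] at this
          omega
    · intro hadj
      have ha : a ∈ M.verts := M.edge_vert hadj
      have hfa : f a = {a.1, b.1} := by rw [hfm ha, partner_eq hadj]
      exact Or.inr ((hmem_smallQ _).2 ⟨a, hfa⟩)
  have hQsingle : ∀ v : ↥U, ({v.1} ∈ Q.parts ↔ v ∉ M.verts) := by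
    intro v
    rw [hQparts, Finset.mem_union]
    constructor
    · rintro (h | h)
      · have := (Finset.mem_filter.1 h).2
        simp only [Finset.card_singleton] at this
        omega
      · obtain ⟨w, hw⟩ := (hmem_smallQ _).1 h
        by_cases hwm : w ∈ M.verts
        · have hc := hfcard2 hwm
          rw [hw] at hc
          simp at hc
        · rw [hfu hwm] at hw
          have hwv : w = v := Subtype.ext (by simpa using hw)
          exact hwv ▸ hwm
    · intro h
      exact Or.inr ((hmem_smallQ _).2 ⟨v, hfu h⟩)
  -- the matching from small parts of P
  set N : (auxGraph E U).Subgraph :=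
    { verts := {v : ↥U | ∃ w, v ≠ w ∧ ({v.1, w.1} : Finset V) ∈ P.parts}
      Adj := fun a b => a ≠ b ∧ ({a.1, b.1} : Finset V) ∈ P.parts
      adj_sub := by
        rintro a b ⟨hne, hmem⟩
        show a ≠ b ∧ ¬ (E a.1 b.1 ∧ E b.1 a.1)
        refine ⟨hne, fun hE => ?_⟩
        have hac := hP.1 _ hmem a.1 (by simp)
        exact hac (Relation.TransGen.head ⟨by simp, by simp, hE.1⟩
          (Relation.TransGen.single ⟨by simp, by simp, hE.2⟩))
      edge_vert := by rintro a b ⟨hne, hmem⟩; exact ⟨b, hne, hmem⟩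
      symm := ⟨by rintro a b ⟨hne, hmem⟩; exact ⟨hne.symm, by rwa [Finset.pair_comm]⟩⟩ } with hN_def
  have hN : N.IsMatching := by
    rintro v ⟨w, hne, hmem⟩
    refine ⟨w, ⟨hne, hmem⟩, ?_⟩
    rintro y ⟨hny, hmy⟩
    have heq : ({v.1, y.1} : Finset V) = {v.1, w.1} :=
      P.eq_of_mem_parts hmy hmem (Finset.mem_insert_self _ _) (Finset.mem_insert_self _ _)
    have hy : y.1 ∈ ({v.1, w.1} : Finset V) := heq ▸ (by simp)
    simp only [Finset.mem_insert, Finset.mem_singleton] at hy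
    rcases hy with hy | hy
    · exact absurd (Subtype.ext hy).symm hny
    · exact Subtype.ext hy
  -- counting
  have hMcount : M.edgeSet.ncard = (smallQ.filter (fun S => S.card = 2)).card := by
    apply my_matching_card M Subtype.val hι
    intro S
    rw [Finset.mem_filter]
    constructor
    · rintro ⟨hS, h2⟩
      obtain ⟨v, rfl⟩ := (hmem_smallQ _).1 hS
      by_cases h : v ∈ M.verts
      · exact ⟨v, partnerAux M hM v, partner_adj h, hfm h⟩
      · rw [hfu h] at h2
        simp at h2
    · rintro ⟨a, b, hadj, rfl⟩
      have ha : a ∈ M.verts := M.edge_vert hadj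
      have hfa : f a = {a.1, b.1} := by rw [hfm ha, partner_eq hadj]
      refine ⟨(hmem_smallQ _).2 ⟨a, hfa⟩, ?_⟩
      exact Finset.card_pair (fun h => (M.adj_sub hadj).ne (Subtype.ext h))
  have hNcount : N.edgeSet.ncard = (P.parts.filter (fun S => S.card = 2)).card := by
    apply my_matching_card N Subtype.val hι
    intro S
    rw [Finset.mem_filter]
    constructor
    · rintro ⟨hS, h2⟩
      obtain ⟨x, y, hxy, rfl⟩ := Finset.card_eq_two.1 h2
      have hxU : x ∈ U := (hU x).2 ⟨_, hS, by simp, le_of_eq h2⟩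
      have hyU : y ∈ U := (hU y).2 ⟨_, hS, by simp, le_of_eq h2⟩
      exact ⟨⟨x, hxU⟩, ⟨y, hyU⟩, ⟨fun h => hxy (congrArg Subtype.val h), hS⟩, rfl⟩
    · rintro ⟨a, b, hadj, rfl⟩
      obtain ⟨hne, hmem⟩ := hadj
      exact ⟨hmem, Finset.card_pair (fun h => hne (Subtype.ext h))⟩
  have hcount1 : U.card = smallQ.card + (smallQ.filter (fun S => S.card = 2)).card := by
    apply my_count
    · exact hdisj.subset (Finset.coe_subset.2 Finset.subset_union_right)
    · apply le_antisymm
      · exact Finset.sup_le (fun S hS => by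
          obtain ⟨v, rfl⟩ := (hmem_smallQ S).1 hS
          exact hf_subU v)
      · intro x hx
        rw [Finset.mem_sup]
        exact ⟨f ⟨x, hx⟩, (hmem_smallQ _).2 ⟨⟨x, hx⟩, rfl⟩, hfself ⟨x, hx⟩⟩
    · intro S hS
      obtain ⟨v, rfl⟩ := (hmem_smallQ S).1 hS
      exact hfcard v
  have hfilter_eq : smallP.filter (fun S => S.card = 2) = P.parts.filter (fun S => S.card = 2) := by
    ext S
    simp only [hsmallP_def, Finset.mem_filter]
    constructor
    · rintro ⟨⟨h1, _⟩, h2⟩; exact ⟨h1, h2⟩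
    · rintro ⟨h1, h2⟩; exact ⟨⟨h1, by omega⟩, h2⟩
  have hcount2 : U.card = smallP.card + (P.parts.filter (fun S => S.card = 2)).card := by
    rw [← hfilter_eq]
    apply my_count
    · exact P.disjoint.subset (Finset.coe_subset.2 (Finset.filter_subset _ _))
    · apply le_antisymm
      · apply Finset.sup_le
        intro S hS
        rw [hsmallP_def, Finset.mem_filter] at hS
        intro x hx
        exact (hU x).2 ⟨S, hS.1, hx, by omega⟩
      · intro x hx
        rw [Finset.mem_sup]
        obtain ⟨S, hS, hxS, hc⟩ := (hU x).1 hx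
        exact ⟨S, Finset.mem_filter.2 ⟨hS, by omega⟩, hxS⟩
    · intro S hS
      rw [hsmallP_def, Finset.mem_filter] at hS
      have hpos : 0 < S.card := Finset.card_pos.2 (P.nonempty_of_mem_parts hS.1)
      omega
  have hle : (P.parts.filter (fun S => S.card = 2)).card
      ≤ (smallQ.filter (fun S => S.card = 2)).card := by
    rw [← hNcount, ← hMcount]
    exact hMmax.2 N hN
  have hsplitP : bigP.card + smallP.card = P.parts.card :=
    Finset.card_filter_add_card_filter_not (s := P.parts) (fun S => 3 ≤ S.card)
  have hdisjQ : Disjoint bigP smallQ := by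
    rw [Finset.disjoint_left]
    intro S hS hS'
    obtain ⟨v, rfl⟩ := (hmem_smallQ _).1 hS'
    have := (Finset.mem_filter.1 hS).2
    rcases hfcard v with h | h <;> omega
  have hsplitQ : Q.parts.card = bigP.card + smallQ.card := by
    rw [hQparts, Finset.card_union_of_disjoint hdisjQ]
  have hQle : Q.parts.card ≤ P.parts.card := by omega
  have hdichi : dichi V E ≤ Q.parts.card := Nat.sInf_le ⟨Q, hQcol, rfl⟩
  have hQcard : Q.parts.card = dichi V E := le_antisymm (hQle.trans_eq hP.2.1) hdichi
  exact ⟨M, hMmax, huM, Q, hQcol, hQcard, (hQsingle u).2 huM, hQbig, hQpair, hQsingle⟩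
end
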